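/- arXiv:1804.04108 — 8 statements merged into one kernel-verified Lean document; each statement's English description precedes it below -/
import Mathlib

section
/- Let α > 0 and let a : ℝ → ℝ be differentiable with -α⁻¹ ≤ a'(x) ≤ -α for all x ∈ ℝ. Let σ ∈ ℝ and b : [0,∞) → ℝ be continuous. Suppose x, y : [0,∞) → ℝ are continuous and satisfy x(t) = x(0) + ∫₀ᵗ a(x(r)) dr + σ·(b(t) − b(0)) and y(t) = y(0) + ∫₀ᵗ a(y(r)) dr + σ·(b(t) − b(0)) for all t ≥ 0 (the same forcing path b). Then |x(t) − y(t)| ≤ |x(0) − y(0)|·e^{−αt} for all t ≥ 0. -/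
open MeasureTheory

lemma dissip_key {α : ℝ} {a : ℝ → ℝ} (ha : Differentiable ℝ a)
    (hderiv : ∀ z : ℝ, deriv a z ∈ Set.Icc (-α⁻¹) (-α)) (p q : ℝ) :
    (p - q) * (a p - a q) ≤ -α * (p - q) ^ 2 := by
  have key : ∀ u v : ℝ, u < v → (v - u) * (a v - a u) ≤ -α * (v - u) ^ 2 := by
    intro u v huv
    obtain ⟨c, _, hc⟩ := exists_deriv_eq_slope a huv (ha.continuous.continuousOn)
      (fun z _ => (ha z).differentiableWithinAt)
    have hne : v - u ≠ 0 := sub_ne_zero.mpr huv.ne'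
    have hv : a v - a u = deriv a c * (v - u) := by
      rw [hc]; field_simp
    rw [hv]
    have h1 : deriv a c ≤ -α := (hderiv c).2
    nlinarith [sq_nonneg (v - u)]
  rcases lt_trichotomy p q with hpq | hpq | hpq
  · have := key p q hpq
    nlinarith
  · simp [hpq]
  · have := key q p hpq
    nlinarith

theorem stmt1 (α : ℝ) (hα : 0 < α) (a : ℝ → ℝ) (ha : Differentiable ℝ a)
    (hderiv : ∀ z : ℝ, deriv a z ∈ Set.Icc (-α⁻¹) (-α))
    (σ : ℝ) (b : ℝ → ℝ) (hb : ContinuousOn b (Set.Ici 0))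
    (x y : ℝ → ℝ) (hx : ContinuousOn x (Set.Ici 0)) (hy : ContinuousOn y (Set.Ici 0))
    (hxeq : ∀ t, 0 ≤ t → x t = x 0 + (∫ r in (0:ℝ)..t, a (x r)) + σ * (b t - b 0))
    (hyeq : ∀ t, 0 ≤ t → y t = y 0 + (∫ r in (0:ℝ)..t, a (y r)) + σ * (b t - b 0)) :
    ∀ t, 0 ≤ t → |x t - y t| ≤ |x 0 - y 0| * Real.exp (-α * t) := by
  set h : ℝ → ℝ := fun r => a (x r) - a (y r) with hh
  set u : ℝ → ℝ := fun t => x t - y t with hu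
  have hcont_h : ContinuousOn h (Set.Ici 0) :=
    (ha.continuous.comp_continuousOn hx).sub (ha.continuous.comp_continuousOn hy)
  have hcont_u : ContinuousOn u (Set.Ici 0) := hx.sub hy
  have hsub : ∀ t : ℝ, 0 ≤ t → Set.uIcc (0:ℝ) t ⊆ Set.Ici 0 := by
    intro t ht
    rw [Set.uIcc_of_le ht]
    exact Set.Icc_subset_Ici_self
  have hint : ∀ t : ℝ, 0 ≤ t → IntervalIntegrable h volume 0 t := by
    intro t ht
    exact (hcont_h.mono (hsub t ht)).intervalIntegrable
  -- u t = u 0 + ∫ h on Ici 0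
  have hueq : ∀ t, 0 ≤ t → u t = u 0 + ∫ r in (0:ℝ)..t, h r := by
    intro t ht
    have hix : IntervalIntegrable (fun r => a (x r)) volume 0 t :=
      ((ha.continuous.comp_continuousOn hx).mono (hsub t ht)).intervalIntegrable
    have hiy : IntervalIntegrable (fun r => a (y r)) volume 0 t :=
      ((ha.continuous.comp_continuousOn hy).mono (hsub t ht)).intervalIntegrable
    have : (∫ r in (0:ℝ)..t, h r)
        = (∫ r in (0:ℝ)..t, a (x r)) - ∫ r in (0:ℝ)..t, a (y r) :=
      intervalIntegral.integral_sub hix hiy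
    simp only [hu, hh] at *
    rw [hxeq t ht, hyeq t ht, this]
    ring
  -- derivative of u at interior points
  have hderiv_u : ∀ t : ℝ, 0 < t → HasDerivAt u (h t) t := by
    intro t ht
    have hmem : Set.Ici (0:ℝ) ∈ nhds t := Ici_mem_nhds ht
    have hF : HasDerivAt (fun s => (∫ r in (0:ℝ)..s, h r)) (h t) t := by
      apply intervalIntegral.integral_hasDerivAt_right (hint t ht.le)
      · have := hcont_h.stronglyMeasurableAtFilter_nhdsWithin (μ := volume) measurableSet_Ici t
        rwa [nhdsWithin_eq_nhds.mpr hmem] at this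
      · exact (hcont_h t (le_of_lt ht)).continuousAt hmem
    have hF' : HasDerivAt (fun s => u 0 + ∫ r in (0:ℝ)..s, h r) (h t) t :=
      hF.const_add (u 0)
    apply hF'.congr_of_eventuallyEq
    filter_upwards [hmem] with s hs
    exact hueq s hs
  -- define g and show it is antitone
  set g : ℝ → ℝ := fun t => (u t) ^ 2 * Real.exp (2 * α * t) with hg
  have hg_cont : ContinuousOn g (Set.Ici 0) :=
    (hcont_u.pow 2).mul (Real.continuous_exp.comp (continuous_const.mul continuous_id)).continuousOn
  have hg_deriv : ∀ t ∈ interior (Set.Ici (0:ℝ)),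
      HasDerivAt g ((2 * u t * h t + 2 * α * (u t) ^ 2) * Real.exp (2 * α * t)) t := by
    intro t ht
    rw [interior_Ici] at ht
    have h1 : HasDerivAt (fun s => (u s) ^ 2) (2 * u t * h t) t := by
      have := ((hderiv_u t ht).fun_pow 2)
      simpa [mul_comm, mul_assoc, mul_left_comm] using this
    have h2 : HasDerivAt (fun s : ℝ => Real.exp (2 * α * s)) (Real.exp (2 * α * t) * (2 * α)) t := by
      have hlin : HasDerivAt (fun s : ℝ => 2 * α * s) (2 * α) t := by
        simpa using (hasDerivAt_id t).const_mul (2 * α)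
      exact hlin.exp
    have : HasDerivAt g _ t := h1.fun_mul h2
    convert this using 1
    ring
  have hanti : AntitoneOn g (Set.Ici 0) := by
    apply antitoneOn_of_deriv_nonpos (convex_Ici 0) hg_cont
    · intro t ht
      exact (hg_deriv t ht).differentiableAt.differentiableWithinAt
    · intro t ht
      rw [(hg_deriv t ht).deriv]
      have hkey : u t * h t ≤ -α * (u t) ^ 2 := dissip_key ha hderiv (x t) (y t)
      have hexp : (0:ℝ) < Real.exp (2 * α * t) := Real.exp_pos _
      nlinarith
  -- conclude
  intro t ht
  have hle : g t ≤ g 0 := hanti (Set.self_mem_Ici) ht ht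
  have hg0 : g 0 = (u 0) ^ 2 := by simp [hg]
  have h1 : (u t) ^ 2 * Real.exp (2 * α * t) ≤ (u 0) ^ 2 := hle.trans_eq hg0
  have hsq : (u t) ^ 2 ≤ (u 0) ^ 2 * Real.exp (-(2 * α * t)) := by
    calc (u t) ^ 2 = (u t) ^ 2 * Real.exp (2 * α * t) * Real.exp (-(2 * α * t)) := by
          rw [mul_assoc, ← Real.exp_add]; simp
      _ ≤ (u 0) ^ 2 * Real.exp (-(2 * α * t)) :=
          mul_le_mul_of_nonneg_right h1 (Real.exp_pos _).le
  have he : Real.exp (-(2 * α * t)) = (Real.exp (-α * t)) ^ 2 := by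
    rw [sq, ← Real.exp_add]; ring_nf
  have hrhs : |x 0 - y 0| * Real.exp (-α * t) = Real.sqrt ((u 0) ^ 2 * Real.exp (-(2 * α * t))) := by
    rw [he, Real.sqrt_mul (sq_nonneg _), Real.sqrt_sq_eq_abs, Real.sqrt_sq (Real.exp_pos _).le]
  calc |x t - y t| = Real.sqrt ((u t) ^ 2) := (Real.sqrt_sq_eq_abs _).symm
    _ ≤ Real.sqrt ((u 0) ^ 2 * Real.exp (-(2 * α * t))) := Real.sqrt_le_sqrt hsq
    _ = |x 0 - y 0| * Real.exp (-α * t) := hrhs.symm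
end

section
/- Let α > 0 and let a : ℝ → ℝ be differentiable with -α⁻¹ ≤ a'(x) ≤ -α for all x ∈ ℝ. Let σ ∈ ℝ, K > 0, and let b : ℝ → ℝ be continuous with |b(t)| ≤ K(1 + t²) for all t ∈ ℝ. Then there exists a continuous function x̄ : ℝ → ℝ such that x̄(t) − x̄(s) = ∫ₛᵗ a(x̄(r)) dr + σ·(b(t) − b(s)) for all s ≤ t, and moreover e^{αs}·x̄(s) → 0 as s → −∞; x̄ is the unique continuous full-line solution with this backward-decay property. -/
open MeasureTheory Real Set Filter

lemma aux_intervalIntegrable_exp_mul (c y t : ℝ) :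
    IntervalIntegrable (fun r => Real.exp (c * r)) volume y t :=
  (Real.continuous_exp.comp (continuous_const.mul continuous_id)).intervalIntegrable y t

lemma aux_hasDerivAt_exp_mul_div (c : ℝ) (hc : c ≠ 0) (x : ℝ) :
    HasDerivAt (fun r => Real.exp (c * r) / c) (Real.exp (c * x)) x := by
  have h := ((hasDerivAt_id x).const_mul c).exp.div_const c
  simpa [mul_comm, mul_div_assoc, mul_div_cancel_left₀ _ hc] using h

lemma aux_integrableOn_exp_mul_Iic (c t : ℝ) (hc : 0 < c) :
    IntegrableOn (fun r => Real.exp (c * r)) (Set.Iic t) := by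
  refine integrableOn_Iic_of_intervalIntegral_norm_bounded (Real.exp (c*t)/c) t
    (fun y => (aux_intervalIntegrable_exp_mul c y t).1) tendsto_id ?_
  filter_upwards [Iic_mem_atBot t] with y (hy : y ≤ t)
  have : (∫ x in y..t, ‖Real.exp (c * x)‖) = Real.exp (c*t)/c - Real.exp (c*y)/c := by
    simp_rw [Real.norm_eq_abs, abs_of_pos (Real.exp_pos _)]
    exact intervalIntegral.integral_eq_sub_of_hasDerivAt
      (fun x _ => aux_hasDerivAt_exp_mul_div c hc.ne' x) (aux_intervalIntegrable_exp_mul c y t)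
  rw [this]
  have h1 := (Real.exp_pos (c*y)).le
  have h2 : 0 < c := hc
  have : 0 ≤ Real.exp (c*y)/c := by positivity
  linarith

lemma aux_integral_exp_mul_Iic (c t : ℝ) (hc : 0 < c) :
    ∫ r in Set.Iic t, Real.exp (c * r) = Real.exp (c * t) / c := by
  have h := integral_Iic_of_hasDerivAt_of_tendsto' (a := t) (m := 0)
    (f := fun r => Real.exp (c*r)/c) (f' := fun r => Real.exp (c*r))
    (fun x _ => aux_hasDerivAt_exp_mul_div c hc.ne' x)
    (aux_integrableOn_exp_mul_Iic c t hc) ?_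
  · rw [h, sub_zero]
  · have : Tendsto (fun r : ℝ => c * r) atBot atBot := by
      exact tendsto_id.const_mul_atBot hc
    have := (Real.tendsto_exp_atBot.comp this).div_const c
    simpa using this

-- Lipschitz from derivative bound
lemma aux_lip (g : ℝ → ℝ) (hg : Differentiable ℝ g) (L : ℝ)
    (hL : ∀ x, |deriv g x| ≤ L) (u v : ℝ) : |g u - g v| ≤ L * |u - v| := by
  have := Convex.norm_image_sub_le_of_norm_deriv_le (f := g) (s := Set.univ)
    (fun x _ => hg x)
    (fun x _ => by simpa [Real.norm_eq_abs] using hL x)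
    convex_univ (Set.mem_univ v) (Set.mem_univ u)
  simpa [Real.norm_eq_abs] using this


noncomputable def auxW (ε : ℝ) : ℝ → ℝ := fun t => Real.exp (ε*t) + Real.exp (-(ε*t))

lemma auxW_continuous (ε : ℝ) : Continuous (auxW ε) := by
  unfold auxW; fun_prop

lemma auxW_one_le (ε t : ℝ) : 1 ≤ auxW ε t := by
  unfold auxW
  have h1 := Real.exp_pos (ε*t)
  have h2 := Real.exp_pos (-(ε*t))
  have h3 : Real.exp (ε*t) * Real.exp (-(ε*t)) = 1 := by
    rw [← Real.exp_add]; simp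
  nlinarith [sq_nonneg (Real.exp (ε*t) - 1)]

lemma auxW_pos (ε t : ℝ) : 0 < auxW ε t := lt_of_lt_of_le one_pos (auxW_one_le ε t)

lemma auxW_quad (ε : ℝ) (hε : 0 < ε) (t : ℝ) : 1 + t^2 ≤ (1 + 4/ε^2) * auxW ε t := by
  have hexpabs : Real.exp (ε*|t|) ≤ auxW ε t := by
    unfold auxW
    rcases abs_cases t with ⟨h, _⟩ | ⟨h, _⟩
    · rw [h]; nlinarith [Real.exp_pos (-(ε*t))]
    · rw [h, mul_neg]; nlinarith [Real.exp_pos (ε*t)]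
  have h1 : 1 ≤ Real.exp (ε*|t|) := Real.one_le_exp (by positivity)
  have h2 : ε^2 * t^2 ≤ 4 * Real.exp (ε*|t|) := by
    have hx : 0 ≤ ε * |t| := by positivity
    have ha := Real.add_one_le_exp (ε*|t|/2)
    have hsq : Real.exp (ε*|t|) = Real.exp (ε*|t|/2) ^ 2 := by
      rw [sq, ← Real.exp_add]; ring_nf
    nlinarith [Real.exp_pos (ε*|t|/2), sq_abs t, sq_nonneg (ε*|t|/2)]
  have hε2 : 0 < ε^2 := by positivity
  have h3 : t^2 ≤ 4/ε^2 * auxW ε t := by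
    rw [div_mul_eq_mul_div, le_div_iff₀ hε2]
    nlinarith
  nlinarith [auxW_pos ε t, h1.trans hexpabs]


lemma auxP (β ε : ℝ) (hε : 0 < ε) (hεβ : ε < β) (g : ℝ → ℝ) (hg : Continuous g) (C : ℝ)
    (hC : ∀ r, |g r| ≤ C * auxW ε r) :
    (∀ t, IntegrableOn (fun r => Real.exp (β*(r-t)) * g r) (Set.Iic t)) ∧
    (∀ t, |∫ r in Set.Iic t, Real.exp (β*(r-t)) * g r| ≤ C / (β-ε) * auxW ε t) ∧
    (∀ t, HasDerivAt (fun t' => ∫ r in Set.Iic t', Real.exp (β*(r-t')) * g r)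
      (g t - β * ∫ r in Set.Iic t, Real.exp (β*(r-t)) * g r) t) := by
  have hβ : 0 < β := hε.trans hεβ
  have hβε1 : 0 < β + ε := by linarith
  have hβε2 : 0 < β - ε := by linarith
  have hC0 : 0 ≤ C := by
    have h := (abs_nonneg (g 0)).trans (hC 0)
    nlinarith [auxW_pos ε 0]
  -- pointwise bound
  have hbound : ∀ t r, |Real.exp (β*(r-t)) * g r| ≤
      C * Real.exp (-(β*t)) * (Real.exp ((β+ε)*r) + Real.exp ((β-ε)*r)) := by
    intro t r
    rw [abs_mul, Real.abs_exp]
    have h1 : Real.exp (β*(r-t)) * |g r| ≤ Real.exp (β*(r-t)) * (C * auxW ε r) := by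
      exact mul_le_mul_of_nonneg_left (hC r) (Real.exp_pos _).le
    refine h1.trans (le_of_eq ?_)
    unfold auxW
    rw [show β*(r-t) = β*r + -(β*t) by ring, Real.exp_add,
      show (β+ε)*r = β*r + ε*r by ring, Real.exp_add,
      show (β-ε)*r = β*r + -(ε*r) by ring, Real.exp_add]
    ring
  have hDint : ∀ t : ℝ, IntegrableOn (fun r => C * Real.exp (-(β*t)) *
      (Real.exp ((β+ε)*r) + Real.exp ((β-ε)*r))) (Set.Iic t) := by
    intro t
    exact (((aux_integrableOn_exp_mul_Iic (β+ε) t hβε1).add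
      (aux_integrableOn_exp_mul_Iic (β-ε) t hβε2)).const_mul _)
  have hint : ∀ t, IntegrableOn (fun r => Real.exp (β*(r-t)) * g r) (Set.Iic t) := by
    intro t
    refine Integrable.mono' (hDint t) ?_ ?_
    · exact ((Real.continuous_exp.comp (by fun_prop)).mul hg).aestronglyMeasurable
    · exact ae_of_all _ fun r => hbound t r
  refine ⟨hint, ?_, ?_⟩
  · -- bound on the integral
    intro t
    have h1 : |∫ r in Set.Iic t, Real.exp (β*(r-t)) * g r| ≤
        ∫ r in Set.Iic t, C * Real.exp (-(β*t)) * (Real.exp ((β+ε)*r) + Real.exp ((β-ε)*r)) := by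
      have hn := norm_integral_le_integral_norm (μ := volume.restrict (Set.Iic t))
        (f := fun r => Real.exp (β*(r-t)) * g r)
      rw [Real.norm_eq_abs] at hn
      refine hn.trans ?_
      refine integral_mono (hint t).norm (hDint t) (fun r => ?_)
      have h := hbound t r
      rw [abs_mul, Real.abs_exp] at h
      simpa [Real.norm_eq_abs, abs_mul, Real.abs_exp] using h
    refine h1.trans ?_
    rw [integral_const_mul, integral_add (aux_integrableOn_exp_mul_Iic (β+ε) t hβε1)
      (aux_integrableOn_exp_mul_Iic (β-ε) t hβε2),
      aux_integral_exp_mul_Iic _ t hβε1, aux_integral_exp_mul_Iic _ t hβε2]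
    unfold auxW
    have e1 : Real.exp (-(β*t)) * Real.exp ((β+ε)*t) = Real.exp (ε*t) := by
      rw [← Real.exp_add]; ring_nf
    have e2 : Real.exp (-(β*t)) * Real.exp ((β-ε)*t) = Real.exp (-(ε*t)) := by
      rw [← Real.exp_add]; ring_nf
    have hp1 := Real.exp_pos (ε*t)
    have hp2 := Real.exp_pos (-(ε*t))
    have key : C * Real.exp (-(β*t)) * (Real.exp ((β+ε)*t)/(β+ε) + Real.exp ((β-ε)*t)/(β-ε))
        = C * (Real.exp (ε*t)/(β+ε) + Real.exp (-(ε*t))/(β-ε)) := by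
      rw [← e1, ← e2]
      ring
    rw [key, div_mul_eq_mul_div, le_div_iff₀ hβε2]
    have h2 : Real.exp (ε*t)/(β+ε) ≤ Real.exp (ε*t)/(β-ε) :=
      div_le_div_of_nonneg_left hp1.le hβε2 (by linarith)
    have h5 : Real.exp (ε*t)/(β+ε) + Real.exp (-(ε*t))/(β-ε) ≤
        (Real.exp (ε*t) + Real.exp (-(ε*t)))/(β-ε) := by
      rw [add_div]; exact add_le_add h2 le_rfl
    calc C * (Real.exp (ε*t)/(β+ε) + Real.exp (-(ε*t))/(β-ε)) * (β-ε)
        ≤ C * ((Real.exp (ε*t) + Real.exp (-(ε*t)))/(β-ε)) * (β-ε) :=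
          mul_le_mul_of_nonneg_right (mul_le_mul_of_nonneg_left h5 hC0) hβε2.le
      _ = C * (Real.exp (ε*t) + Real.exp (-(ε*t))) := by field_simp
  · -- derivative
    intro t
    set F : ℝ → ℝ := fun s => ∫ r in Set.Iic s, Real.exp (β*r) * g r with hF
    have hFint : ∀ s : ℝ, IntegrableOn (fun r => Real.exp (β*r) * g r) (Set.Iic s) := by
      intro s
      have h := (hint s).const_mul (Real.exp (β*s))
      refine IntegrableOn.congr_fun h (fun r _ => ?_) measurableSet_Iic
      rw [← mul_assoc, ← Real.exp_add]
      ring_nf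
    have hPF : ∀ s : ℝ, (∫ r in Set.Iic s, Real.exp (β*(r-s)) * g r) = Real.exp (-(β*s)) * F s := by
      intro s
      rw [hF, ← integral_const_mul]
      refine setIntegral_congr_fun measurableSet_Iic (fun r _ => ?_)
      rw [← mul_assoc, ← Real.exp_add]
      ring_nf
    have hFd : HasDerivAt F (Real.exp (β*t) * g t) t := by
      have heq : F = fun s => F 0 + ∫ r in (0:ℝ)..s, Real.exp (β*r) * g r := by
        funext s
        have h := intervalIntegral.integral_Iic_sub_Iic (hFint 0) (hFint s)
        rw [hF]
        simp only
        linarith [h]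
      rw [heq]
      have hc : Continuous fun r => Real.exp (β*r) * g r := by fun_prop
      exact ((intervalIntegral.integral_hasDerivAt_right (hc.intervalIntegrable 0 t)
        (hc.stronglyMeasurableAtFilter volume (nhds t)) hc.continuousAt).const_add (F 0))
    have hed : HasDerivAt (fun s => Real.exp (-(β*s))) (-β * Real.exp (-(β*t))) t := by
      have := ((hasDerivAt_id t).const_mul (-β)).exp
      simpa [neg_mul, mul_comm] using this
    have hprod := hed.mul hFd
    have heq2 : (fun t' => ∫ r in Set.Iic t', Real.exp (β*(r-t')) * g r)
        = fun s => Real.exp (-(β*s)) * F s := funext hPF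
    rw [heq2, hPF t]
    refine hprod.congr_deriv ?_
    have h1 : Real.exp (-(β*t)) * Real.exp (β*t) = 1 := by
      rw [← Real.exp_add]; ring_nf; exact Real.exp_zero
    rw [show Real.exp (-(β*t)) * (Real.exp (β*t) * g t)
        = (Real.exp (-(β*t)) * Real.exp (β*t)) * g t by ring, h1]
    ring
set_option maxHeartbeats 1000000 in
theorem stmt2 (α : ℝ) (hα : 0 < α) (a : ℝ → ℝ) (ha : Differentiable ℝ a)
    (hderiv : ∀ z : ℝ, deriv a z ∈ Set.Icc (-α⁻¹) (-α))
    (σ K : ℝ) (hK : 0 < K) (b : ℝ → ℝ) (hb : Continuous b)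
    (hgrow : ∀ t : ℝ, |b t| ≤ K * (1 + t ^ 2)) :
    ∃! x : ℝ → ℝ, Continuous x ∧
      (∀ s t : ℝ, s ≤ t → x t - x s = (∫ r in s..t, a (x r)) + σ * (b t - b s)) ∧
      Filter.Tendsto (fun s : ℝ => Real.exp (α * s) * x s) Filter.atBot (nhds 0) := by
  have hM : (0:ℝ) < α⁻¹ := inv_pos.mpr hα
  have hαM : α ≤ α⁻¹ := by
    have h := (hderiv 0).1.trans (hderiv 0).2
    linarith
  set L : ℝ := (α⁻¹ - α)/2 with hLdef
  set β : ℝ := (α⁻¹ + α)/2 with hβdef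
  set ε : ℝ := α/2 with hεdef
  have hε : 0 < ε := by simp [hεdef]; linarith
  have hεβ : ε < β := by simp [hεdef, hβdef]; linarith
  have hβ : 0 < β := hε.trans hεβ
  have hL0 : 0 ≤ L := by simp [hLdef]; linarith
  have hq : L < β - ε := by simp [hLdef, hβdef, hεdef]; linarith
  set w : ℝ → ℝ := auxW ε with hwdef
  have hw1 : ∀ t, 1 ≤ w t := auxW_one_le ε
  have hwpos : ∀ t, 0 < w t := auxW_pos ε
  have hwcont : Continuous w := auxW_continuous ε
  set Cq : ℝ := 1 + 4/ε^2 with hCqdef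
  have hquad : ∀ t, 1 + t^2 ≤ Cq * w t := auxW_quad ε hε
  have hCq1 : 1 ≤ Cq := by
    have : 0 ≤ 4/ε^2 := by positivity
    simp [hCqdef]; linarith
  -- Lipschitz facts
  have hderivβ : ∀ x : ℝ, deriv (fun z => a z + β * z) x = deriv a x + β := by
    intro x
    have h2 := (hasDerivAt_id x).const_mul β
    have h3 := ((ha x).hasDerivAt.add h2).deriv
    simp only [id_eq, mul_one] at h3
    exact h3
  have hlipA : ∀ u v : ℝ, |(a u + β * u) - (a v + β * v)| ≤ L * |u - v| := by
    refine aux_lip _ (ha.add (by fun_prop)) L (fun x => ?_)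
    rw [show deriv (a + HMul.hMul β) x = deriv a x + β from hderivβ x]
    have h := hderiv x
    rw [abs_le]
    constructor
    · have := h.1; simp [hLdef, hβdef]; linarith [h.1]
    · have := h.2; simp [hLdef, hβdef]; linarith [h.2]
  have hmono : ∀ u v : ℝ, (u - v) * (a u - a v) ≤ -α * (u - v)^2 := by
    have hanti : Antitone (fun z => a z + α * z) := by
      refine antitone_of_deriv_nonpos (ha.add (by fun_prop)) (fun x => ?_)
      have h2 := (hasDerivAt_id x).const_mul α
      have h3 := ((ha x).hasDerivAt.add h2).deriv
      simp only [id_eq] at h3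
      rw [show deriv (fun z => a z + α * z) x = deriv a x + α * 1 from h3]
      simp
      linarith [(hderiv x).2]
    intro u v
    rcases le_total u v with h | h
    · have h1 := hanti h
      simp only at h1
      have h2 : 0 ≤ (v - u) * ((a u + α * u) - (a v + α * v)) :=
        mul_nonneg (by linarith) (by linarith)
      nlinarith [h2]
    · have h1 := hanti h
      simp only at h1
      have h2 : 0 ≤ (u - v) * ((a v + α * v) - (a u + α * u)) :=
        mul_nonneg (by linarith) (by linarith)
      nlinarith [h2]
  -- the fixed point map
  set G : (BoundedContinuousFunction ℝ ℝ) → ℝ → ℝ := fun u r => a (w r * u r + σ * b r) + β * (w r * u r) with hGdef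
  have hGeq : ∀ u r, G u r = a (w r * u r + σ * b r) + β * (w r * u r) := fun u r => rfl
  have hGcont : ∀ u, Continuous (G u) := by
    intro u
    exact (ha.continuous.comp (by continuity)).add (continuous_const.mul (by continuity))
  set Cu : (BoundedContinuousFunction ℝ ℝ) → ℝ := fun u => |a 0| + (L + β) * (|σ| * K * Cq) + L * ‖u‖ with hCudef
  have hGbound : ∀ u r, |G u r| ≤ Cu u * w r := by
    intro u r
    obtain ⟨z, hz⟩ : ∃ z : ℝ, z = w r * u r + σ * b r := ⟨_, rfl⟩
    have h1 : G u r = ((a z + β * z) - (a 0 + β * 0)) + a 0 - β * (σ * b r) := by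
      rw [hGeq, hz]
      ring
    have h2 : |(a z + β * z) - (a 0 + β * 0)| ≤ L * |z| := by
      simpa using hlipA z 0
    have h3 : |z| ≤ w r * |u r| + |σ| * (K * (1 + r^2)) := by
      rw [hz]
      refine (abs_add_le _ _).trans ?_
      rw [abs_mul, abs_mul, abs_of_pos (hwpos r)]
      exact add_le_add le_rfl (mul_le_mul_of_nonneg_left (hgrow r) (abs_nonneg σ))
    have h4 : |u r| ≤ ‖u‖ := by
      rw [← Real.norm_eq_abs]
      exact u.norm_coe_le_norm r
    have h5 : K * (1 + r^2) ≤ K * (Cq * w r) :=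
      mul_le_mul_of_nonneg_left (hquad r) hK.le
    have h6 : |b r| ≤ K * (Cq * w r) := (hgrow r).trans h5
    have hb0 : 0 ≤ |σ| * (K * (Cq * w r)) :=
      mul_nonneg (abs_nonneg σ) (mul_nonneg hK.le (mul_nonneg (by linarith) (hwpos r).le))
    calc |G u r| ≤ |(a z + β * z) - (a 0 + β * 0)| + |a 0| + β * (|σ| * |b r|) := by
          rw [h1]
          calc |(a z + β * z) - (a 0 + β * 0) + a 0 - β * (σ * b r)|
              ≤ |(a z + β * z) - (a 0 + β * 0) + a 0| + |β * (σ * b r)| := by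
                rw [sub_eq_add_neg]
                simpa [abs_neg] using
                  abs_add_le ((a z + β * z) - (a 0 + β * 0) + a 0) (-(β * (σ * b r)))
            _ ≤ |(a z + β * z) - (a 0 + β * 0)| + |a 0| + |β * (σ * b r)| := by
                linarith [abs_add_le ((a z + β * z) - (a 0 + β * 0)) (a 0)]
            _ = |(a z + β * z) - (a 0 + β * 0)| + |a 0| + β * (|σ| * |b r|) := by
                rw [abs_mul, abs_mul, abs_of_pos hβ]
      _ ≤ L * (w r * ‖u‖ + |σ| * (K * (Cq * w r))) + |a 0| + β * (|σ| * (K * (Cq * w r))) := by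
          have hby : |σ| * |b r| ≤ |σ| * (K * (Cq * w r)) :=
            mul_le_mul_of_nonneg_left h6 (abs_nonneg σ)
          have hz2 : |z| ≤ w r * ‖u‖ + |σ| * (K * (Cq * w r)) := by
            refine h3.trans ?_
            refine add_le_add (mul_le_mul_of_nonneg_left h4 (hwpos r).le) ?_
            exact mul_le_mul_of_nonneg_left h5 (abs_nonneg σ)
          have := mul_le_mul_of_nonneg_left hz2 hL0
          have := mul_le_mul_of_nonneg_left hby hβ.le
          linarith [h2]
      _ ≤ Cu u * w r := by
          simp only [hCudef]
          have hw1r := hw1 r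
          have hn : 0 ≤ ‖u‖ := norm_nonneg u
          have h0 : 0 ≤ |a 0| := abs_nonneg _
          have hσK : 0 ≤ |σ| * K * Cq := by positivity
          nlinarith [mul_le_mul_of_nonneg_left hw1r h0,
            mul_le_mul_of_nonneg_left hw1r (mul_nonneg hL0 hn)]
  -- package for each u
  have hP := fun u : BoundedContinuousFunction ℝ ℝ =>
    auxP β ε hε hεβ (G u) (hGcont u) (Cu u) (hGbound u)
  have hPcont : ∀ u : BoundedContinuousFunction ℝ ℝ,
      Continuous (fun t => ∫ r in Set.Iic t, Real.exp (β*(r-t)) * G u r) :=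
    fun u => continuous_iff_continuousAt.mpr (fun t => ((hP u).2.2 t).differentiableAt.continuousAt)
  have hβε2 : (0:ℝ) < β - ε := by linarith
  -- the contraction map
  set Φ : BoundedContinuousFunction ℝ ℝ → BoundedContinuousFunction ℝ ℝ := fun u =>
    BoundedContinuousFunction.ofNormedAddCommGroup
      (fun t => (∫ r in Set.Iic t, Real.exp (β*(r-t)) * G u r) / w t)
      ((hPcont u).div hwcont (fun t => (hwpos t).ne'))
      (Cu u / (β-ε))
      (fun t => by
        rw [Real.norm_eq_abs, abs_div, abs_of_pos (hwpos t), div_le_iff₀ (hwpos t)]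
        exact (hP u).2.1 t) with hΦdef
  have hΦcoe : ∀ u t, Φ u t = (∫ r in Set.Iic t, Real.exp (β*(r-t)) * G u r) / w t :=
    fun u t => rfl
  -- contraction estimate
  have hdistG : ∀ u v : BoundedContinuousFunction ℝ ℝ, ∀ r,
      |G u r - G v r| ≤ L * dist u v * w r := by
    intro u v r
    have h1 : G u r - G v r
        = (a (w r * u r + σ * b r) + β * (w r * u r + σ * b r))
          - (a (w r * v r + σ * b r) + β * (w r * v r + σ * b r)) := by
      rw [hGeq, hGeq]; ring
    have h2 := hlipA (w r * u r + σ * b r) (w r * v r + σ * b r)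
    have h3 : (w r * u r + σ * b r) - (w r * v r + σ * b r) = w r * (u r - v r) := by ring
    rw [h3, abs_mul, abs_of_pos (hwpos r)] at h2
    have h4 : |u r - v r| ≤ dist u v := by
      have := BoundedContinuousFunction.dist_coe_le_dist (f := u) (g := v) r
      rwa [Real.dist_eq] at this
    rw [h1]
    refine h2.trans ?_
    have := mul_le_mul_of_nonneg_left h4 (mul_nonneg hL0 (hwpos r).le)
    calc L * (w r * |u r - v r|) = (L * w r) * |u r - v r| := by ring
      _ ≤ (L * w r) * dist u v := by
          exact mul_le_mul_of_nonneg_left h4 (mul_nonneg hL0 (hwpos r).le)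
      _ = L * dist u v * w r := by ring
  have hcontr : ∀ u v, dist (Φ u) (Φ v) ≤ (L/(β-ε)) * dist u v := by
    intro u v
    have hq0 : 0 ≤ L/(β-ε) := div_nonneg hL0 hβε2.le
    refine (BoundedContinuousFunction.dist_le (mul_nonneg hq0 dist_nonneg)).mpr (fun t => ?_)
    rw [Real.dist_eq, hΦcoe, hΦcoe, div_sub_div_same]
    have hsub : (∫ r in Set.Iic t, Real.exp (β*(r-t)) * G u r)
        - (∫ r in Set.Iic t, Real.exp (β*(r-t)) * G v r)
        = ∫ r in Set.Iic t, Real.exp (β*(r-t)) * (G u r - G v r) := by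
      rw [← integral_sub ((hP u).1 t) ((hP v).1 t)]
      refine setIntegral_congr_fun measurableSet_Iic (fun r _ => ?_)
      ring
    rw [hsub]
    have hpkg := auxP β ε hε hεβ (fun r => G u r - G v r) ((hGcont u).sub (hGcont v))
      (L * dist u v) (fun r => hdistG u v r)
    have h2 := hpkg.2.1 t
    rw [abs_div, abs_of_pos (hwpos t), div_le_iff₀ (hwpos t)]
    refine h2.trans (le_of_eq ?_)
    ring
  have hqlt : L/(β-ε) < 1 := (div_lt_one hβε2).mpr hq
  have hq0 : (0:ℝ) ≤ L/(β-ε) := div_nonneg hL0 hβε2.le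
  have hΦlip : LipschitzWith (Real.toNNReal (L/(β-ε))) Φ :=
    LipschitzWith.of_dist_le_mul (fun u v => by
      rw [Real.coe_toNNReal _ hq0]; exact hcontr u v)
  have hcw : ContractingWith (Real.toNNReal (L/(β-ε))) Φ := by
    constructor
    · rw [← Real.toNNReal_one]
      exact (Real.toNNReal_lt_toNNReal_iff one_pos).mpr hqlt
    · exact hΦlip
  set u0 : BoundedContinuousFunction ℝ ℝ := ContractingWith.fixedPoint Φ hcw with hu0def
  have hfix : Φ u0 = u0 := hcw.fixedPoint_isFixedPt
  have hy : ∀ t, (∫ r in Set.Iic t, Real.exp (β*(r-t)) * G u0 r) = w t * u0 t := by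
    intro t
    have h : Φ u0 t = u0 t := by rw [hfix]
    rw [hΦcoe, div_eq_iff (hwpos t).ne'] at h
    rw [h]; ring
  set y : ℝ → ℝ := fun t => w t * u0 t with hydef
  set xb : ℝ → ℝ := fun t => y t + σ * b t with hxdef
  have hycont : Continuous y := hwcont.mul u0.continuous
  have hxcont : Continuous xb := hycont.add (continuous_const.mul hb)
  have hyd : ∀ t, HasDerivAt y (a (xb t)) t := by
    intro t
    have h := (hP u0).2.2 t
    have heq : (fun t' => ∫ r in Set.Iic t', Real.exp (β*(r-t')) * G u0 r) = y := funext hy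
    rw [heq, hy t] at h
    have hval : G u0 t - β * (w t * u0 t) = a (xb t) := by
      rw [hGeq]
      simp only [hxdef, hydef]
      ring
    rwa [hval] at h
  have hxeq : ∀ s t : ℝ, s ≤ t → xb t - xb s = (∫ r in s..t, a (xb r)) + σ * (b t - b s) := by
    intro s t _
    have h := intervalIntegral.integral_eq_sub_of_hasDerivAt (f := y)
      (f' := fun r => a (xb r)) (fun r _ => hyd r)
      ((ha.continuous.comp hxcont).intervalIntegrable s t)
    simp only [hxdef]
    rw [h]
    ring
  have hdecay : Filter.Tendsto (fun s : ℝ => Real.exp (α * s) * xb s) Filter.atBot (nhds 0) := by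
    have hboundx : ∀ s : ℝ, ‖Real.exp (α*s) * xb s‖
        ≤ (‖u0‖ + |σ| * K * Cq) * (Real.exp ((α+ε)*s) + Real.exp ((α-ε)*s)) := by
      intro s
      have h1 : |y s| ≤ w s * ‖u0‖ := by
        simp only [hydef]
        rw [abs_mul, abs_of_pos (hwpos s)]
        refine mul_le_mul_of_nonneg_left ?_ (hwpos s).le
        rw [← Real.norm_eq_abs]
        exact u0.norm_coe_le_norm s
      have h2 : |σ * b s| ≤ |σ| * K * Cq * w s := by
        rw [abs_mul]
        calc |σ| * |b s| ≤ |σ| * (K * (Cq * w s)) := by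
              refine mul_le_mul_of_nonneg_left ((hgrow s).trans ?_) (abs_nonneg σ)
              exact mul_le_mul_of_nonneg_left (hquad s) hK.le
          _ = |σ| * K * Cq * w s := by ring
      have h3 : |xb s| ≤ (‖u0‖ + |σ| * K * Cq) * w s := by
        simp only [hxdef]
        refine (abs_add_le _ _).trans ?_
        have := add_le_add h1 h2
        nlinarith [this]
      have h4 : Real.exp (α*s) * w s = Real.exp ((α+ε)*s) + Real.exp ((α-ε)*s) := by
        rw [hwdef]
        unfold auxW
        rw [mul_add, ← Real.exp_add, ← Real.exp_add]
        ring_nf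
      rw [Real.norm_eq_abs, abs_mul, Real.abs_exp, ← h4]
      have := mul_le_mul_of_nonneg_left h3 (Real.exp_pos (α*s)).le
      calc Real.exp (α*s) * |xb s| ≤ Real.exp (α*s) * ((‖u0‖ + |σ| * K * Cq) * w s) := this
        _ = (‖u0‖ + |σ| * K * Cq) * (Real.exp (α*s) * w s) := by ring
    have t1 : Filter.Tendsto (fun s : ℝ => Real.exp ((α+ε)*s)) Filter.atBot (nhds 0) :=
      Real.tendsto_exp_atBot.comp (tendsto_id.const_mul_atBot (by linarith))
    have t2 : Filter.Tendsto (fun s : ℝ => Real.exp ((α-ε)*s)) Filter.atBot (nhds 0) := by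
      refine Real.tendsto_exp_atBot.comp (tendsto_id.const_mul_atBot ?_)
      simp only [hεdef]; linarith
    have t3 := (t1.add t2).const_mul (‖u0‖ + |σ| * K * Cq)
    simp only [add_zero, mul_zero] at t3
    exact squeeze_zero_norm hboundx t3
  refine ⟨xb, ⟨hxcont, hxeq, hdecay⟩, ?_⟩
  -- uniqueness
  rintro x ⟨hxc, hxe, hxt⟩
  funext t
  set d : ℝ → ℝ := fun t => x t - xb t with hddef
  set φ : ℝ → ℝ := fun r => a (x r) - a (xb r) with hφdef
  have hφcont : Continuous φ := (ha.continuous.comp hxc).sub (ha.continuous.comp hxcont)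
  have hint1 : ∀ s t : ℝ, IntervalIntegrable (fun r => a (x r)) volume s t :=
    fun s t => (ha.continuous.comp hxc).intervalIntegrable s t
  have hint2 : ∀ s t : ℝ, IntervalIntegrable (fun r => a (xb r)) volume s t :=
    fun s t => (ha.continuous.comp hxcont).intervalIntegrable s t
  have hdid : ∀ t, d t = d 0 + ∫ r in (0:ℝ)..t, φ r := by
    intro t
    rcases le_total (0:ℝ) t with h | h
    · have h1 := hxe 0 t h
      have h2 := hxeq 0 t h
      have h3 : (∫ r in (0:ℝ)..t, φ r)
          = (∫ r in (0:ℝ)..t, a (x r)) - ∫ r in (0:ℝ)..t, a (xb r) := by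
        simp only [hφdef]
        exact intervalIntegral.integral_sub (hint1 0 t) (hint2 0 t)
      simp only [hddef]
      linarith
    · have h1 := hxe t 0 h
      have h2 := hxeq t 0 h
      have h3 : (∫ r in t..(0:ℝ), φ r)
          = (∫ r in t..(0:ℝ), a (x r)) - ∫ r in t..(0:ℝ), a (xb r) := by
        simp only [hφdef]
        exact intervalIntegral.integral_sub (hint1 t 0) (hint2 t 0)
      have h4 : (∫ r in (0:ℝ)..t, φ r) = - ∫ r in t..(0:ℝ), φ r :=
        intervalIntegral.integral_symm t 0
      simp only [hddef]
      linarith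
  have hdd : ∀ t, HasDerivAt d (φ t) t := by
    intro t
    have heq : d = fun t => d 0 + ∫ r in (0:ℝ)..t, φ r := funext hdid
    rw [heq]
    exact (intervalIntegral.integral_hasDerivAt_right (hφcont.intervalIntegrable 0 t)
      (hφcont.stronglyMeasurableAtFilter volume (nhds t)) hφcont.continuousAt).const_add (d 0)
  have hmono2 : ∀ t, d t * φ t ≤ -α * d t^2 := by
    intro t
    have := hmono (x t) (xb t)
    simp only [hddef, hφdef]
    exact this
  have hh : ∀ t, HasDerivAt (fun t => Real.exp (2*α*t) * d t^2)
      (Real.exp (2*α*t) * (2*α*(d t)^2 + 2*d t*φ t)) t := by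
    intro t
    have he : HasDerivAt (fun s : ℝ => Real.exp (2*α*s)) (2*α*Real.exp (2*α*t)) t := by
      have := ((hasDerivAt_id t).const_mul (2*α)).exp
      simpa [id_eq, mul_comm] using this
    have hd2 : HasDerivAt (fun s => d s^2) (2*d t*φ t) t := by
      have := (hdd t).pow 2
      simp at this
      exact this
    have := he.mul hd2
    refine this.congr_deriv ?_
    ring
  have hdiff : Differentiable ℝ (fun t => Real.exp (2*α*t) * d t^2) :=
    fun t => (hh t).differentiableAt
  have hderneg : ∀ t, deriv (fun t => Real.exp (2*α*t) * d t^2) t ≤ 0 := by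
    intro t
    rw [(hh t).deriv]
    have h5 := hmono2 t
    have hexp := Real.exp_pos (2*α*t)
    have h6 : 2*α*(d t)^2 + 2*d t*φ t ≤ 0 := by linarith
    calc Real.exp (2*α*t) * (2*α*(d t)^2 + 2*d t*φ t) ≤ Real.exp (2*α*t) * 0 :=
          mul_le_mul_of_nonneg_left h6 hexp.le
      _ = 0 := by ring
  have hanti2 : Antitone (fun t => Real.exp (2*α*t) * d t^2) :=
    antitone_of_deriv_nonpos hdiff hderneg
  have htend0 : Filter.Tendsto (fun s => Real.exp (2*α*s) * d s^2) Filter.atBot (nhds 0) := by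
    have h1 := hxt.sub hdecay
    rw [sub_zero] at h1
    have h2 : Filter.Tendsto
        (fun s => (Real.exp (α*s)*x s - Real.exp (α*s)*xb s)^2) Filter.atBot (nhds 0) := by
      have := h1.mul h1
      rw [mul_zero] at this
      refine this.congr (fun s => ?_)
      ring
    refine h2.congr (fun s => ?_)
    have hes : Real.exp (2*α*s) = Real.exp (α*s) * Real.exp (α*s) := by
      rw [← Real.exp_add]; ring_nf
    simp only [hddef]
    rw [hes]
    ring
  have hle : ∀ t, Real.exp (2*α*t) * d t^2 ≤ 0 := by
    intro t
    refine ge_of_tendsto htend0 ?_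
    filter_upwards [Filter.eventually_le_atBot t] with s hs
    exact hanti2 hs
  have hd2le : d t^2 ≤ 0 := by
    have := hle t
    have hexp := Real.exp_pos (2*α*t)
    nlinarith
  have hd0 : d t = 0 := by nlinarith [sq_nonneg (d t)]
  simp only [hddef] at hd0
  linarith
end

section
/- Let α > 0 and β > 0. There exists a positive constant C > 0, depending only on α and β, such that for all x ≥ 1, e^{−αx} · ∫₁ˣ ξ^{−β} e^{αξ} dξ ≤ C·x^{−β}. -/
open MeasureTheory Real

-- auxiliary: boundedness of x^(β+1) * exp(-(α/2)x) on [1,∞)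
lemma aux_bdd (α β : ℝ) (hα : 0 < α) (hβ : 0 < β) :
    ∃ C₁ : ℝ, 0 < C₁ ∧ ∀ x : ℝ, 1 ≤ x → x ^ (β + 1) * Real.exp (-(α/2) * x) ≤ C₁ := by
  have ht := tendsto_rpow_mul_exp_neg_mul_atTop_nhds_zero (β+1) (α/2) (by linarith)
  have h1 : ∀ᶠ x in Filter.atTop, x ^ (β+1) * Real.exp (-(α/2)*x) ≤ 1 := by
    filter_upwards [ht.eventually (gt_mem_nhds one_pos)] with x hx
    exact le_of_lt hx
  obtain ⟨X, hX⟩ := h1.exists_forall_of_atTop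
  set g : ℝ → ℝ := fun x => x ^ (β+1) * Real.exp (-(α/2)*x) with hg
  have hcont : ContinuousOn g (Set.Icc 1 (max 1 X)) := by
    apply ContinuousOn.mul
    · apply ContinuousOn.rpow_const continuousOn_id
      intro x hx; left; have := hx.1; positivity
    · exact (Real.continuous_exp.comp (by continuity)).continuousOn
  obtain ⟨M, hM⟩ := IsCompact.exists_bound_of_continuousOn isCompact_Icc hcont
  refine ⟨max 1 M + 1, by positivity, ?_⟩
  intro x hx
  rcases le_or_gt x (max 1 X) with h | h
  · have := hM x ⟨hx, h⟩
    calc g x ≤ |g x| := le_abs_self _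
    _ ≤ M := by simpa using this
    _ ≤ max 1 M + 1 := by have := le_max_right 1 M; linarith
  · have := hX x (le_of_lt (lt_of_le_of_lt (le_max_right 1 X) h))
    have h2 : (1:ℝ) ≤ max 1 M := le_max_left 1 M
    linarith

theorem stmt3 (α β : ℝ) (hα : 0 < α) (hβ : 0 < β) :
    ∃ C : ℝ, 0 < C ∧ ∀ x : ℝ, 1 ≤ x →
      Real.exp (-α * x) * (∫ ξ in (1:ℝ)..x, ξ ^ (-β) * Real.exp (α * ξ)) ≤ C * x ^ (-β) := by
  obtain ⟨C₁, hC₁, haux⟩ := aux_bdd α β hα hβ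
  refine ⟨Real.exp (α/2) * C₁ + (2:ℝ)^β / α, by positivity, ?_⟩
  intro x hx
  have hx0 : (0:ℝ) < x := by linarith
  set m : ℝ := (x+1)/2 with hm
  have hm1 : (1:ℝ) ≤ m := by rw [hm]; linarith
  have hmx : m ≤ x := by rw [hm]; linarith
  have hm0 : (0:ℝ) < m := by linarith
  set f : ℝ → ℝ := fun ξ => ξ ^ (-β) * Real.exp (α * ξ) with hf
  have hfc : ∀ a b : ℝ, 1 ≤ a → 1 ≤ b → IntervalIntegrable f volume a b := by
    intro a b ha hb
    apply ContinuousOn.intervalIntegrable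
    apply ContinuousOn.mul
    · apply ContinuousOn.rpow_const continuousOn_id
      intro ξ hξ
      left
      have : min a b ≤ ξ := hξ.1
      have : (1:ℝ) ≤ ξ := le_trans (le_min ha hb) this
      positivity
    · exact (Real.continuous_exp.comp (by continuity)).continuousOn
  have h1m : IntervalIntegrable f volume 1 m := hfc 1 m le_rfl hm1
  have hmxI : IntervalIntegrable f volume m x := hfc m x hm1 (le_trans hm1 hmx)
  have hsplit : (∫ ξ in (1:ℝ)..x, f ξ) = (∫ ξ in (1:ℝ)..m, f ξ) + ∫ ξ in m..x, f ξ :=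
    (intervalIntegral.integral_add_adjacent_intervals h1m hmxI).symm
  -- bound A
  have hA : (∫ ξ in (1:ℝ)..m, f ξ) ≤ (m - 1) * Real.exp (α * m) := by
    have : (∫ ξ in (1:ℝ)..m, f ξ) ≤ ∫ ξ in (1:ℝ)..m, Real.exp (α * m) := by
      apply intervalIntegral.integral_mono_on hm1 h1m (intervalIntegrable_const)
      intro ξ hξ
      have h1ξ : (1:ℝ) ≤ ξ := hξ.1
      have h2 : ξ ^ (-β) ≤ 1 := Real.rpow_le_one_of_one_le_of_nonpos h1ξ (by linarith)
      have h3 : Real.exp (α * ξ) ≤ Real.exp (α * m) :=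
        Real.exp_le_exp.mpr (by nlinarith [hξ.2])
      calc f ξ = ξ ^ (-β) * Real.exp (α * ξ) := rfl
        _ ≤ 1 * Real.exp (α * m) := by
            apply mul_le_mul h2 h3 (Real.exp_pos _).le zero_le_one
        _ = Real.exp (α * m) := one_mul _
    simpa using this
  -- bound B
  have hB : (∫ ξ in m..x, f ξ) ≤ m ^ (-β) * ((Real.exp (α * x) - Real.exp (α * m)) / α) := by
    have hgc : IntervalIntegrable (fun ξ => m ^ (-β) * Real.exp (α * ξ)) volume m x := by
      apply ContinuousOn.intervalIntegrable
      exact (continuous_const.mul (Real.continuous_exp.comp (by continuity))).continuousOn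
    have hle : (∫ ξ in m..x, f ξ) ≤ ∫ ξ in m..x, m ^ (-β) * Real.exp (α * ξ) := by
      apply intervalIntegral.integral_mono_on hmx hmxI hgc
      intro ξ hξ
      have h2 : ξ ^ (-β) ≤ m ^ (-β) :=
        Real.rpow_le_rpow_of_nonpos hm0 hξ.1 (by linarith)
      exact mul_le_mul_of_nonneg_right h2 (Real.exp_pos _).le
    have hexp : (∫ ξ in m..x, Real.exp (α * ξ)) = (Real.exp (α * x) - Real.exp (α * m)) / α := by
      rw [intervalIntegral.integral_comp_mul_left Real.exp hα.ne', integral_exp]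
      rw [smul_eq_mul]
      field_simp
    rw [intervalIntegral.integral_const_mul, hexp] at hle
    exact hle
  -- combine
  have hepos : (0:ℝ) < Real.exp (-α * x) := Real.exp_pos _
  have hcomb : Real.exp (-α * x) * (∫ ξ in (1:ℝ)..x, f ξ) ≤
      Real.exp (-α * x) * ((m - 1) * Real.exp (α * m)) +
      Real.exp (-α * x) * (m ^ (-β) * ((Real.exp (α * x) - Real.exp (α * m)) / α)) := by
    rw [hsplit, mul_add]
    exact add_le_add (mul_le_mul_of_nonneg_left hA hepos.le)
      (mul_le_mul_of_nonneg_left hB hepos.le)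
  -- term 1
  have hT1 : Real.exp (-α * x) * ((m - 1) * Real.exp (α * m)) ≤
      Real.exp (α/2) * C₁ * x ^ (-β) := by
    have he : Real.exp (-α * x) * Real.exp (α * m) =
        Real.exp (α/2) * Real.exp (-(α/2) * x) := by
      rw [← Real.exp_add, ← Real.exp_add]
      congr 1
      rw [hm]; ring
    have hm1x : m - 1 ≤ x := by rw [hm]; linarith
    have hkey : x * Real.exp (-(α/2) * x) ≤ C₁ * x ^ (-β) := by
      have h := haux x hx
      have hpow : x ^ (β + 1) * x ^ (-β) = x := by
        rw [← Real.rpow_add hx0]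
        norm_num
      have := mul_le_mul_of_nonneg_right h (Real.rpow_nonneg hx0.le (-β))
      calc x * Real.exp (-(α/2) * x) = x ^ (β+1) * Real.exp (-(α/2) * x) * x ^ (-β) := by
            rw [mul_comm (x ^ (β+1)) (Real.exp (-(α/2)*x)), mul_assoc, hpow]; ring
        _ ≤ C₁ * x ^ (-β) := this
    calc Real.exp (-α * x) * ((m - 1) * Real.exp (α * m))
        = (m - 1) * (Real.exp (-α * x) * Real.exp (α * m)) := by ring
      _ = Real.exp (α/2) * ((m-1) * Real.exp (-(α/2) * x)) := by rw [he]; ring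
      _ ≤ Real.exp (α/2) * (x * Real.exp (-(α/2) * x)) := by
          apply mul_le_mul_of_nonneg_left _ (Real.exp_pos _).le
          exact mul_le_mul_of_nonneg_right hm1x (Real.exp_pos _).le
      _ ≤ Real.exp (α/2) * (C₁ * x ^ (-β)) := by
          exact mul_le_mul_of_nonneg_left hkey (Real.exp_pos _).le
      _ = Real.exp (α/2) * C₁ * x ^ (-β) := by ring
  -- term 2
  have hT2 : Real.exp (-α * x) * (m ^ (-β) * ((Real.exp (α * x) - Real.exp (α * m)) / α)) ≤
      ((2:ℝ)^β / α) * x ^ (-β) := by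
    have h1 : Real.exp (-α * x) * (Real.exp (α * x) - Real.exp (α * m)) ≤ 1 := by
      have : Real.exp (-α * x) * Real.exp (α * x) = 1 := by
        rw [← Real.exp_add]; simp
      nlinarith [Real.exp_pos (α * m), Real.exp_pos (-α * x)]
    have hmb : m ^ (-β) ≤ (2:ℝ)^β * x ^ (-β) := by
      have hx2 : x / 2 ≤ m := by rw [hm]; linarith
      have h2 : m ^ (-β) ≤ (x/2) ^ (-β) :=
        Real.rpow_le_rpow_of_nonpos (by linarith) hx2 (by linarith)
      have h3 : (x/2 : ℝ) ^ (-β) = (2:ℝ)^β * x ^ (-β) := by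
        rw [Real.div_rpow hx0.le (by norm_num), Real.rpow_neg (by norm_num : (0:ℝ) ≤ 2)]
        field_simp
      linarith
    have hmbnn : (0:ℝ) ≤ m ^ (-β) := Real.rpow_nonneg hm0.le _
    calc Real.exp (-α * x) * (m ^ (-β) * ((Real.exp (α * x) - Real.exp (α * m)) / α))
        = m ^ (-β) * (Real.exp (-α * x) * (Real.exp (α * x) - Real.exp (α * m))) / α := by
          ring
      _ ≤ m ^ (-β) * 1 / α := by
          apply div_le_div_of_nonneg_right _ hα.le  -- maybe wrong name
          exact mul_le_mul_of_nonneg_left h1 hmbnn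
      _ = m ^ (-β) / α := by ring
      _ ≤ ((2:ℝ)^β * x ^ (-β)) / α := by
          apply div_le_div_of_nonneg_right hmb hα.le
      _ = ((2:ℝ)^β / α) * x ^ (-β) := by ring
  calc Real.exp (-α * x) * (∫ ξ in (1:ℝ)..x, ξ ^ (-β) * Real.exp (α * ξ))
      ≤ Real.exp (α/2) * C₁ * x ^ (-β) + ((2:ℝ)^β / α) * x ^ (-β) := by
        exact le_trans hcomb (add_le_add hT1 hT2)
    _ = (Real.exp (α/2) * C₁ + (2:ℝ)^β / α) * x ^ (-β) := by ring
end

section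
/- Let H ∈ (0,1/2), α > 0 and σ ≠ 0. There exists a constant C > 0, depending only on H, α and σ, such that for every measurable function φ : ℝ → ℝ with −α⁻¹ ≤ φ(v) ≤ −α for all v, the function Ψ(s) := σ·𝟙_{(−∞,0]}(s)·exp(∫ₛ⁰ φ(v) dv) satisfies, for all t < 0, | ∫₀^∞ ξ^{H−3/2} (Ψ(t) − Ψ(t+ξ)) dξ | ≤ C·( (−t)^{H−1/2}·𝟙_{[−1,0)}(t) + (−t)^{H−3/2}·𝟙_{(−∞,−1)}(t) ). -/
open MeasureTheory

/-- The kernel `Ψ(s) = σ·𝟙_{(−∞,0]}(s)·exp(∫ₛ⁰ φ(v) dv)`. -/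
noncomputable def Psi (σ : ℝ) (φ : ℝ → ℝ) : ℝ → ℝ :=
  Set.indicator (Set.Iic (0:ℝ)) (fun s => σ * Real.exp (∫ v in s..(0:ℝ), φ v))

section Aux
open Set

variable {α σ : ℝ} {φ : ℝ → ℝ}


variable {α σ : ℝ} {φ : ℝ → ℝ}

lemma phi_ii (hα : 0 < α) (hφm : Measurable φ)
    (hφ : ∀ v, φ v ∈ Set.Icc (-α⁻¹) (-α)) (a b : ℝ) :
    IntervalIntegrable φ volume a b := by
  rw [intervalIntegrable_iff]
  have hconst : IntegrableOn (fun _ : ℝ => α⁻¹) (Set.uIoc a b) volume :=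
    integrableOn_const measure_Ioc_lt_top.ne
  refine hconst.mono' hφm.aestronglyMeasurable (Filter.Eventually.of_forall fun v => ?_)
  have h := hφ v
  have h1 := h.1; have h2 := h.2
  have hi : (0:ℝ) < α⁻¹ := inv_pos.2 hα
  rw [Real.norm_eq_abs, abs_le]
  constructor <;> linarith

lemma int_le (hα : 0 < α) (hφm : Measurable φ)
    (hφ : ∀ v, φ v ∈ Set.Icc (-α⁻¹) (-α)) {s u : ℝ} (h : s ≤ u) :
    ∫ v in s..u, φ v ≤ α * (s - u) := by
  calc ∫ v in s..u, φ v ≤ ∫ _ in s..u, (-α) :=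
        intervalIntegral.integral_mono_on h (phi_ii hα hφm hφ s u)
          intervalIntegrable_const (fun x _ => (hφ x).2)
    _ = α * (s - u) := by rw [intervalIntegral.integral_const]; simp [smul_eq_mul]; ring

lemma int_ge (hα : 0 < α) (hφm : Measurable φ)
    (hφ : ∀ v, φ v ∈ Set.Icc (-α⁻¹) (-α)) {s u : ℝ} (h : s ≤ u) :
    α⁻¹ * (s - u) ≤ ∫ v in s..u, φ v := by
  calc α⁻¹ * (s - u) = ∫ _ in s..u, (-α⁻¹) := by
        rw [intervalIntegral.integral_const]; simp [smul_eq_mul]; ring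
    _ ≤ ∫ v in s..u, φ v :=
        intervalIntegral.integral_mono_on h intervalIntegrable_const
          (phi_ii hα hφm hφ s u) (fun x _ => (hφ x).1)





lemma psi_eq {s : ℝ} (hs : s ≤ 0) :
    Psi σ φ s = σ * Real.exp (∫ v in s..(0:ℝ), φ v) := by
  rw [Psi, Set.indicator_of_mem (Set.mem_Iic.2 hs)]

lemma psi_zero {s : ℝ} (hs : 0 < s) : Psi σ φ s = 0 := by
  rw [Psi, Set.indicator_of_notMem (by simpa using not_le.2 hs)]

lemma psi_meas (hα : 0 < α) (hφm : Measurable φ)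
    (hφ : ∀ v, φ v ∈ Set.Icc (-α⁻¹) (-α)) : Measurable (Psi σ φ) := by
  have hcont : Continuous fun s => ∫ v in (0:ℝ)..s, φ v :=
    intervalIntegral.continuous_primitive (fun a b => phi_ii hα hφm hφ a b) 0
  have h2 : Measurable fun s => σ * Real.exp (∫ v in s..(0:ℝ), φ v) := by
    have heq : ∀ s : ℝ, (∫ v in s..(0:ℝ), φ v) = -∫ v in (0:ℝ)..s, φ v := by
      intro s; rw [intervalIntegral.integral_symm]
    have : Continuous fun s => σ * Real.exp (∫ v in s..(0:ℝ), φ v) := by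
      simp only [heq]; exact continuous_const.mul (Real.continuous_exp.comp hcont.neg)
    exact this.measurable
  exact h2.indicator measurableSet_Iic

lemma psi_diff (hα : 0 < α) (hφm : Measurable φ)
    (hφ : ∀ v, φ v ∈ Set.Icc (-α⁻¹) (-α)) {t ξ : ℝ} (ht : t ≤ 0) (hξ : 0 ≤ ξ)
    (htξ : t + ξ ≤ 0) :
    |Psi σ φ t - Psi σ φ (t + ξ)| ≤ |σ| * Real.exp (α * (t + ξ)) * min (α⁻¹ * ξ) 1 := by
  have hadd : (∫ v in t..(t+ξ), φ v) + ∫ v in (t+ξ)..(0:ℝ), φ v = ∫ v in t..(0:ℝ), φ v :=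
    intervalIntegral.integral_add_adjacent_intervals (phi_ii hα hφm hφ _ _) (phi_ii hα hφm hφ _ _)
  rw [psi_eq ht, psi_eq htξ]
  set B := ∫ v in t..(t+ξ), φ v with hBdef
  set A := ∫ v in (t+ξ)..(0:ℝ), φ v with hAdef
  have hfac : σ * Real.exp (∫ v in t..(0:ℝ), φ v) - σ * Real.exp A
      = σ * (Real.exp A * (Real.exp B - 1)) := by
    rw [← hadd, Real.exp_add]; ring
  rw [hfac, abs_mul, abs_mul]
  have hB1 : B ≤ 0 := by
    have := int_le hα hφm hφ (show t ≤ t + ξ by linarith)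
    nlinarith
  have hB2 : -(α⁻¹ * ξ) ≤ B := by
    have := int_ge hα hφm hφ (show t ≤ t + ξ by linarith)
    nlinarith [this]
  have hA : A ≤ α * (t + ξ) := by
    have := int_le hα hφm hφ (show t + ξ ≤ 0 from htξ)
    nlinarith [this]
  have h1 : |Real.exp A| ≤ Real.exp (α * (t + ξ)) := by
    rw [abs_of_pos (Real.exp_pos _)]; exact Real.exp_le_exp.2 hA
  have h2 : |Real.exp B - 1| ≤ min (α⁻¹ * ξ) 1 := by
    have hle : Real.exp B ≤ 1 := by simpa using Real.exp_le_exp.2 hB1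
    rw [abs_of_nonpos (by linarith)]
    refine le_min ?_ ?_
    · have := Real.add_one_le_exp B; linarith
    · have := Real.exp_pos B; linarith
  calc |σ| * (|Real.exp A| * |Real.exp B - 1|)
      ≤ |σ| * (Real.exp (α * (t + ξ)) * min (α⁻¹ * ξ) 1) := by
        apply mul_le_mul_of_nonneg_left _ (abs_nonneg σ)
        exact mul_le_mul h1 h2 (abs_nonneg _) (le_of_lt (Real.exp_pos _))
    _ = |σ| * Real.exp (α * (t + ξ)) * min (α⁻¹ * ξ) 1 := by ring

lemma psi_tail (hα : 0 < α) (hφm : Measurable φ)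
    (hφ : ∀ v, φ v ∈ Set.Icc (-α⁻¹) (-α)) {t ξ : ℝ} (ht : t ≤ 0) (h : 0 < t + ξ) :
    |Psi σ φ t - Psi σ φ (t + ξ)| ≤ |σ| * Real.exp (α * t) := by
  rw [psi_zero h, sub_zero, psi_eq ht, abs_mul, abs_of_pos (Real.exp_pos _)]
  apply mul_le_mul_of_nonneg_left _ (abs_nonneg σ)
  apply Real.exp_le_exp.2
  have := int_le hα hφm hφ (show t ≤ 0 from ht)
  nlinarith [this]

lemma psi_abs_le (hα : 0 < α) (hφm : Measurable φ)
    (hφ : ∀ v, φ v ∈ Set.Icc (-α⁻¹) (-α)) {s : ℝ} :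
    |Psi σ φ s| ≤ |σ| := by
  rcases le_or_gt s 0 with hs | hs
  · rw [psi_eq hs, abs_mul, abs_of_pos (Real.exp_pos _)]
    have h := int_le hα hφm hφ (show s ≤ 0 from hs)
    have : Real.exp (∫ v in s..(0:ℝ), φ v) ≤ 1 := by
      rw [← Real.exp_zero]; apply Real.exp_le_exp.2; nlinarith
    nlinarith [abs_nonneg σ]
  · rw [psi_zero hs]; simp


lemma exp_setint {α : ℝ} (hα : 0 < α) (t a b : ℝ) (hab : a ≤ b) :
    ∫ ξ in Set.Ioc a b, Real.exp (α * (t + ξ)) =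
      (Real.exp (α * (t + b)) - Real.exp (α * (t + a))) / α := by
  rw [← intervalIntegral.integral_of_le hab]
  have hderiv : ∀ ξ ∈ Set.uIcc a b,
      HasDerivAt (fun u => Real.exp (α * (t + u)) / α) (Real.exp (α * (t + ξ))) ξ := by
    intro ξ _
    have h1 : HasDerivAt (fun u : ℝ => α * (t + u)) α ξ := by
      simpa using ((hasDerivAt_id ξ).const_add t).const_mul α
    have h2 := (h1.exp).div_const α
    rw [mul_div_cancel_right₀ _ hα.ne'] at h2
    exact h2
  rw [intervalIntegral.integral_eq_sub_of_hasDerivAt hderiv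
    ((Real.continuous_exp.comp (continuous_const.mul (continuous_const.add continuous_id))).intervalIntegrable a b)]
  ring





lemma main_est {H : ℝ} (hH0 : 0 < H) (hH2 : H < 1/2) (hα : 0 < α)
    (hφm : Measurable φ) (hφ : ∀ v, φ v ∈ Set.Icc (-α⁻¹) (-α)) {t : ℝ} (ht : t < 0) :
    ∫ ξ in Set.Ioi (0:ℝ), |ξ ^ (H - 3/2) * (Psi σ φ t - Psi σ φ (t + ξ))| ≤
      |σ| * α⁻¹ * Real.exp (α * t / 2) * ((-t / 2) ^ (H + 1/2) / (H + 1/2))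
      + |σ| * (-t / 2) ^ (H - 3/2) * ((1 - Real.exp (α * t / 2)) / α)
      + |σ| * Real.exp (α * t) * ((-t) ^ (H - 1/2) / (1/2 - H)) := by
  set x := -t with hxdef
  have hx0 : 0 < x := by simp [hxdef]; linarith
  set f := fun ξ : ℝ => ξ ^ (H - 3/2) * (Psi σ φ t - Psi σ φ (t + ξ)) with hfdef
  -- a.e.-strong measurability on subsets of Ioi 0
  have hfm : ∀ S : Set ℝ, MeasurableSet S → S ⊆ Set.Ioi 0 →
      AEStronglyMeasurable (fun ξ => |f ξ|) (volume.restrict S) := by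
    intro S hSm hSsub
    have hcont : ContinuousOn (fun ξ : ℝ => ξ ^ (H - 3/2)) (Set.Ioi 0) := fun ξ hξ =>
      (Real.continuousAt_rpow_const ξ _ (Or.inl (ne_of_gt hξ))).continuousWithinAt
    have h1 : AEStronglyMeasurable (fun ξ : ℝ => ξ ^ (H - 3/2)) (volume.restrict S) :=
      ((hcont.mono hSsub).aestronglyMeasurable hSm)
    have h2 : Measurable fun ξ : ℝ => Psi σ φ t - Psi σ φ (t + ξ) :=
      measurable_const.sub ((psi_meas hα hφm hφ).comp (measurable_const.add measurable_id))
    have h3 : AEStronglyMeasurable f (volume.restrict S) := h1.mul h2.aestronglyMeasurable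
    exact h3.norm.congr (Filter.Eventually.of_forall fun ξ => Real.norm_eq_abs _)
  -- dominating functions
  set g1 := fun ξ : ℝ => |σ| * α⁻¹ * Real.exp (α * t / 2) * ξ ^ (H - 1/2) with hg1def
  set g2 := fun ξ : ℝ => |σ| * (x / 2) ^ (H - 3/2) * Real.exp (α * (t + ξ)) with hg2def
  set g3 := fun ξ : ℝ => |σ| * Real.exp (α * t) * ξ ^ (H - 3/2) with hg3def
  -- pointwise bounds
  have hb1 : ∀ ξ ∈ Set.Ioc (0:ℝ) (x/2), |f ξ| ≤ g1 ξ := by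
    intro ξ hξ
    obtain ⟨hξ0, hξ2⟩ := hξ
    have htξ : t + ξ ≤ t / 2 := by simp [hxdef] at hξ2; linarith
    have hd := psi_diff (σ := σ) hα hφm hφ (le_of_lt ht) (le_of_lt hξ0)
      (by linarith : t + ξ ≤ 0)
    have hd2 : |Psi σ φ t - Psi σ φ (t + ξ)| ≤ |σ| * Real.exp (α * t / 2) * (α⁻¹ * ξ) := by
      calc |Psi σ φ t - Psi σ φ (t + ξ)| ≤ |σ| * Real.exp (α * (t + ξ)) * min (α⁻¹ * ξ) 1 := hd
        _ ≤ |σ| * Real.exp (α * t / 2) * (α⁻¹ * ξ) := by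
            apply mul_le_mul
            · apply mul_le_mul_of_nonneg_left _ (abs_nonneg σ)
              apply Real.exp_le_exp.2; nlinarith
            · exact min_le_left _ _
            · exact le_min (by positivity) zero_le_one
            · positivity
    have hrw : ξ ^ (H - 1/2) = ξ ^ (H - 3/2) * ξ := by
      rw [show H - 1/2 = (H - 3/2) + 1 by ring, Real.rpow_add_one (ne_of_gt hξ0)]
    calc |f ξ| = ξ ^ (H - 3/2) * |Psi σ φ t - Psi σ φ (t + ξ)| := by
          rw [hfdef]; rw [abs_mul, abs_of_pos (Real.rpow_pos_of_pos hξ0 _)]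
      _ ≤ ξ ^ (H - 3/2) * (|σ| * Real.exp (α * t / 2) * (α⁻¹ * ξ)) := by
          exact mul_le_mul_of_nonneg_left hd2 (le_of_lt (Real.rpow_pos_of_pos hξ0 _))
      _ = g1 ξ := by rw [hg1def]; simp only []; rw [hrw]; ring
  have hb2 : ∀ ξ ∈ Set.Ioc (x/2) x, |f ξ| ≤ g2 ξ := by
    intro ξ hξ
    obtain ⟨hξ1, hξ2⟩ := hξ
    have hξ0 : 0 < ξ := lt_trans (by linarith) hξ1
    have htξ : t + ξ ≤ 0 := by simp [hxdef] at hξ2; linarith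
    have hd := psi_diff (σ := σ) hα hφm hφ (le_of_lt ht) (le_of_lt hξ0) htξ
    have hd2 : |Psi σ φ t - Psi σ φ (t + ξ)| ≤ |σ| * Real.exp (α * (t + ξ)) := by
      calc |Psi σ φ t - Psi σ φ (t + ξ)| ≤ |σ| * Real.exp (α * (t + ξ)) * min (α⁻¹ * ξ) 1 := hd
        _ ≤ |σ| * Real.exp (α * (t + ξ)) * 1 := by
            apply mul_le_mul_of_nonneg_left (min_le_right _ _) (by positivity)
        _ = |σ| * Real.exp (α * (t + ξ)) := mul_one _
    have hpow : ξ ^ (H - 3/2) ≤ (x/2) ^ (H - 3/2) :=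
      Real.rpow_le_rpow_of_nonpos (by linarith) (le_of_lt hξ1) (by linarith)
    calc |f ξ| = ξ ^ (H - 3/2) * |Psi σ φ t - Psi σ φ (t + ξ)| := by
          rw [hfdef]; rw [abs_mul, abs_of_pos (Real.rpow_pos_of_pos hξ0 _)]
      _ ≤ (x/2) ^ (H - 3/2) * (|σ| * Real.exp (α * (t + ξ))) := by
          apply mul_le_mul hpow hd2 (abs_nonneg _) (by positivity)
      _ = g2 ξ := by rw [hg2def]; ring
  have hb3 : ∀ ξ ∈ Set.Ioi x, |f ξ| ≤ g3 ξ := by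
    intro ξ hξ
    have hξx : x < ξ := hξ
    have hξ0 : 0 < ξ := lt_trans hx0 hξx
    have hpos : 0 < t + ξ := by simp [hxdef] at hξx; linarith
    have hd := psi_tail (σ := σ) hα hφm hφ (le_of_lt ht) hpos
    calc |f ξ| = ξ ^ (H - 3/2) * |Psi σ φ t - Psi σ φ (t + ξ)| := by
          rw [hfdef]; rw [abs_mul, abs_of_pos (Real.rpow_pos_of_pos hξ0 _)]
      _ ≤ ξ ^ (H - 3/2) * (|σ| * Real.exp (α * t)) :=
          mul_le_mul_of_nonneg_left hd (le_of_lt (Real.rpow_pos_of_pos hξ0 _))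
      _ = g3 ξ := by rw [hg3def]; ring
  -- integrability of dominators
  have hg1i : IntegrableOn g1 (Set.Ioc 0 (x/2)) volume := by
    have h := intervalIntegral.intervalIntegrable_rpow' (show (-1:ℝ) < H - 1/2 by linarith)
      (a := 0) (b := x/2)
    rw [intervalIntegrable_iff, Set.uIoc_of_le (by linarith : (0:ℝ) ≤ x/2)] at h
    exact h.const_mul _
  have hg2i : IntegrableOn g2 (Set.Ioc (x/2) x) volume := by
    apply Continuous.integrableOn_Ioc
    exact continuous_const.mul (Real.continuous_exp.comp
      (continuous_const.mul (continuous_const.add continuous_id)))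
  have hg3i : IntegrableOn g3 (Set.Ioi x) volume :=
    (integrableOn_Ioi_rpow_of_lt (by linarith : H - 3/2 < -1) hx0).const_mul _
  -- integrability of |f| on the pieces
  have habs : ∀ ξ : ℝ, ‖|f ξ|‖ = |f ξ| := fun ξ => by rw [Real.norm_eq_abs, abs_abs]
  have hI1 : IntegrableOn (fun ξ => |f ξ|) (Set.Ioc 0 (x/2)) volume := by
    refine hg1i.mono' (hfm _ measurableSet_Ioc fun ξ hξ => hξ.1) ?_
    rw [ae_restrict_iff' measurableSet_Ioc]
    exact Filter.Eventually.of_forall fun ξ hξ => by rw [habs]; exact hb1 ξ hξ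
  have hI2 : IntegrableOn (fun ξ => |f ξ|) (Set.Ioc (x/2) x) volume := by
    refine hg2i.mono' (hfm _ measurableSet_Ioc fun ξ hξ => lt_trans (by linarith) hξ.1) ?_
    rw [ae_restrict_iff' measurableSet_Ioc]
    exact Filter.Eventually.of_forall fun ξ hξ => by rw [habs]; exact hb2 ξ hξ
  have hI3 : IntegrableOn (fun ξ => |f ξ|) (Set.Ioi x) volume := by
    refine hg3i.mono' (hfm _ measurableSet_Ioi fun ξ hξ => lt_trans hx0 hξ) ?_
    rw [ae_restrict_iff' measurableSet_Ioi]
    exact Filter.Eventually.of_forall fun ξ hξ => by rw [habs]; exact hb3 ξ hξ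
  -- splitting
  have hsplit1 : Set.Ioc (0:ℝ) (x/2) ∪ Set.Ioc (x/2) x = Set.Ioc 0 x :=
    Set.Ioc_union_Ioc_eq_Ioc (by linarith) (by linarith)
  have hsplit2 : Set.Ioc (0:ℝ) x ∪ Set.Ioi x = Set.Ioi 0 :=
    Set.Ioc_union_Ioi_eq_Ioi (le_of_lt hx0)
  have hsum : ∫ ξ in Set.Ioi (0:ℝ), |f ξ| =
      (∫ ξ in Set.Ioc (0:ℝ) (x/2), |f ξ|) + (∫ ξ in Set.Ioc (x/2) x, |f ξ|)
        + ∫ ξ in Set.Ioi x, |f ξ| := by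
    rw [← hsplit2, setIntegral_union Set.Ioc_disjoint_Ioi_same measurableSet_Ioi
      (by rw [← hsplit1]; exact hI1.union hI2) hI3, ← hsplit1,
      setIntegral_union (Set.Ioc_disjoint_Ioc_of_le le_rfl) measurableSet_Ioc hI1 hI2]
  rw [hsum]
  -- bound each piece
  have hp1 : (∫ ξ in Set.Ioc (0:ℝ) (x/2), |f ξ|) ≤
      |σ| * α⁻¹ * Real.exp (α * t / 2) * ((x/2) ^ (H + 1/2) / (H + 1/2)) := by
    calc (∫ ξ in Set.Ioc (0:ℝ) (x/2), |f ξ|) ≤ ∫ ξ in Set.Ioc (0:ℝ) (x/2), g1 ξ :=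
        setIntegral_mono_on hI1 hg1i measurableSet_Ioc hb1
      _ = |σ| * α⁻¹ * Real.exp (α * t / 2) * ∫ ξ in Set.Ioc (0:ℝ) (x/2), ξ ^ (H - 1/2) := by
        rw [hg1def, integral_const_mul]
      _ = |σ| * α⁻¹ * Real.exp (α * t / 2) * ((x/2) ^ (H + 1/2) / (H + 1/2)) := by
        congr 1
        rw [← intervalIntegral.integral_of_le (by linarith : (0:ℝ) ≤ x/2),
          integral_rpow (Or.inl (by linarith : (-1:ℝ) < H - 1/2)),
          show H - 1/2 + 1 = H + 1/2 by ring,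
          Real.zero_rpow (by linarith : H + 1/2 ≠ 0)]
        ring
  have hp2 : (∫ ξ in Set.Ioc (x/2) x, |f ξ|) ≤
      |σ| * (x/2) ^ (H - 3/2) * ((1 - Real.exp (α * t / 2)) / α) := by
    calc (∫ ξ in Set.Ioc (x/2) x, |f ξ|) ≤ ∫ ξ in Set.Ioc (x/2) x, g2 ξ :=
        setIntegral_mono_on hI2 hg2i measurableSet_Ioc hb2
      _ = |σ| * (x/2) ^ (H - 3/2) * ∫ ξ in Set.Ioc (x/2) x, Real.exp (α * (t + ξ)) := by
        rw [hg2def, integral_const_mul]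
      _ = |σ| * (x/2) ^ (H - 3/2) * ((1 - Real.exp (α * t / 2)) / α) := by
        congr 1
        rw [exp_setint hα t (x/2) x (by linarith)]
        rw [show α * (t + x) = 0 by rw [hxdef]; ring, show α * (t + x/2) = α * t / 2 by
          rw [hxdef]; ring, Real.exp_zero]
  have hp3 : (∫ ξ in Set.Ioi x, |f ξ|) ≤
      |σ| * Real.exp (α * t) * (x ^ (H - 1/2) / (1/2 - H)) := by
    calc (∫ ξ in Set.Ioi x, |f ξ|) ≤ ∫ ξ in Set.Ioi x, g3 ξ :=
        setIntegral_mono_on hI3 hg3i measurableSet_Ioi hb3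
      _ = |σ| * Real.exp (α * t) * ∫ ξ in Set.Ioi x, ξ ^ (H - 3/2) := by
        rw [hg3def, integral_const_mul]
      _ = |σ| * Real.exp (α * t) * (x ^ (H - 1/2) / (1/2 - H)) := by
        congr 1
        rw [integral_Ioi_rpow_of_lt (by linarith : H - 3/2 < -1) hx0,
          show H - 3/2 + 1 = H - 1/2 by ring,
          show (1:ℝ)/2 - H = -(H - 1/2) by ring, div_neg, neg_div]
  have hfin := add_le_add (add_le_add hp1 hp2) hp3
  exact hfin


lemma xexp_le {c x : ℝ} (hc : 0 < c) (hx : 0 ≤ x) : x * Real.exp (-(c*x)) ≤ c⁻¹ := by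
  have hz := Real.add_one_le_exp (c*x)
  have hmul : Real.exp (-(c*x)) * Real.exp (c*x) = 1 := by
    rw [← Real.exp_add]; simp
  have hp := Real.exp_pos (-(c*x))
  have hp2 := Real.exp_pos (c*x)
  have hcc : c * c⁻¹ = 1 := mul_inv_cancel₀ hc.ne'
  nlinarith [mul_le_mul_of_nonneg_right hz hp.le, mul_pos hc hp]

lemma two_rpow_le {y : ℝ} (hy : y ≤ 1) : (2:ℝ) ^ y ≤ 2 := by
  calc (2:ℝ) ^ y ≤ (2:ℝ) ^ (1:ℝ) := Real.rpow_le_rpow_of_exponent_le one_le_two hy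
    _ = 2 := Real.rpow_one 2

lemma two_rpow_le' {y : ℝ} (hy : y ≤ 2) : (2:ℝ) ^ y ≤ 4 := by
  calc (2:ℝ) ^ y ≤ (2:ℝ) ^ (2:ℝ) := Real.rpow_le_rpow_of_exponent_le one_le_two hy
    _ = 4 := by rw [Real.rpow_two]; norm_num

lemma half_rpow {z : ℝ} : ((1:ℝ)/2) ^ z = (2:ℝ) ^ (-z) := by
  rw [one_div, Real.inv_rpow (by norm_num : (0:ℝ) ≤ 2), ← Real.rpow_neg (by norm_num : (0:ℝ) ≤ 2)]

section
variable {H α σ t : ℝ}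

lemma sumA (hH0 : 0 < H) (hH2 : H < 1/2) (hα : 0 < α) (ht : t < 0) :
    |σ| * α⁻¹ * Real.exp (α * t / 2) * ((-t / 2) ^ (H + 1/2) / (H + 1/2))
    + |σ| * (-t / 2) ^ (H - 3/2) * ((1 - Real.exp (α * t / 2)) / α)
    + |σ| * Real.exp (α * t) * ((-t) ^ (H - 1/2) / (1/2 - H))
    ≤ |σ| * (4 * α⁻¹ * α⁻¹ + 2 + (1/2 - H)⁻¹) * (-t) ^ (H - 1/2) := by
  set x := -t with hxdef
  have hx0 : 0 < x := by simp only [hxdef]; linarith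
  set P1 := x ^ (H - 1/2) with hP1def
  have hP1 : 0 < P1 := Real.rpow_pos_of_pos hx0 _
  set q1 := (x/2) ^ (H + 1/2) with hq1def
  set q3 := (x/2) ^ (H - 3/2) with hq3def
  have hq1 : 0 < q1 := Real.rpow_pos_of_pos (by linarith) _
  have hq3 : 0 < q3 := Real.rpow_pos_of_pos (by linarith) _
  set E2 := Real.exp (α * t / 2) with hE2def
  set E1 := Real.exp (α * t) with hE1def
  have hE2p : 0 < E2 := Real.exp_pos _
  have hE1p : 0 < E1 := Real.exp_pos _
  have hE1le : E1 ≤ 1 := by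
    rw [hE1def, ← Real.exp_zero]; exact Real.exp_le_exp.2 (by nlinarith)
  have hE2le : E2 ≤ 1 := by
    rw [hE2def, ← Real.exp_zero]; exact Real.exp_le_exp.2 (by nlinarith)
  have hσ0 : (0:ℝ) ≤ |σ| := abs_nonneg σ
  have hαi : (0:ℝ) < α⁻¹ := inv_pos.2 hα
  -- x * E2 ≤ 2/α
  have hxE2 : x * E2 ≤ 2 * α⁻¹ := by
    have h := xexp_le (show (0:ℝ) < α/2 by linarith) hx0.le
    have he : Real.exp (-(α/2*x)) = E2 := by
      rw [hE2def]; congr 1; rw [hxdef]; ring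
    rw [he] at h
    calc x * E2 ≤ (α/2)⁻¹ := h
      _ = 2 * α⁻¹ := by field_simp
  -- F1
  have hF1 : q1 ≤ P1 * x := by
    have h1 : q1 ≤ x ^ (H + 1/2) :=
      Real.rpow_le_rpow (by linarith) (by linarith) (by linarith)
    have h2 : x ^ (H + 1/2) = P1 * x := by
      rw [hP1def, show H + 1/2 = (H - 1/2) + 1 by ring, Real.rpow_add_one hx0.ne']
    exact le_of_le_of_eq h1 h2
  -- F4
  have hF4 : (x/2) ^ (H - 1/2) ≤ 2 * P1 := by
    have hmul : (x/2) ^ (H - 1/2) = P1 * ((1:ℝ)/2) ^ (H - 1/2) := by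
      rw [show (x/2 : ℝ) = x * (1/2) by ring, Real.mul_rpow hx0.le (by norm_num), hP1def]
    rw [hmul, half_rpow]
    have h2 : (2:ℝ) ^ (-(H - 1/2)) ≤ 2 := two_rpow_le (by linarith)
    nlinarith [Real.rpow_pos_of_pos (show (0:ℝ) < 2 by norm_num) (-(H - 1/2))]
  -- F6 : q3 * (x/2) = (x/2)^(H-1/2)
  have hF6 : q3 * (x/2) = (x/2) ^ (H - 1/2) := by
    rw [hq3def, ← Real.rpow_add_one (show (x/2 : ℝ) ≠ 0 by positivity),
      show H - 3/2 + 1 = H - 1/2 by ring]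
  -- bound 1
  have hb1 : |σ| * α⁻¹ * E2 * (q1 / (H + 1/2)) ≤ |σ| * (4 * α⁻¹ * α⁻¹) * P1 := by
    have e0 : q1 / (H + 1/2) ≤ 2 * q1 := by
      rw [div_le_iff₀ (by linarith : (0:ℝ) < H + 1/2)]
      nlinarith
    have e1 : q1 / (H + 1/2) ≤ 2 * (P1 * x) :=
      e0.trans (by linarith : 2 * q1 ≤ 2 * (P1 * x))
    calc |σ| * α⁻¹ * E2 * (q1 / (H + 1/2)) ≤ |σ| * α⁻¹ * E2 * (2 * (P1 * x)) :=
          mul_le_mul_of_nonneg_left e1 (mul_nonneg (mul_nonneg hσ0 hαi.le) hE2p.le)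
      _ = (2 * |σ| * α⁻¹ * P1) * (x * E2) := by ring
      _ ≤ (2 * |σ| * α⁻¹ * P1) * (2 * α⁻¹) := by
          apply mul_le_mul_of_nonneg_left hxE2
          have := mul_nonneg (mul_nonneg hσ0 hαi.le) hP1.le
          linarith
      _ = |σ| * (4 * α⁻¹ * α⁻¹) * P1 := by ring
  -- bound 2
  have h1mE2 : (1 - E2) / α ≤ x / 2 := by
    rw [div_le_iff₀ hα]
    have h := Real.add_one_le_exp (α * t / 2)
    rw [← hE2def] at h
    have hax : x / 2 * α = -(α * t) / 2 := by rw [hxdef]; ring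
    linarith
  have h1mE2' : 0 ≤ (1 - E2) / α := div_nonneg (by linarith) hα.le
  have hb2 : |σ| * q3 * ((1 - E2) / α) ≤ |σ| * 2 * P1 := by
    calc |σ| * q3 * ((1 - E2) / α) ≤ |σ| * q3 * (x / 2) :=
          mul_le_mul_of_nonneg_left h1mE2 (mul_nonneg hσ0 hq3.le)
      _ = |σ| * (q3 * (x/2)) := by ring
      _ = |σ| * ((x/2) ^ (H - 1/2)) := by rw [hF6]
      _ ≤ |σ| * (2 * P1) := mul_le_mul_of_nonneg_left hF4 hσ0
      _ = |σ| * 2 * P1 := by ring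
  -- bound 3
  have hb3 : |σ| * E1 * (P1 / (1/2 - H)) ≤ |σ| * (1/2 - H)⁻¹ * P1 := by
    have hhp : (0:ℝ) < (1/2 - H)⁻¹ := by rw [inv_pos]; linarith
    calc |σ| * E1 * (P1 / (1/2 - H)) ≤ |σ| * 1 * (P1 / (1/2 - H)) :=
          mul_le_mul_of_nonneg_right
            (mul_le_mul_of_nonneg_left hE1le hσ0) (div_nonneg hP1.le (by linarith))
      _ = |σ| * (1/2 - H)⁻¹ * P1 := by rw [div_eq_mul_inv]; ring
  calc |σ| * α⁻¹ * E2 * (q1 / (H + 1/2)) + |σ| * q3 * ((1 - E2) / α)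
        + |σ| * E1 * (P1 / (1/2 - H))
      ≤ |σ| * (4 * α⁻¹ * α⁻¹) * P1 + |σ| * 2 * P1 + |σ| * (1/2 - H)⁻¹ * P1 := by
        linarith
    _ = |σ| * (4 * α⁻¹ * α⁻¹ + 2 + (1/2 - H)⁻¹) * P1 := by ring
end

section
variable {H α σ t : ℝ}

lemma sumB (hH0 : 0 < H) (hH2 : H < 1/2) (hα : 0 < α) (ht : t < 0) :
    |σ| * α⁻¹ * Real.exp (α * t / 2) * ((-t / 2) ^ (H + 1/2) / (H + 1/2))
    + |σ| * (-t / 2) ^ (H - 3/2) * ((1 - Real.exp (α * t / 2)) / α)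
    + |σ| * Real.exp (α * t) * ((-t) ^ (H - 1/2) / (1/2 - H))
    ≤ |σ| * (32 * α⁻¹ * α⁻¹ * α⁻¹ + 4 * α⁻¹ + (1/2 - H)⁻¹ * α⁻¹) * (-t) ^ (H - 3/2) := by
  set x := -t with hxdef
  have hx0 : 0 < x := by simp only [hxdef]; linarith
  set P1 := x ^ (H - 1/2) with hP1def
  set P3 := x ^ (H - 3/2) with hP3def
  have hP1 : 0 < P1 := Real.rpow_pos_of_pos hx0 _
  have hP3 : 0 < P3 := Real.rpow_pos_of_pos hx0 _
  have hP13 : P1 = P3 * x := by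
    rw [hP1def, hP3def, show H - 1/2 = (H - 3/2) + 1 by ring, Real.rpow_add_one hx0.ne']
  set q1 := (x/2) ^ (H + 1/2) with hq1def
  set q3 := (x/2) ^ (H - 3/2) with hq3def
  have hq1 : 0 < q1 := Real.rpow_pos_of_pos (by linarith) _
  have hq3 : 0 < q3 := Real.rpow_pos_of_pos (by linarith) _
  set E2 := Real.exp (α * t / 2) with hE2def
  set E1 := Real.exp (α * t) with hE1def
  have hE2p : 0 < E2 := Real.exp_pos _
  have hE1p : 0 < E1 := Real.exp_pos _
  have hE1le : E1 ≤ 1 := by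
    rw [hE1def, ← Real.exp_zero]; exact Real.exp_le_exp.2 (by nlinarith)
  have hE2le : E2 ≤ 1 := by
    rw [hE2def, ← Real.exp_zero]; exact Real.exp_le_exp.2 (by nlinarith)
  have hσ0 : (0:ℝ) ≤ |σ| := abs_nonneg σ
  have hαi : (0:ℝ) < α⁻¹ := inv_pos.2 hα
  have hhp : (0:ℝ) < (1/2 - H)⁻¹ := by rw [inv_pos]; linarith
  -- x * E1 ≤ α⁻¹
  have hxE1 : x * E1 ≤ α⁻¹ := by
    have h := xexp_le hα hx0.le
    have he : Real.exp (-(α*x)) = E1 := by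
      rw [hE1def]; congr 1; rw [hxdef]; ring
    rw [he] at h; exact h
  -- x * x * E2 ≤ 16 * α⁻¹ * α⁻¹
  have hxxE2 : x * x * E2 ≤ 16 * α⁻¹ * α⁻¹ := by
    set E4 := Real.exp (α * t / 4) with hE4def
    have hE4p : 0 < E4 := Real.exp_pos _
    have h4 : x * E4 ≤ 4 * α⁻¹ := by
      have h := xexp_le (show (0:ℝ) < α/4 by linarith) hx0.le
      have he : Real.exp (-(α/4*x)) = E4 := by
        rw [hE4def]; congr 1; rw [hxdef]; ring
      rw [he] at h
      calc x * E4 ≤ (α/4)⁻¹ := h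
        _ = 4 * α⁻¹ := by field_simp
    have hE42 : E4 * E4 = E2 := by
      rw [hE4def, hE2def, ← Real.exp_add]; congr 1; ring
    have hx4 : 0 ≤ x * E4 := mul_nonneg hx0.le hE4p.le
    calc x * x * E2 = (x * E4) * (x * E4) := by rw [← hE42]; ring
      _ ≤ (4 * α⁻¹) * (4 * α⁻¹) := mul_le_mul h4 h4 hx4 (by linarith)
      _ = 16 * α⁻¹ * α⁻¹ := by ring
  -- F1
  have hF1 : q1 ≤ P1 * x := by
    have h1 : q1 ≤ x ^ (H + 1/2) :=
      Real.rpow_le_rpow (by linarith) (by linarith) (by linarith)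
    have h2 : x ^ (H + 1/2) = P1 * x := by
      rw [hP1def, show H + 1/2 = (H - 1/2) + 1 by ring, Real.rpow_add_one hx0.ne']
    exact le_of_le_of_eq h1 h2
  -- F5 : q3 ≤ 4 * P3
  have hF5 : q3 ≤ 4 * P3 := by
    have hmul : q3 = P3 * ((1:ℝ)/2) ^ (H - 3/2) := by
      rw [hq3def, show (x/2 : ℝ) = x * (1/2) by ring,
        Real.mul_rpow hx0.le (by norm_num), hP3def]
    rw [hmul, half_rpow]
    have h2 : (2:ℝ) ^ (-(H - 3/2)) ≤ 4 := two_rpow_le' (by linarith)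
    nlinarith [Real.rpow_pos_of_pos (show (0:ℝ) < 2 by norm_num) (-(H - 3/2))]
  -- bound 1
  have hb1 : |σ| * α⁻¹ * E2 * (q1 / (H + 1/2)) ≤ |σ| * (32 * α⁻¹ * α⁻¹ * α⁻¹) * P3 := by
    have e0 : q1 / (H + 1/2) ≤ 2 * q1 := by
      rw [div_le_iff₀ (by linarith : (0:ℝ) < H + 1/2)]
      nlinarith
    have e1 : q1 / (H + 1/2) ≤ 2 * (P3 * (x * x)) := by
      refine e0.trans ?_
      have : P1 * x = P3 * (x * x) := by rw [hP13]; ring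
      linarith [hF1, this]
    calc |σ| * α⁻¹ * E2 * (q1 / (H + 1/2)) ≤ |σ| * α⁻¹ * E2 * (2 * (P3 * (x * x))) :=
          mul_le_mul_of_nonneg_left e1 (mul_nonneg (mul_nonneg hσ0 hαi.le) hE2p.le)
      _ = (2 * |σ| * α⁻¹ * P3) * (x * x * E2) := by ring
      _ ≤ (2 * |σ| * α⁻¹ * P3) * (16 * α⁻¹ * α⁻¹) := by
          apply mul_le_mul_of_nonneg_left hxxE2
          have := mul_nonneg (mul_nonneg hσ0 hαi.le) hP3.le
          linarith
      _ = |σ| * (32 * α⁻¹ * α⁻¹ * α⁻¹) * P3 := by ring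
  -- bound 2
  have hb2 : |σ| * q3 * ((1 - E2) / α) ≤ |σ| * (4 * α⁻¹) * P3 := by
    have h1 : (1 - E2) / α ≤ α⁻¹ := by
      rw [div_le_iff₀ hα]
      have h2 : α⁻¹ * α = 1 := inv_mul_cancel₀ hα.ne'
      linarith
    calc |σ| * q3 * ((1 - E2) / α) ≤ |σ| * q3 * α⁻¹ :=
          mul_le_mul_of_nonneg_left h1 (mul_nonneg hσ0 hq3.le)
      _ ≤ |σ| * (4 * P3) * α⁻¹ := by
          apply mul_le_mul_of_nonneg_right _ hαi.le
          exact mul_le_mul_of_nonneg_left hF5 hσ0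
      _ = |σ| * (4 * α⁻¹) * P3 := by ring
  -- bound 3
  have hb3 : |σ| * E1 * (P1 / (1/2 - H)) ≤ |σ| * ((1/2 - H)⁻¹ * α⁻¹) * P3 := by
    have h1 : |σ| * E1 * (P1 / (1/2 - H)) = (|σ| * (1/2 - H)⁻¹ * P3) * (x * E1) := by
      rw [hP13, div_eq_mul_inv]; ring
    rw [h1]
    calc (|σ| * (1/2 - H)⁻¹ * P3) * (x * E1) ≤ (|σ| * (1/2 - H)⁻¹ * P3) * α⁻¹ := by
          apply mul_le_mul_of_nonneg_left hxE1
          exact mul_nonneg (mul_nonneg hσ0 hhp.le) hP3.le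
      _ = |σ| * ((1/2 - H)⁻¹ * α⁻¹) * P3 := by ring
  calc |σ| * α⁻¹ * E2 * (q1 / (H + 1/2)) + |σ| * q3 * ((1 - E2) / α)
        + |σ| * E1 * (P1 / (1/2 - H))
      ≤ |σ| * (32 * α⁻¹ * α⁻¹ * α⁻¹) * P3 + |σ| * (4 * α⁻¹) * P3
        + |σ| * ((1/2 - H)⁻¹ * α⁻¹) * P3 := by linarith
    _ = |σ| * (32 * α⁻¹ * α⁻¹ * α⁻¹ + 4 * α⁻¹ + (1/2 - H)⁻¹ * α⁻¹) * P3 := by ring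
end

end Aux


theorem stmt5 (H α σ : ℝ) (hH : H ∈ Set.Ioo (0:ℝ) (1/2)) (hα : 0 < α) (hσ : σ ≠ 0) :
    ∃ C : ℝ, 0 < C ∧ ∀ φ : ℝ → ℝ, Measurable φ →
      (∀ v : ℝ, φ v ∈ Set.Icc (-α⁻¹) (-α)) → ∀ t : ℝ, t < 0 →
      |∫ ξ in Set.Ioi (0:ℝ), ξ ^ (H - 3/2) * (Psi σ φ t - Psi σ φ (t + ξ))| ≤
        C * ((-t) ^ (H - 1/2) * Set.indicator (Set.Ico (-1:ℝ) 0) (fun _ => (1:ℝ)) t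
          + (-t) ^ (H - 3/2) * Set.indicator (Set.Iio (-1:ℝ)) (fun _ => (1:ℝ)) t) := by
  obtain ⟨hH0, hH2⟩ := hH
  have hσ0 : (0:ℝ) < |σ| := abs_pos.2 hσ
  have hαi : (0:ℝ) < α⁻¹ := inv_pos.2 hα
  have hhp : (0:ℝ) < (1/2 - H)⁻¹ := by rw [inv_pos]; linarith
  set cA := |σ| * (4 * α⁻¹ * α⁻¹ + 2 + (1/2 - H)⁻¹) with hcAdef
  set cB := |σ| * (32 * α⁻¹ * α⁻¹ * α⁻¹ + 4 * α⁻¹ + (1/2 - H)⁻¹ * α⁻¹) with hcBdef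
  have hcA : 0 < cA := by
    apply mul_pos hσ0
    have h1 : 0 < 4 * α⁻¹ * α⁻¹ := by positivity
    linarith
  have hcB : 0 < cB := by
    apply mul_pos hσ0
    have h1 : 0 < 32 * α⁻¹ * α⁻¹ * α⁻¹ := by positivity
    have h2 : 0 < 4 * α⁻¹ := by positivity
    have h3 : 0 < (1/2 - H)⁻¹ * α⁻¹ := by positivity
    linarith
  refine ⟨cA + cB, by linarith, ?_⟩
  intro φ hφm hφ t ht
  have habs : |∫ ξ in Set.Ioi (0:ℝ), ξ ^ (H - 3/2) * (Psi σ φ t - Psi σ φ (t + ξ))| ≤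
      ∫ ξ in Set.Ioi (0:ℝ), |ξ ^ (H - 3/2) * (Psi σ φ t - Psi σ φ (t + ξ))| := by
    simpa only [Real.norm_eq_abs] using
      norm_integral_le_integral_norm (μ := volume.restrict (Set.Ioi (0:ℝ)))
        (fun ξ : ℝ => ξ ^ (H - 3/2) * (Psi σ φ t - Psi σ φ (t + ξ)))
  have hkey := main_est (σ := σ) hH0 hH2 hα hφm hφ ht
  rcases lt_or_ge t (-1) with hc | hc
  · rw [Set.indicator_of_notMem (fun h => absurd h.1 (by linarith)),
      Set.indicator_of_mem (Set.mem_Iio.2 hc)]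
    have hsB := sumB (σ := σ) hH0 hH2 hα ht
    have hpow : (0:ℝ) < (-t) ^ (H - 3/2) := Real.rpow_pos_of_pos (by linarith) _
    have hstep : cB * (-t) ^ (H - 3/2) ≤ (cA + cB) * (-t) ^ (H - 3/2) :=
      mul_le_mul_of_nonneg_right (by linarith) hpow.le
    calc |∫ ξ in Set.Ioi (0:ℝ), ξ ^ (H - 3/2) * (Psi σ φ t - Psi σ φ (t + ξ))|
        ≤ ∫ ξ in Set.Ioi (0:ℝ), |ξ ^ (H - 3/2) * (Psi σ φ t - Psi σ φ (t + ξ))| := habs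
      _ ≤ _ := hkey
      _ ≤ cB * (-t) ^ (H - 3/2) := hsB
      _ ≤ (cA + cB) * (-t) ^ (H - 3/2) := hstep
      _ = (cA + cB) * ((-t) ^ (H - 1/2) * 0 + (-t) ^ (H - 3/2) * 1) := by ring
  · rw [Set.indicator_of_mem (Set.mem_Ico.2 ⟨hc, ht⟩),
      Set.indicator_of_notMem (fun h => absurd (Set.mem_Iio.1 h) (by linarith))]
    have hsA := sumA (σ := σ) hH0 hH2 hα ht
    have hpow : (0:ℝ) < (-t) ^ (H - 1/2) := Real.rpow_pos_of_pos (by linarith) _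
    have hstep : cA * (-t) ^ (H - 1/2) ≤ (cA + cB) * (-t) ^ (H - 1/2) :=
      mul_le_mul_of_nonneg_right (by linarith) hpow.le
    calc |∫ ξ in Set.Ioi (0:ℝ), ξ ^ (H - 3/2) * (Psi σ φ t - Psi σ φ (t + ξ))|
        ≤ ∫ ξ in Set.Ioi (0:ℝ), |ξ ^ (H - 3/2) * (Psi σ φ t - Psi σ φ (t + ξ))| := habs
      _ ≤ _ := hkey
      _ ≤ cA * (-t) ^ (H - 1/2) := hsA
      _ ≤ (cA + cB) * (-t) ^ (H - 1/2) := hstep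
      _ = (cA + cB) * ((-t) ^ (H - 1/2) * 1 + (-t) ^ (H - 3/2) * 0) := by ring
end

section
/- Let H ∈ (0,1/2), α > 0 and σ ≠ 0. There exists a constant C > 0, depending only on H, α and σ, such that the following holds. For any measurable functions φ, ψ : ℝ → ℝ with values in [−α⁻¹, −α], and any t ≥ 1, set Φ_t(s) := σ·𝟙_{(−∞,t]}(s)·exp(∫ₛᵗ φ(v)dv) and Ψ(s) := σ·𝟙_{(−∞,0]}(s)·exp(∫ₛ⁰ ψ(v)dv), and let G_t(s) := ∫₀^∞ ξ^{H−3/2}(Φ_t(s) − Φ_t(s+ξ)) dξ and G₀(s) := ∫₀^∞ ξ^{H−3/2}(Ψ(s) − Ψ(s+ξ)) dξ. Then ∫_{−∞}^0 |G_t(s)|·|G₀(s)| ds ≤ C·t^{H−3/2}. -/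
open MeasureTheory

/-- The kernel `Φ_t(s) = σ·𝟙_{(−∞,t]}(s)·exp(∫ₛᵗ φ(v) dv)`. -/
noncomputable def PhiT (σ : ℝ) (φ : ℝ → ℝ) (t : ℝ) : ℝ → ℝ :=
  Set.indicator (Set.Iic t) (fun s => σ * Real.exp (∫ v in s..t, φ v))

/-- The Marchaud-type fractional derivative `s ↦ ∫₀^∞ ξ^{H−3/2}(f(s) − f(s+ξ)) dξ`. -/
noncomputable def marchaud (H : ℝ) (f : ℝ → ℝ) (s : ℝ) : ℝ :=
  ∫ ξ in Set.Ioi (0:ℝ), ξ ^ (H - 3/2) * (f s - f (s + ξ))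

open Set Real

section aux
variable {α : ℝ} {φ : ℝ → ℝ}

lemma aux_ii (hα : 0 < α) (hφm : Measurable φ)
    (hφb : ∀ v, φ v ∈ Set.Icc (-α⁻¹) (-α)) (a b : ℝ) :
    IntervalIntegrable φ volume a b := by
  rw [intervalIntegrable_iff]
  apply Measure.integrableOn_of_bounded (M := α⁻¹) measure_Ioc_lt_top.ne
    hφm.aestronglyMeasurable
  refine ae_of_all _ fun x => ?_
  have h1 := (hφb x).1
  have h2 := (hφb x).2
  have h3 : 0 < α⁻¹ := inv_pos.2 hα
  rw [Real.norm_eq_abs, abs_le]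
  constructor <;> nlinarith

lemma aux_int_upper (hα : 0 < α) (hφm : Measurable φ)
    (hφb : ∀ v, φ v ∈ Set.Icc (-α⁻¹) (-α)) {a b : ℝ} (hab : a ≤ b) :
    (∫ v in a..b, φ v) ≤ (b - a) * (-α) := by
  have := intervalIntegral.integral_mono_on (μ := volume) hab
    (aux_ii hα hφm hφb a b) intervalIntegrable_const (fun x _ => (hφb x).2)
  simpa [intervalIntegral.integral_const, smul_eq_mul] using this

lemma aux_int_lower (hα : 0 < α) (hφm : Measurable φ)
    (hφb : ∀ v, φ v ∈ Set.Icc (-α⁻¹) (-α)) {a b : ℝ} (hab : a ≤ b) :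
    (b - a) * (-α⁻¹) ≤ ∫ v in a..b, φ v := by
  have := intervalIntegral.integral_mono_on (μ := volume) hab
    intervalIntegrable_const (aux_ii hα hφm hφb a b) (fun x _ => (hφb x).1)
  simpa [intervalIntegral.integral_const, smul_eq_mul] using this

end aux

section kernel
variable {α σ : ℝ} {φ : ℝ → ℝ}

lemma min_le_sqrt {x : ℝ} (hx : 0 ≤ x) : min 1 x ≤ Real.sqrt x := by
  rcases le_total x 1 with h | h
  · rw [min_eq_right h]
    nlinarith [Real.sq_sqrt hx, Real.sqrt_nonneg x, Real.sqrt_le_sqrt h,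
      Real.sqrt_one]
  · rw [min_eq_left h]
    rw [show (1:ℝ) = Real.sqrt 1 from (Real.sqrt_one).symm]
    exact Real.sqrt_le_sqrt h

lemma kb1 (hα : 0 < α) (hφm : Measurable φ)
    (hφb : ∀ v, φ v ∈ Set.Icc (-α⁻¹) (-α)) {s t ξ : ℝ} (hξ : 0 < ξ)
    (h : s + ξ ≤ t) :
    |PhiT σ φ t s - PhiT σ φ t (s + ξ)| ≤
      |σ| * Real.exp (-(α * (t - s - ξ))) * min 1 (ξ * α⁻¹) := by
  have hs : s ∈ Set.Iic t := by simp only [Set.mem_Iic]; linarith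
  have hs' : s + ξ ∈ Set.Iic t := h
  rw [PhiT, Set.indicator_of_mem hs, Set.indicator_of_mem hs']
  set A := ∫ v in s..t, φ v with hA
  set B := ∫ v in (s+ξ)..t, φ v with hB
  set I := ∫ v in s..(s+ξ), φ v with hI
  have hadd : I + B = A := intervalIntegral.integral_add_adjacent_intervals
    (aux_ii hα hφm hφb _ _) (aux_ii hα hφm hφb _ _)
  have hIle : I ≤ 0 := by
    have := aux_int_upper hα hφm hφb (by linarith : s ≤ s + ξ)
    nlinarith
  have hIge : -(ξ * α⁻¹) ≤ I := by
    have := aux_int_lower hα hφm hφb (by linarith : s ≤ s + ξ)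
    have h2 : (s + ξ - s) * (-α⁻¹) = -(ξ * α⁻¹) := by ring
    linarith [h2 ▸ this]
  have hBle : B ≤ -(α * (t - s - ξ)) := by
    have := aux_int_upper hα hφm hφb (h : s + ξ ≤ t)
    nlinarith
  have key : σ * Real.exp A - σ * Real.exp B = σ * Real.exp B * (Real.exp I - 1) := by
    rw [← hadd, Real.exp_add]; ring
  rw [key, abs_mul, abs_mul]
  have h1 : |Real.exp I - 1| ≤ min 1 (ξ * α⁻¹) := by
    rw [abs_sub_comm, abs_of_nonneg (by nlinarith [Real.exp_le_exp.2 hIle, Real.exp_zero] : (0:ℝ) ≤ 1 - Real.exp I)]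
    rcases le_total 1 (ξ * α⁻¹) with hc | hc
    · rw [min_eq_left hc]; nlinarith [Real.exp_pos I]
    · rw [min_eq_right hc]
      nlinarith [Real.add_one_le_exp I]
  have h2 : |Real.exp B| ≤ Real.exp (-(α * (t - s - ξ))) := by
    rw [abs_of_pos (Real.exp_pos B)]; exact Real.exp_le_exp.2 hBle
  calc |σ| * |Real.exp B| * |Real.exp I - 1|
      ≤ |σ| * Real.exp (-(α * (t - s - ξ))) * min 1 (ξ * α⁻¹) := by
        apply mul_le_mul
        · exact mul_le_mul_of_nonneg_left h2 (abs_nonneg σ)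
        · exact h1
        · exact abs_nonneg _
        · positivity

lemma kb2 (hα : 0 < α) (hφm : Measurable φ)
    (hφb : ∀ v, φ v ∈ Set.Icc (-α⁻¹) (-α)) {s t ξ : ℝ} (hs : s ≤ t)
    (h : t < s + ξ) :
    |PhiT σ φ t s - PhiT σ φ t (s + ξ)| ≤ |σ| * Real.exp (-(α * (t - s))) := by
  rw [PhiT, Set.indicator_of_mem (Set.mem_Iic.2 hs),
    Set.indicator_of_notMem (by simpa using h), sub_zero, abs_mul,
    abs_of_pos (Real.exp_pos _)]
  apply mul_le_mul_of_nonneg_left _ (abs_nonneg σ)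
  apply Real.exp_le_exp.2
  have := aux_int_upper hα hφm hφb hs
  nlinarith

end kernel

lemma core (H : ℝ) (f : ℝ → ℝ) (s : ℝ) (D : ℝ → ℝ)
    (hD : IntegrableOn D (Set.Ioi 0))
    (hb : ∀ ξ ∈ Set.Ioi (0:ℝ), |ξ ^ (H - 3/2) * (f s - f (s + ξ))| ≤ D ξ) :
    |marchaud H f s| ≤ ∫ ξ in Set.Ioi (0:ℝ), D ξ := by
  rw [marchaud, ← Real.norm_eq_abs]
  calc ‖∫ ξ in Set.Ioi (0:ℝ), ξ ^ (H - 3/2) * (f s - f (s + ξ))‖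
      ≤ ∫ ξ in Set.Ioi (0:ℝ), ‖ξ ^ (H - 3/2) * (f s - f (s + ξ))‖ :=
        norm_integral_le_integral_norm _
    _ ≤ ∫ ξ in Set.Ioi (0:ℝ), D ξ := by
        apply integral_mono_of_nonneg (ae_of_all _ fun ξ => norm_nonneg _) hD
        rw [Filter.EventuallyLE, ae_restrict_iff' measurableSet_Ioi]
        exact ae_of_all _ fun ξ hξ => by simpa [Real.norm_eq_abs, abs_mul] using hb ξ hξ

section bounds
variable {H α σ : ℝ} {φ : ℝ → ℝ}

lemma near (hH : H ∈ Set.Ioo (0:ℝ) (1/2)) (hα : 0 < α) (hφm : Measurable φ)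
    (hφb : ∀ v, φ v ∈ Set.Icc (-α⁻¹) (-α)) {s t : ℝ} (hst : s < t) :
    |marchaud H (PhiT σ φ t) s| ≤
      |σ| * Real.sqrt α⁻¹ * ((t - s) ^ H / H) +
        |σ| * ((t - s) ^ (H - 1/2) / (1/2 - H)) := by
  obtain ⟨hH0, hH2⟩ := hH
  set u := t - s with hu
  have hu0 : 0 < u := by simp [hu]; linarith
  set g1 : ℝ → ℝ := fun ξ => |σ| * Real.sqrt α⁻¹ * ξ ^ (H - 1) with hg1
  set g2 : ℝ → ℝ := fun ξ => |σ| * ξ ^ (H - 3/2) with hg2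
  set D : ℝ → ℝ := fun ξ => (Set.Ioc 0 u).indicator g1 ξ + (Set.Ioi u).indicator g2 ξ with hD
  have hint1 : IntegrableOn g1 (Set.Ioc 0 u) := by
    have := (intervalIntegral.intervalIntegrable_rpow' (a := 0) (b := u) (by linarith : (-1:ℝ) < H - 1)).const_mul
      (|σ| * Real.sqrt α⁻¹)
    rwa [intervalIntegrable_iff_integrableOn_Ioc_of_le hu0.le] at this
  have hint2 : IntegrableOn g2 (Set.Ioi u) := by
    exact (integrableOn_Ioi_rpow_of_lt (by linarith) hu0).const_mul |σ|
  have hDint : IntegrableOn D (Set.Ioi 0) := by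
    exact ((hint1.integrable_indicator measurableSet_Ioc).integrableOn).add
      ((hint2.integrable_indicator measurableSet_Ioi).integrableOn)
  have hdom : ∀ ξ ∈ Set.Ioi (0:ℝ),
      |ξ ^ (H - 3/2) * (PhiT σ φ t s - PhiT σ φ t (s + ξ))| ≤ D ξ := by
    intro ξ hξ
    have hξ0 : (0:ℝ) < ξ := hξ
    have habs : |ξ ^ (H - 3/2) * (PhiT σ φ t s - PhiT σ φ t (s + ξ))|
        = ξ ^ (H - 3/2) * |PhiT σ φ t s - PhiT σ φ t (s + ξ)| := by
      rw [abs_mul, abs_of_nonneg (Real.rpow_nonneg hξ0.le _)]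
    rcases le_or_gt ξ u with hle | hlt
    · have hmem : ξ ∈ Set.Ioc 0 u := ⟨hξ0, hle⟩
      have hnot : ξ ∉ Set.Ioi u := by simp [not_lt.2 hle]
      rw [hD]
      simp only [Set.indicator_of_mem hmem, Set.indicator_of_notMem hnot, add_zero]
      have hb := kb1 (σ := σ) hα hφm hφb hξ0 (by linarith : s + ξ ≤ t)
      have h1 : Real.exp (-(α * (t - s - ξ))) ≤ 1 :=
        Real.exp_le_one_iff.2 (by nlinarith)
      have h2 : min 1 (ξ * α⁻¹) ≤ Real.sqrt ξ * Real.sqrt α⁻¹ := by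
        rw [← Real.sqrt_mul hξ0.le]
        exact min_le_sqrt (by positivity)
      have h3 : |PhiT σ φ t s - PhiT σ φ t (s + ξ)| ≤ |σ| * (Real.sqrt ξ * Real.sqrt α⁻¹) := by
        calc |PhiT σ φ t s - PhiT σ φ t (s + ξ)|
            ≤ |σ| * Real.exp (-(α * (t - s - ξ))) * min 1 (ξ * α⁻¹) := hb
          _ ≤ |σ| * 1 * (Real.sqrt ξ * Real.sqrt α⁻¹) := by
              apply mul_le_mul (mul_le_mul_of_nonneg_left h1 (abs_nonneg σ)) h2
                (le_min zero_le_one (by positivity)) (by positivity)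
          _ = |σ| * (Real.sqrt ξ * Real.sqrt α⁻¹) := by ring
      rw [habs, hg1]
      calc ξ ^ (H - 3/2) * |PhiT σ φ t s - PhiT σ φ t (s + ξ)|
          ≤ ξ ^ (H - 3/2) * (|σ| * (Real.sqrt ξ * Real.sqrt α⁻¹)) :=
            mul_le_mul_of_nonneg_left h3 (Real.rpow_nonneg hξ0.le _)
        _ = |σ| * Real.sqrt α⁻¹ * (ξ ^ (H - 3/2) * ξ ^ ((1:ℝ)/2)) := by
            rw [Real.sqrt_eq_rpow]; ring
        _ = |σ| * Real.sqrt α⁻¹ * ξ ^ (H - 1) := by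
            rw [← Real.rpow_add hξ0, show H - 3/2 + 1/2 = H - 1 by ring]
    · have hnot : ξ ∉ Set.Ioc 0 u := by simp [not_le.2 hlt]
      have hmem : ξ ∈ Set.Ioi u := hlt
      rw [hD]
      simp only [Set.indicator_of_mem hmem, Set.indicator_of_notMem hnot, zero_add]
      have hb := kb2 (σ := σ) hα hφm hφb hst.le (by linarith : t < s + ξ)
      have h1 : Real.exp (-(α * (t - s))) ≤ 1 := Real.exp_le_one_iff.2 (by nlinarith)
      rw [habs, hg2]
      calc ξ ^ (H - 3/2) * |PhiT σ φ t s - PhiT σ φ t (s + ξ)|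
          ≤ ξ ^ (H - 3/2) * (|σ| * 1) := by
            apply mul_le_mul_of_nonneg_left _ (Real.rpow_nonneg hξ0.le _)
            calc |PhiT σ φ t s - PhiT σ φ t (s + ξ)| ≤ |σ| * Real.exp (-(α * (t - s))) := hb
              _ ≤ |σ| * 1 := mul_le_mul_of_nonneg_left h1 (abs_nonneg σ)
        _ = |σ| * ξ ^ (H - 3/2) := by ring
  have hcore := core H (PhiT σ φ t) s D hDint hdom
  have hval : ∫ ξ in Set.Ioi (0:ℝ), D ξ =
      |σ| * Real.sqrt α⁻¹ * (u ^ H / H) + |σ| * (u ^ (H - 1/2) / (1/2 - H)) := by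
    rw [hD, integral_add ((hint1.integrable_indicator measurableSet_Ioc).integrableOn)
      ((hint2.integrable_indicator measurableSet_Ioi).integrableOn)]
    have e1 : ∫ ξ in Set.Ioi (0:ℝ), (Set.Ioc 0 u).indicator g1 ξ = |σ| * Real.sqrt α⁻¹ * (u ^ H / H) := by
      rw [setIntegral_indicator measurableSet_Ioc,
        Set.inter_eq_self_of_subset_right Set.Ioc_subset_Ioi_self, hg1]
      rw [MeasureTheory.integral_const_mul]
      rw [← intervalIntegral.integral_of_le hu0.le,
        integral_rpow (Or.inl (by linarith : (-1:ℝ) < H - 1)),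
        show H - 1 + 1 = H by ring, Real.zero_rpow hH0.ne', sub_zero]
    have e2 : ∫ ξ in Set.Ioi (0:ℝ), (Set.Ioi u).indicator g2 ξ = |σ| * (u ^ (H - 1/2) / (1/2 - H)) := by
      rw [setIntegral_indicator measurableSet_Ioi,
        Set.inter_eq_self_of_subset_right (Set.Ioi_subset_Ioi hu0.le), hg2]
      rw [MeasureTheory.integral_const_mul, integral_Ioi_rpow_of_lt (by linarith) hu0]
      rw [show H - 3/2 + 1 = H - 1/2 by ring]
      rw [show -u ^ (H - 1/2) / (H - 1/2) = u ^ (H - 1/2) / (1/2 - H) by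
        rw [div_eq_div_iff (by linarith) (by linarith)]; ring]
    rw [e1, e2]
  rw [hval] at hcore
  exact hcore

end bounds

lemma sq_mul_exp_neg_le (x : ℝ) (hx : 0 ≤ x) : x ^ 2 * Real.exp (-x) ≤ 4 := by
  have h := Real.add_one_le_exp (x / 2)
  have e2 : Real.exp (x / 2) * Real.exp (x / 2) = Real.exp x := by
    rw [← Real.exp_add]; ring_nf
  have hm : Real.exp (-x) * Real.exp x = 1 := by rw [← Real.exp_add]; simp
  have hq : x ^ 2 / 4 ≤ Real.exp x := by nlinarith [Real.exp_pos (x / 2)]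
  nlinarith [Real.exp_pos (-x), Real.exp_pos x]

lemma mul_exp_neg_le {α : ℝ} (hα : 0 < α) {u : ℝ} (hu : 0 ≤ u) :
    u * Real.exp (-(α * u)) ≤ α⁻¹ := by
  have h := Real.add_one_le_exp (α * u)
  have hm : Real.exp (-(α * u)) * Real.exp (α * u) = 1 := by rw [← Real.exp_add]; simp
  rw [inv_eq_one_div, le_div_iff₀ hα]
  nlinarith [Real.exp_pos (-(α * u)), Real.exp_pos (α * u)]

section far
variable {H α σ : ℝ} {φ : ℝ → ℝ}

lemma far (hH : H ∈ Set.Ioo (0:ℝ) (1/2)) (hα : 0 < α) (hφm : Measurable φ)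
    (hφb : ∀ v, φ v ∈ Set.Icc (-α⁻¹) (-α)) {s t : ℝ} (h1 : 1 ≤ t - s) :
    |marchaud H (PhiT σ φ t) s| ≤
      (|σ| * (Real.sqrt α⁻¹ * (16 / (α ^ 2 * H)) + (2:ℝ)⁻¹ ^ (H - 3/2) * α⁻¹ +
        α⁻¹ / (1/2 - H))) * (t - s) ^ (H - 3/2) := by
  obtain ⟨hH0, hH2⟩ := hH
  set u := t - s with hu
  have hu1 : 1 ≤ u := h1
  have hu0 : 0 < u := by linarith
  have hhalf : 0 < u / 2 := by linarith
  have hst : s < t := by linarith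
  set g1 : ℝ → ℝ := fun ξ => |σ| * Real.sqrt α⁻¹ * Real.exp (-(α * u / 2)) * ξ ^ (H - 1) with hg1
  set g2 : ℝ → ℝ := fun ξ => |σ| * (u / 2) ^ (H - 3/2) * Real.exp (-(α * (u - ξ))) with hg2
  set g3 : ℝ → ℝ := fun ξ => |σ| * Real.exp (-(α * u)) * ξ ^ (H - 3/2) with hg3
  set D : ℝ → ℝ := fun ξ => (Set.Ioc 0 (u/2)).indicator g1 ξ +
    ((Set.Ioc (u/2) u).indicator g2 ξ + (Set.Ioi u).indicator g3 ξ) with hD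
  have hint1 : IntegrableOn g1 (Set.Ioc 0 (u/2)) := by
    have := (intervalIntegral.intervalIntegrable_rpow' (a := 0) (b := u/2)
      (by linarith : (-1:ℝ) < H - 1)).const_mul (|σ| * Real.sqrt α⁻¹ * Real.exp (-(α * u / 2)))
    rwa [intervalIntegrable_iff_integrableOn_Ioc_of_le hhalf.le] at this
  have hint2 : IntegrableOn g2 (Set.Ioc (u/2) u) := by
    apply Continuous.integrableOn_Ioc
    fun_prop
  have hint3 : IntegrableOn g3 (Set.Ioi u) := by
    exact (integrableOn_Ioi_rpow_of_lt (by linarith) hu0).const_mul _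
  have hDint : IntegrableOn D (Set.Ioi 0) := by
    exact ((hint1.integrable_indicator measurableSet_Ioc).integrableOn).add
      (((hint2.integrable_indicator measurableSet_Ioc).integrableOn).add
        ((hint3.integrable_indicator measurableSet_Ioi).integrableOn))
  have hdom : ∀ ξ ∈ Set.Ioi (0:ℝ),
      |ξ ^ (H - 3/2) * (PhiT σ φ t s - PhiT σ φ t (s + ξ))| ≤ D ξ := by
    intro ξ hξ
    have hξ0 : (0:ℝ) < ξ := hξ
    have habs : |ξ ^ (H - 3/2) * (PhiT σ φ t s - PhiT σ φ t (s + ξ))|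
        = ξ ^ (H - 3/2) * |PhiT σ φ t s - PhiT σ φ t (s + ξ)| := by
      rw [abs_mul, abs_of_nonneg (Real.rpow_nonneg hξ0.le _)]
    rcases le_or_gt ξ (u/2) with hc1 | hc1
    · have hmem : ξ ∈ Set.Ioc 0 (u/2) := ⟨hξ0, hc1⟩
      rw [hD]
      simp only [Set.indicator_of_mem hmem,
        Set.indicator_of_notMem (by simp [Set.mem_Ioc]; intro h; linarith : ξ ∉ Set.Ioc (u/2) u),
        Set.indicator_of_notMem (by simp; linarith : ξ ∉ Set.Ioi u), add_zero]
      have hb := kb1 (σ := σ) hα hφm hφb hξ0 (by linarith : s + ξ ≤ t)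
      have h1e : Real.exp (-(α * (t - s - ξ))) ≤ Real.exp (-(α * u / 2)) := by
        apply Real.exp_le_exp.2; rw [← hu]; nlinarith
      have h2 : min 1 (ξ * α⁻¹) ≤ Real.sqrt ξ * Real.sqrt α⁻¹ := by
        rw [← Real.sqrt_mul hξ0.le]
        exact min_le_sqrt (by positivity)
      have h3 : |PhiT σ φ t s - PhiT σ φ t (s + ξ)| ≤
          |σ| * Real.exp (-(α * u / 2)) * (Real.sqrt ξ * Real.sqrt α⁻¹) := by
        calc |PhiT σ φ t s - PhiT σ φ t (s + ξ)|
            ≤ |σ| * Real.exp (-(α * (t - s - ξ))) * min 1 (ξ * α⁻¹) := hb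
          _ ≤ |σ| * Real.exp (-(α * u / 2)) * (Real.sqrt ξ * Real.sqrt α⁻¹) := by
              apply mul_le_mul (mul_le_mul_of_nonneg_left h1e (abs_nonneg σ)) h2
                (le_min zero_le_one (by positivity)) (by positivity)
      rw [habs, hg1]
      calc ξ ^ (H - 3/2) * |PhiT σ φ t s - PhiT σ φ t (s + ξ)|
          ≤ ξ ^ (H - 3/2) * (|σ| * Real.exp (-(α * u / 2)) * (Real.sqrt ξ * Real.sqrt α⁻¹)) :=
            mul_le_mul_of_nonneg_left h3 (Real.rpow_nonneg hξ0.le _)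
        _ = |σ| * Real.sqrt α⁻¹ * Real.exp (-(α * u / 2)) * (ξ ^ (H - 3/2) * ξ ^ ((1:ℝ)/2)) := by
            rw [Real.sqrt_eq_rpow]; ring
        _ = |σ| * Real.sqrt α⁻¹ * Real.exp (-(α * u / 2)) * ξ ^ (H - 1) := by
            rw [← Real.rpow_add hξ0, show H - 3/2 + 1/2 = H - 1 by ring]
    · rcases le_or_gt ξ u with hc2 | hc2
      · have hmem : ξ ∈ Set.Ioc (u/2) u := ⟨hc1, hc2⟩
        rw [hD]
        simp only [Set.indicator_of_mem hmem,
          Set.indicator_of_notMem (by simp [Set.mem_Ioc]; intro h; linarith : ξ ∉ Set.Ioc 0 (u/2)),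
          Set.indicator_of_notMem (by simp; linarith : ξ ∉ Set.Ioi u), zero_add, add_zero]
        have hb := kb1 (σ := σ) hα hφm hφb hξ0 (by linarith : s + ξ ≤ t)
        rw [← hu] at hb
        have hmin : min 1 (ξ * α⁻¹) ≤ 1 := min_le_left _ _
        have hpow : ξ ^ (H - 3/2) ≤ (u/2) ^ (H - 3/2) :=
          Real.rpow_le_rpow_of_nonpos hhalf hc1.le (by linarith)
        rw [habs, hg2]
        calc ξ ^ (H - 3/2) * |PhiT σ φ t s - PhiT σ φ t (s + ξ)|
            ≤ (u/2) ^ (H - 3/2) * (|σ| * Real.exp (-(α * (u - ξ)))) := by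
              apply mul_le_mul hpow _ (abs_nonneg _) (Real.rpow_nonneg hhalf.le _)
              calc |PhiT σ φ t s - PhiT σ φ t (s + ξ)|
                  ≤ |σ| * Real.exp (-(α * (u - ξ))) * min 1 (ξ * α⁻¹) := by
                    convert hb using 3 <;> ring
                _ ≤ |σ| * Real.exp (-(α * (u - ξ))) * 1 :=
                    mul_le_mul_of_nonneg_left hmin (by positivity)
                _ = |σ| * Real.exp (-(α * (u - ξ))) := by ring
          _ = |σ| * (u/2) ^ (H - 3/2) * Real.exp (-(α * (u - ξ))) := by ring
      · have hmem : ξ ∈ Set.Ioi u := hc2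
        rw [hD]
        simp only [Set.indicator_of_mem hmem,
          Set.indicator_of_notMem (by simp [Set.mem_Ioc]; intro h; linarith : ξ ∉ Set.Ioc 0 (u/2)),
          Set.indicator_of_notMem (by simp [Set.mem_Ioc]; intro h; linarith : ξ ∉ Set.Ioc (u/2) u),
          zero_add]
        have hb := kb2 (σ := σ) hα hφm hφb hst.le (by linarith : t < s + ξ)
        rw [habs, hg3]
        calc ξ ^ (H - 3/2) * |PhiT σ φ t s - PhiT σ φ t (s + ξ)|
            ≤ ξ ^ (H - 3/2) * (|σ| * Real.exp (-(α * u))) := by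
              apply mul_le_mul_of_nonneg_left _ (Real.rpow_nonneg hξ0.le _)
              exact hb
          _ = |σ| * Real.exp (-(α * u)) * ξ ^ (H - 3/2) := by ring
  have hcore := core H (PhiT σ φ t) s D hDint hdom
  refine hcore.trans ?_
  -- compute / bound the integral of D
  have e1 : ∫ ξ in Set.Ioi (0:ℝ), (Set.Ioc 0 (u/2)).indicator g1 ξ =
      |σ| * Real.sqrt α⁻¹ * Real.exp (-(α * u / 2)) * ((u/2) ^ H / H) := by
    rw [setIntegral_indicator measurableSet_Ioc,
      Set.inter_eq_self_of_subset_right Set.Ioc_subset_Ioi_self, hg1]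
    rw [MeasureTheory.integral_const_mul]
    rw [← intervalIntegral.integral_of_le hhalf.le,
      integral_rpow (Or.inl (by linarith : (-1:ℝ) < H - 1)),
      show H - 1 + 1 = H by ring, Real.zero_rpow hH0.ne', sub_zero]
  have e2 : ∫ ξ in Set.Ioi (0:ℝ), (Set.Ioc (u/2) u).indicator g2 ξ ≤
      |σ| * (u/2) ^ (H - 3/2) * α⁻¹ := by
    have hss : Set.Ioc (u/2) u ⊆ Set.Ioi (0:ℝ) := fun x hx => lt_trans hhalf hx.1
    rw [setIntegral_indicator measurableSet_Ioc,
      Set.inter_eq_self_of_subset_right hss, hg2]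
    rw [MeasureTheory.integral_const_mul]
    have hJ : ∫ ξ in Set.Ioc (u/2) u, Real.exp (-(α * (u - ξ))) ≤ α⁻¹ := by
      rw [← intervalIntegral.integral_of_le (by linarith : u/2 ≤ u)]
      have hcs : (∫ ξ in (u/2)..u, Real.exp (-(α * (u - ξ)))) =
          ∫ x in (u - u)..(u - u/2), Real.exp (-(α * x)) :=
        intervalIntegral.integral_comp_sub_left (fun x => Real.exp (-(α * x))) u
      rw [hcs, sub_self, show u - u/2 = u/2 by ring]
      have hmul : (∫ x in (0:ℝ)..(u/2), Real.exp (-α * x)) =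
          (-α)⁻¹ • ∫ x in ((-α) * 0)..((-α) * (u/2)), Real.exp x :=
        intervalIntegral.integral_comp_mul_left Real.exp (by linarith : (-α) ≠ 0)
      simp_rw [← neg_mul]
      rw [hmul, mul_zero, integral_exp, Real.exp_zero, smul_eq_mul]
      have : (-α)⁻¹ * (Real.exp (-α * (u/2)) - 1) = (1 - Real.exp (-α * (u/2))) / α := by
        rw [div_eq_mul_inv, inv_neg]; ring
      rw [this, div_le_iff₀ hα, inv_mul_cancel₀ hα.ne']
      nlinarith [Real.exp_pos (-α * (u/2))]
    exact mul_le_mul_of_nonneg_left hJ (by positivity)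
  have e3 : ∫ ξ in Set.Ioi (0:ℝ), (Set.Ioi u).indicator g3 ξ =
      |σ| * Real.exp (-(α * u)) * (u ^ (H - 1/2) / (1/2 - H)) := by
    rw [setIntegral_indicator measurableSet_Ioi,
      Set.inter_eq_self_of_subset_right (Set.Ioi_subset_Ioi hu0.le), hg3]
    rw [MeasureTheory.integral_const_mul, integral_Ioi_rpow_of_lt (by linarith) hu0]
    rw [show H - 3/2 + 1 = H - 1/2 by ring]
    rw [show -u ^ (H - 1/2) / (H - 1/2) = u ^ (H - 1/2) / (1/2 - H) by
      rw [div_eq_div_iff (by linarith) (by linarith)]; ring]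
  have hsplit : ∫ ξ in Set.Ioi (0:ℝ), D ξ =
      (∫ ξ in Set.Ioi (0:ℝ), (Set.Ioc 0 (u/2)).indicator g1 ξ) +
      ((∫ ξ in Set.Ioi (0:ℝ), (Set.Ioc (u/2) u).indicator g2 ξ) +
        (∫ ξ in Set.Ioi (0:ℝ), (Set.Ioi u).indicator g3 ξ)) := by
    rw [hD]
    have h1' : Integrable (fun ξ => (Set.Ioc 0 (u/2)).indicator g1 ξ)
        (volume.restrict (Set.Ioi 0)) :=
      (hint1.integrable_indicator measurableSet_Ioc).integrableOn
    have h2' : Integrable (fun ξ => (Set.Ioc (u/2) u).indicator g2 ξ)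
        (volume.restrict (Set.Ioi 0)) :=
      (hint2.integrable_indicator measurableSet_Ioc).integrableOn
    have h3' : Integrable (fun ξ => (Set.Ioi u).indicator g3 ξ)
        (volume.restrict (Set.Ioi 0)) :=
      (hint3.integrable_indicator measurableSet_Ioi).integrableOn
    have h23 : Integrable (fun ξ => (Set.Ioc (u/2) u).indicator g2 ξ +
        (Set.Ioi u).indicator g3 ξ) (volume.restrict (Set.Ioi 0)) := h2'.add h3'
    rw [integral_add h1' h23, integral_add h2' h3']
  -- now bound the three terms
  have hb1 : |σ| * Real.sqrt α⁻¹ * Real.exp (-(α * u / 2)) * ((u/2) ^ H / H) ≤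
      |σ| * Real.sqrt α⁻¹ * (16 / (α ^ 2 * H)) * u ^ (H - 3/2) := by
    have hA : Real.exp (-(α * u / 2)) * u ^ ((3:ℝ)/2) ≤ 16 / α ^ 2 := by
      have h32 : u ^ ((3:ℝ)/2) ≤ u ^ ((2:ℝ)) :=
        Real.rpow_le_rpow_of_exponent_le hu1 (by norm_num)
      have h2' : u ^ ((2:ℝ)) = u ^ 2 := Real.rpow_two u
      have hh := sq_mul_exp_neg_le (α * u / 2) (by positivity)
      have hkey : Real.exp (-(α * u / 2)) * u ^ 2 ≤ 16 / α ^ 2 := by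
        rw [le_div_iff₀ (by positivity : (0:ℝ) < α ^ 2)]
        nlinarith [Real.exp_pos (-(α * u / 2))]
      calc Real.exp (-(α * u / 2)) * u ^ ((3:ℝ)/2)
          ≤ Real.exp (-(α * u / 2)) * u ^ ((2:ℝ)) :=
            mul_le_mul_of_nonneg_left h32 (Real.exp_pos _).le
        _ ≤ 16 / α ^ 2 := by rw [h2']; exact hkey
    have hhalfH : (u/2) ^ H ≤ u ^ H :=
      Real.rpow_le_rpow (by positivity) (by linarith) hH0.le
    have hsplitH : u ^ H = u ^ (H - 3/2) * u ^ ((3:ℝ)/2) := by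
      rw [← Real.rpow_add hu0, show H - 3/2 + 3/2 = H by ring]
    calc |σ| * Real.sqrt α⁻¹ * Real.exp (-(α * u / 2)) * ((u/2) ^ H / H)
        ≤ |σ| * Real.sqrt α⁻¹ * Real.exp (-(α * u / 2)) * (u ^ H / H) := by
          apply mul_le_mul_of_nonneg_left _ (by positivity)
          exact div_le_div_of_nonneg_right hhalfH hH0.le
      _ = |σ| * Real.sqrt α⁻¹ / H * (Real.exp (-(α * u / 2)) * u ^ ((3:ℝ)/2)) * u ^ (H - 3/2) := by
          rw [hsplitH]; ring
      _ ≤ |σ| * Real.sqrt α⁻¹ / H * (16 / α ^ 2) * u ^ (H - 3/2) := by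
          apply mul_le_mul_of_nonneg_right _ (Real.rpow_nonneg hu0.le _)
          exact mul_le_mul_of_nonneg_left hA (div_nonneg (by positivity) hH0.le)
      _ = |σ| * Real.sqrt α⁻¹ * (16 / (α ^ 2 * H)) * u ^ (H - 3/2) := by
          ring
  have hb2eq : |σ| * (u/2) ^ (H - 3/2) * α⁻¹ =
      |σ| * ((2:ℝ)⁻¹ ^ (H - 3/2) * α⁻¹) * u ^ (H - 3/2) := by
    rw [show u/2 = u * 2⁻¹ by ring,
      Real.mul_rpow hu0.le (by norm_num : (0:ℝ) ≤ 2⁻¹)]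
    ring
  have hb3 : |σ| * Real.exp (-(α * u)) * (u ^ (H - 1/2) / (1/2 - H)) ≤
      |σ| * (α⁻¹ / (1/2 - H)) * u ^ (H - 3/2) := by
    have hB : u * Real.exp (-(α * u)) ≤ α⁻¹ := mul_exp_neg_le hα hu0.le
    have hsplit12 : u ^ (H - 1/2) = u ^ (H - 3/2) * u := by
      rw [show H - 1/2 = H - 3/2 + 1 by ring, Real.rpow_add hu0, Real.rpow_one]
    calc |σ| * Real.exp (-(α * u)) * (u ^ (H - 1/2) / (1/2 - H))
        = |σ| / (1/2 - H) * (u * Real.exp (-(α * u))) * u ^ (H - 3/2) := by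
          rw [hsplit12]; ring
      _ ≤ |σ| / (1/2 - H) * α⁻¹ * u ^ (H - 3/2) := by
          apply mul_le_mul_of_nonneg_right _ (Real.rpow_nonneg hu0.le _)
          exact mul_le_mul_of_nonneg_left hB (div_nonneg (abs_nonneg σ) (by linarith))
      _ = |σ| * (α⁻¹ / (1/2 - H)) * u ^ (H - 3/2) := by ring
  calc (∫ ξ in Set.Ioi (0:ℝ), D ξ)
      = (∫ ξ in Set.Ioi (0:ℝ), (Set.Ioc 0 (u/2)).indicator g1 ξ) +
        ((∫ ξ in Set.Ioi (0:ℝ), (Set.Ioc (u/2) u).indicator g2 ξ) +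
          (∫ ξ in Set.Ioi (0:ℝ), (Set.Ioi u).indicator g3 ξ)) := hsplit
    _ ≤ |σ| * Real.sqrt α⁻¹ * (16 / (α ^ 2 * H)) * u ^ (H - 3/2) +
        (|σ| * ((2:ℝ)⁻¹ ^ (H - 3/2) * α⁻¹) * u ^ (H - 3/2) +
          |σ| * (α⁻¹ / (1/2 - H)) * u ^ (H - 3/2)) := by
        refine add_le_add ?_ (add_le_add ?_ ?_)
        · rw [e1]; exact hb1
        · exact e2.trans (le_of_eq hb2eq)
        · rw [e3]; exact hb3
    _ = (|σ| * (Real.sqrt α⁻¹ * (16 / (α ^ 2 * H)) + (2:ℝ)⁻¹ ^ (H - 3/2) * α⁻¹ + α⁻¹ / (1/2 - H))) * u ^ (H - 3/2) := by ring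

end far


theorem stmt6 (H α σ : ℝ) (hH : H ∈ Set.Ioo (0:ℝ) (1/2)) (hα : 0 < α) (hσ : σ ≠ 0) :
    ∃ C : ℝ, 0 < C ∧ ∀ φ ψ : ℝ → ℝ, Measurable φ → Measurable ψ →
      (∀ v : ℝ, φ v ∈ Set.Icc (-α⁻¹) (-α)) → (∀ v : ℝ, ψ v ∈ Set.Icc (-α⁻¹) (-α)) →
      ∀ t : ℝ, 1 ≤ t →
      (∫⁻ s in Set.Iic (0:ℝ), ENNReal.ofReal
          (|marchaud H (PhiT σ φ t) s| * |marchaud H (PhiT σ ψ 0) s|))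
        ≤ ENNReal.ofReal (C * t ^ (H - 3/2)) := by
  obtain ⟨hH0, hH2⟩ := hH
  have hσ0 : 0 < |σ| := abs_pos.2 hσ
  have h12H : 0 < 1/2 - H := by linarith
  have hH12 : 0 < H + 1/2 := by linarith
  set Cfar : ℝ := |σ| * (Real.sqrt α⁻¹ * (16 / (α ^ 2 * H)) + (2:ℝ)⁻¹ ^ (H - 3/2) * α⁻¹ +
      α⁻¹ / (1/2 - H)) with hCfar
  set Knear : ℝ := |σ| * (Real.sqrt α⁻¹ / H + 1 / (1/2 - H)) with hKnear
  have hCfar0 : 0 < Cfar := by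
    apply mul_pos hσ0
    have h1 : 0 < Real.sqrt α⁻¹ := Real.sqrt_pos.2 (by positivity)
    have h2 : (0:ℝ) < (2:ℝ)⁻¹ ^ (H - 3/2) := Real.rpow_pos_of_pos (by norm_num) _
    have h3 : 0 < 16 / (α ^ 2 * H) := by positivity
    have h4 : 0 < α⁻¹ / (1/2 - H) := by positivity
    positivity
  have hKnear0 : 0 < Knear := by
    apply mul_pos hσ0
    have h1 : 0 < Real.sqrt α⁻¹ := Real.sqrt_pos.2 (by positivity)
    positivity
  set K : ℝ := Cfar * (1 / (1/2 - H)) + Knear * (1 / (H + 1/2)) with hK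
  have hK0 : 0 < K := by positivity
  refine ⟨Cfar * K, by positivity, ?_⟩
  intro φ ψ hφm hψm hφb hψb t ht
  have ht0 : (0:ℝ) < t := by linarith
  set c : ℝ := H - 3/2 with hc
  set g : ℝ → ℝ := fun s => if s ≤ -1 then Cfar * (-s) ^ (H - 3/2)
    else Knear * (-s) ^ (H - 1/2) with hg
  -- pointwise a.e. bound
  have hne : ∀ᵐ (s : ℝ) ∂volume, s ≠ (0:ℝ) := by
    rw [ae_iff]
    simpa [Set.setOf_eq_eq_singleton] using Real.volume_singleton
  have haes : ∀ᵐ s ∂(volume.restrict (Set.Iic (0:ℝ))), s < 0 := by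
    filter_upwards [ae_restrict_of_ae hne, ae_restrict_mem measurableSet_Iic] with s h1 h2
    exact lt_of_le_of_ne h2 h1
  have hbound : ∀ᵐ s ∂(volume.restrict (Set.Iic (0:ℝ))),
      ENNReal.ofReal (|marchaud H (PhiT σ φ t) s| * |marchaud H (PhiT σ ψ 0) s|) ≤
      ENNReal.ofReal (Cfar * t ^ (H - 3/2) * g s) := by
    filter_upwards [haes] with s hs
    apply ENNReal.ofReal_le_ofReal
    have hGt : |marchaud H (PhiT σ φ t) s| ≤ Cfar * t ^ (H - 3/2) := by
      have h1 : (1:ℝ) ≤ t - s := by linarith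
      refine (far ⟨hH0, hH2⟩ hα hφm hφb h1).trans ?_
      apply mul_le_mul_of_nonneg_left _ hCfar0.le
      exact Real.rpow_le_rpow_of_nonpos ht0 (by linarith) (by linarith)
    have hG0 : |marchaud H (PhiT σ ψ 0) s| ≤ g s := by
      rcases le_or_gt s (-1) with hs1 | hs1
      · rw [hg]; simp only [if_pos hs1]
        have h1 : (1:ℝ) ≤ 0 - s := by linarith
        have := far (σ := σ) ⟨hH0, hH2⟩ hα hψm hψb h1
        rw [zero_sub] at this
        exact this
      · rw [hg]; simp only [if_neg (not_le.2 hs1)]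
        have hu0 : (0:ℝ) < -s := by linarith
        have hu1 : -s ≤ 1 := by linarith
        have hnear := near (σ := σ) ⟨hH0, hH2⟩ hα hψm hψb (show s < 0 from hs)
        rw [zero_sub] at hnear
        have hpow : (-s) ^ H ≤ (-s) ^ (H - 1/2) :=
          Real.rpow_le_rpow_of_exponent_ge hu0 hu1 (by linarith)
        refine hnear.trans ?_
        calc |σ| * Real.sqrt α⁻¹ * ((-s) ^ H / H) + |σ| * ((-s) ^ (H - 1/2) / (1/2 - H))
            ≤ |σ| * Real.sqrt α⁻¹ * ((-s) ^ (H - 1/2) / H) +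
              |σ| * ((-s) ^ (H - 1/2) / (1/2 - H)) := by
              apply add_le_add_left
              apply mul_le_mul_of_nonneg_left _ (by positivity)
              exact div_le_div_of_nonneg_right hpow hH0.le
          _ = Knear * (-s) ^ (H - 1/2) := by rw [hKnear]; ring
    exact mul_le_mul hGt hG0 (abs_nonneg _)
      (mul_nonneg hCfar0.le (Real.rpow_nonneg ht0.le _))
  -- integrability of g on Iic 0
  have hpre1 : (Neg.neg ⁻¹' Set.Ici (1:ℝ)) = Set.Iic (-1:ℝ) := by
    ext x; simp [le_neg]
  have hpre2 : (Neg.neg ⁻¹' Set.Icc (0:ℝ) 1) = Set.Icc (-1:ℝ) 0 := by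
    ext x
    simp only [Set.mem_preimage, Set.mem_Icc]
    constructor <;> (rintro ⟨h1, h2⟩; constructor <;> linarith)
  have hbase1 : IntegrableOn (fun x : ℝ => x ^ (H - 3/2)) (Set.Ici 1) := by
    rw [integrableOn_Ici_iff_integrableOn_Ioi]
    exact integrableOn_Ioi_rpow_of_lt (by linarith) one_pos
  have hf1 : IntegrableOn (fun s : ℝ => Cfar * (-s) ^ (H - 3/2)) (Set.Iic (-1:ℝ)) := by
    have h := ((Measure.measurePreserving_neg (volume : Measure ℝ)).integrableOn_comp_preimage
      (Homeomorph.neg ℝ).measurableEmbedding).2 hbase1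
    rw [hpre1] at h
    simp only [Function.comp_def] at h
    exact h.const_mul Cfar
  have hbase2 : IntegrableOn (fun x : ℝ => x ^ (H - 1/2)) (Set.Icc 0 1) := by
    rw [integrableOn_Icc_iff_integrableOn_Ioc]
    have := intervalIntegral.intervalIntegrable_rpow' (a := 0) (b := 1)
      (by linarith : (-1:ℝ) < H - 1/2)
    rwa [intervalIntegrable_iff_integrableOn_Ioc_of_le zero_le_one] at this
  have hf2 : IntegrableOn (fun s : ℝ => Knear * (-s) ^ (H - 1/2)) (Set.Ioc (-1:ℝ) 0) := by
    have h := ((Measure.measurePreserving_neg (volume : Measure ℝ)).integrableOn_comp_preimage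
      (Homeomorph.neg ℝ).measurableEmbedding).2 hbase2
    rw [hpre2] at h
    simp only [Function.comp_def] at h
    exact (h.mono_set Set.Ioc_subset_Icc_self).const_mul Knear
  have heq1 : Set.EqOn (fun s : ℝ => Cfar * (-s) ^ (H - 3/2)) g (Set.Iic (-1:ℝ)) := by
    intro x hx; rw [hg]; simp only [if_pos (Set.mem_Iic.1 hx)]
  have heq2 : Set.EqOn (fun s : ℝ => Knear * (-s) ^ (H - 1/2)) g (Set.Ioc (-1:ℝ) 0) := by
    intro x hx; rw [hg]; simp only [if_neg (not_le.2 hx.1)]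
  have hg1 : IntegrableOn g (Set.Iic (-1:ℝ)) := hf1.congr_fun heq1 measurableSet_Iic
  have hg2 : IntegrableOn g (Set.Ioc (-1:ℝ) 0) := hf2.congr_fun heq2 measurableSet_Ioc
  have hgint : IntegrableOn g (Set.Iic (0:ℝ)) := by
    rw [← Set.Iic_union_Ioc_eq_Iic (by norm_num : (-1:ℝ) ≤ 0)]
    exact hg1.union hg2
  have hgnn : 0 ≤ᵐ[volume.restrict (Set.Iic (0:ℝ))] g := by
    filter_upwards [ae_restrict_mem measurableSet_Iic] with s hs
    rw [hg]
    rcases le_or_gt s (-1) with h | h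
    · simp only [if_pos h]
      exact mul_nonneg hCfar0.le (Real.rpow_nonneg (by linarith) _)
    · simp only [if_neg (not_le.2 h)]
      exact mul_nonneg hKnear0.le (Real.rpow_nonneg (by simpa using hs) _)
  -- value of the integral of g
  have hval1 : ∫ s in Set.Iic (-1:ℝ), g s = Cfar * (1 / (1/2 - H)) := by
    rw [← setIntegral_congr_fun measurableSet_Iic heq1, MeasureTheory.integral_const_mul]
    have h := integral_comp_neg_Iic (-1:ℝ) (fun x : ℝ => x ^ (H - 3/2))
    rw [h, neg_neg, integral_Ioi_rpow_of_lt (by linarith) one_pos,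
      Real.one_rpow]
    rw [show -(1:ℝ) / (H - 3/2 + 1) = 1 / (1/2 - H) by
      rw [div_eq_div_iff (by linarith) (by linarith)]; ring]
  have hval2 : ∫ s in Set.Ioc (-1:ℝ) 0, g s = Knear * (1 / (H + 1/2)) := by
    rw [← setIntegral_congr_fun measurableSet_Ioc heq2, MeasureTheory.integral_const_mul]
    rw [← intervalIntegral.integral_of_le (by norm_num : (-1:ℝ) ≤ 0)]
    have h := intervalIntegral.integral_comp_neg (a := (-1:ℝ)) (b := 0)
      (fun x : ℝ => x ^ (H - 1/2))
    rw [h, neg_zero, neg_neg, integral_rpow (Or.inl (by linarith : (-1:ℝ) < H - 1/2)),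
      Real.one_rpow, Real.zero_rpow (by linarith : H - 1/2 + 1 ≠ 0), sub_zero]
    rw [show H - 1/2 + 1 = H + 1/2 by ring]
  have hgval : ∫ s in Set.Iic (0:ℝ), g s = K := by
    rw [← Set.Iic_union_Ioc_eq_Iic (by norm_num : (-1:ℝ) ≤ 0),
      setIntegral_union (Set.Iic_disjoint_Ioc le_rfl) measurableSet_Ioc hg1 hg2,
      hval1, hval2]
  -- put everything together
  have hp : (0:ℝ) ≤ Cfar * t ^ (H - 3/2) :=
    mul_nonneg hCfar0.le (Real.rpow_nonneg ht0.le _)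
  calc (∫⁻ s in Set.Iic (0:ℝ), ENNReal.ofReal
          (|marchaud H (PhiT σ φ t) s| * |marchaud H (PhiT σ ψ 0) s|))
      ≤ (∫⁻ s in Set.Iic (0:ℝ), ENNReal.ofReal (Cfar * t ^ (H - 3/2) * g s)) :=
        lintegral_mono_ae hbound
    _ = (∫⁻ s in Set.Iic (0:ℝ), ENNReal.ofReal (Cfar * t ^ (H - 3/2)) * ENNReal.ofReal (g s)) := by
        congr 1; ext s; rw [ENNReal.ofReal_mul hp]
    _ = ENNReal.ofReal (Cfar * t ^ (H - 3/2)) * ∫⁻ s in Set.Iic (0:ℝ), ENNReal.ofReal (g s) :=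
        lintegral_const_mul' _ _ ENNReal.ofReal_ne_top
    _ = ENNReal.ofReal (Cfar * t ^ (H - 3/2)) * ENNReal.ofReal K := by
        rw [← ofReal_integral_eq_lintegral_ofReal hgint hgnn, hgval]
    _ = ENNReal.ofReal (Cfar * K * t ^ (H - 3/2)) := by
        rw [← ENNReal.ofReal_mul hp]
        congr 1
        ring
end

section
/- Let H ∈ (0,1/2) and let f : [0,∞) → [0,∞] be measurable. Then (as integrals with values in [0,∞]) ∫₀^∞ ∫₀^∞ r^{−H−1/2} u^{−H−1/2} f(|r−u|) du dr = 2·( ∫₁^∞ (u−1)^{−H−1/2} u^{−H−1/2} du )·( ∫₀^∞ f(r)·r^{−2H} dr ). -/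
open MeasureTheory Set

private lemma measurable_rpow_const' (a : ℝ) : Measurable fun x : ℝ => x ^ a := by
  have h : (fun x : ℝ => x ^ a) = fun x =>
      if x = 0 then (if a = 0 then 1 else 0)
      else if 0 < x then Real.exp (Real.log x * a)
      else Real.exp (Real.log x * a) * Real.cos (a * Real.pi) := by
    funext x
    by_cases hx0 : x = 0
    · subst hx0
      by_cases ha : a = 0 <;> simp [ha, Real.zero_rpow]
    · by_cases hx : 0 < x
      · simp [hx0, hx, Real.rpow_def_of_pos hx]
      · have hneg : x < 0 := lt_of_le_of_ne (not_lt.1 hx) hx0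
        simp [hx0, hx, Real.rpow_def_of_neg hneg]
  rw [h]
  refine Measurable.ite (MeasurableSet.singleton 0) measurable_const ?_
  refine Measurable.ite (measurableSet_lt measurable_const measurable_id) ?_ ?_
  · exact (Real.measurable_log.mul_const a).exp
  · exact ((Real.measurable_log.mul_const a).exp).mul_const _

private lemma ltrans (c : ℝ) (G : ℝ → ENNReal) :
    ∫⁻ u in Set.Ioi c, G u = ∫⁻ v in Set.Ioi (0:ℝ), G (v + c) := by
  have h := (measurePreserving_add_right (volume : Measure ℝ) c).setLIntegral_comp_preimage_emb
    (measurableEmbedding_addRight c) G (Set.Ioi c)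
  have hpre : (· + c) ⁻¹' Set.Ioi c = Set.Ioi (0:ℝ) := by
    ext x; simp
  rw [hpre] at h
  exact h.symm

private lemma lscale (c : ℝ) (hc : 0 < c) (G : ℝ → ENNReal) (hG : Measurable G) :
    ∫⁻ r in Set.Ioi (0:ℝ), G r = ENNReal.ofReal c * ∫⁻ w in Set.Ioi (0:ℝ), G (c * w) := by
  have hmap : Measure.map (c * ·) (volume : Measure ℝ) = ENNReal.ofReal |c⁻¹| • volume :=
    Real.map_volume_mul_left (ne_of_gt hc)
  have hpre : (c * ·) ⁻¹' Set.Ioi (0:ℝ) = Set.Ioi (0:ℝ) := by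
    ext x
    simp only [mem_preimage, mem_Ioi]
    exact mul_pos_iff_of_pos_left hc
  have h1 : ∫⁻ r in Set.Ioi (0:ℝ), G r ∂(Measure.map (c * ·) volume)
      = ∫⁻ w in (c * ·) ⁻¹' Set.Ioi (0:ℝ), G (c * w) :=
    setLIntegral_map measurableSet_Ioi hG (measurable_const_mul c)
  rw [hmap, hpre] at h1
  rw [Measure.restrict_smul, lintegral_smul_measure, smul_eq_mul] at h1
  rw [← h1, ← mul_assoc, abs_of_pos (inv_pos.mpr hc), ← ENNReal.ofReal_mul hc.le,
    mul_inv_cancel₀ (ne_of_gt hc), ENNReal.ofReal_one, one_mul]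

theorem stmt7 (H : ℝ) (hH : H ∈ Set.Ioo (0:ℝ) (1/2)) (f : ℝ → ENNReal) (hf : Measurable f) :
    (∫⁻ r in Set.Ioi (0:ℝ), ∫⁻ u in Set.Ioi (0:ℝ),
        ENNReal.ofReal (r ^ (-H - 1/2) * u ^ (-H - 1/2)) * f (|r - u|)) =
      2 * (∫⁻ u in Set.Ioi (1:ℝ), ENNReal.ofReal ((u - 1) ^ (-H - 1/2) * u ^ (-H - 1/2))) *
        (∫⁻ r in Set.Ioi (0:ℝ), f r * ENNReal.ofReal (r ^ (-2 * H))) := by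
  obtain ⟨hH0, hH2⟩ := hH
  set a : ℝ := -H - 1/2 with ha
  have hra : Measurable fun x : ℝ => x ^ a := measurable_rpow_const' a
  set Φ : ℝ → ℝ → ENNReal := fun r u => ENNReal.ofReal (r ^ a * u ^ a) * f |r - u| with hΦdef
  have hΦm : Measurable fun p : ℝ × ℝ => Φ p.1 p.2 := by
    refine Measurable.mul ?_ ?_
    · exact ((hra.comp measurable_fst).mul (hra.comp measurable_snd)).ennreal_ofReal
    · exact hf.comp ((measurable_fst.sub measurable_snd).abs)
  have hΦsymm : ∀ r u : ℝ, Φ r u = Φ u r := by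
    intro r u
    simp only [hΦdef]
    rw [mul_comm (r ^ a), abs_sub_comm]
  -- split inner integral
  have hA : ∀ r : ℝ, 0 < r → (∫⁻ u in Ioi (0:ℝ), Φ r u)
      = (∫⁻ u in Ioi (0:ℝ), (Iic r).indicator (Φ r) u) + ∫⁻ u in Ioi r, Φ r u := by
    intro r hr
    have h1 : (∫⁻ u in Ioi (0:ℝ), (Iic r).indicator (Φ r) u) = ∫⁻ u in Ioc 0 r, Φ r u := by
      have hset : Iic r ∩ Ioi (0:ℝ) = Ioc 0 r := by
        ext x
        simp only [mem_inter_iff, mem_Iic, mem_Ioi, mem_Ioc]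
        tauto
      rw [lintegral_indicator measurableSet_Iic, Measure.restrict_restrict measurableSet_Iic, hset]
    rw [h1, ← lintegral_union measurableSet_Ioi (Set.Ioc_disjoint_Ioi le_rfl),
      Set.Ioc_union_Ioi_eq_Ioi hr.le]
  have hInd : Measurable fun p : ℝ × ℝ => (Iic p.1).indicator (Φ p.1) p.2 := by
    have h : (fun p : ℝ × ℝ => (Iic p.1).indicator (Φ p.1) p.2)
        = {p : ℝ × ℝ | p.2 ≤ p.1}.indicator (fun p => Φ p.1 p.2) := by
      funext p
      by_cases h : p.2 ≤ p.1 <;> simp [Set.indicator_apply, h]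
    rw [h]
    exact hΦm.indicator (measurableSet_le measurable_snd measurable_fst)
  have hAmeas : Measurable fun r : ℝ => ∫⁻ u in Ioi (0:ℝ), (Iic r).indicator (Φ r) u :=
    Measurable.lintegral_prod_right hInd
  have step1 : (∫⁻ r in Ioi (0:ℝ), ∫⁻ u in Ioi (0:ℝ), Φ r u)
      = (∫⁻ r in Ioi (0:ℝ), ∫⁻ u in Ioi (0:ℝ), (Iic r).indicator (Φ r) u)
        + ∫⁻ r in Ioi (0:ℝ), ∫⁻ u in Ioi r, Φ r u := by
    rw [← lintegral_add_left hAmeas]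
    exact setLIntegral_congr_fun measurableSet_Ioi (fun r hr => hA r hr)
  have hswap1 : (∫⁻ r in Ioi (0:ℝ), ∫⁻ u in Ioi (0:ℝ), (Iic r).indicator (Φ r) u)
      = ∫⁻ u in Ioi (0:ℝ), ∫⁻ r in Ioi (0:ℝ), (Iic r).indicator (Φ r) u :=
    lintegral_lintegral_swap hInd.aemeasurable
  have hB : ∀ u : ℝ, 0 < u → (∫⁻ r in Ioi (0:ℝ), (Iic r).indicator (Φ r) u)
      = ∫⁻ r in Ioi u, Φ u r := by
    intro u hu
    have h1 : (fun r => (Iic r).indicator (Φ r) u) = (Ici u).indicator (fun r => Φ r u) := by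
      funext r
      by_cases h : u ≤ r <;> simp [Set.indicator_apply, h]
    rw [h1, lintegral_indicator measurableSet_Ici, Measure.restrict_restrict measurableSet_Ici]
    have h2 : Ici u ∩ Ioi (0:ℝ) = Ici u :=
      inter_eq_left.mpr (fun x hx => lt_of_lt_of_le hu hx)
    rw [h2, ← Measure.restrict_congr_set Ioi_ae_eq_Ici]
    exact setLIntegral_congr_fun measurableSet_Ioi (fun r _ => hΦsymm r u)
  have hT1 : (∫⁻ u in Ioi (0:ℝ), ∫⁻ r in Ioi (0:ℝ), (Iic r).indicator (Φ r) u)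
      = ∫⁻ r in Ioi (0:ℝ), ∫⁻ u in Ioi r, Φ r u :=
    setLIntegral_congr_fun measurableSet_Ioi (fun u hu => hB u hu)
  -- translation in inner integral
  have htrans : ∀ r : ℝ, (∫⁻ u in Ioi r, Φ r u)
      = ∫⁻ v in Ioi (0:ℝ), ENNReal.ofReal (r ^ a * (v + r) ^ a) * f v := by
    intro r
    rw [ltrans r (Φ r)]
    refine setLIntegral_congr_fun measurableSet_Ioi (fun v hv => ?_)
    have habs : |r - (v + r)| = v := by
      rw [show r - (v + r) = -v by ring, abs_neg, abs_of_pos hv]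
    simp only [hΦdef, habs]
  have hG : Measurable fun p : ℝ × ℝ => ENNReal.ofReal (p.1 ^ a * (p.2 + p.1) ^ a) * f p.2 :=
    (((hra.comp measurable_fst).mul (hra.comp (measurable_snd.add measurable_fst))).ennreal_ofReal).mul
      (hf.comp measurable_snd)
  have hswap2 : (∫⁻ r in Ioi (0:ℝ), ∫⁻ u in Ioi r, Φ r u)
      = ∫⁻ v in Ioi (0:ℝ), ∫⁻ r in Ioi (0:ℝ), ENNReal.ofReal (r ^ a * (v + r) ^ a) * f v := by
    calc (∫⁻ r in Ioi (0:ℝ), ∫⁻ u in Ioi r, Φ r u)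
        = ∫⁻ r in Ioi (0:ℝ), ∫⁻ v in Ioi (0:ℝ), ENNReal.ofReal (r ^ a * (v + r) ^ a) * f v :=
          setLIntegral_congr_fun measurableSet_Ioi (fun r _ => htrans r)
      _ = _ := lintegral_lintegral_swap hG.aemeasurable
  -- the constant K as an integral over (0,∞)
  have hK : (∫⁻ u in Ioi (1:ℝ), ENNReal.ofReal ((u - 1) ^ a * u ^ a))
      = ∫⁻ w in Ioi (0:ℝ), ENNReal.ofReal (w ^ a * (1 + w) ^ a) := by
    rw [ltrans 1]
    refine setLIntegral_congr_fun measurableSet_Ioi (fun w hw => ?_)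
    rw [add_sub_cancel_right, add_comm w 1]
  set K : ENNReal := ∫⁻ u in Ioi (1:ℝ), ENNReal.ofReal ((u - 1) ^ a * u ^ a) with hKdef
  -- inner integral in r, for fixed v > 0
  have hinner : ∀ v : ℝ, 0 < v → (∫⁻ r in Ioi (0:ℝ), ENNReal.ofReal (r ^ a * (v + r) ^ a))
      = ENNReal.ofReal (v ^ (-2 * H)) * K := by
    intro v hv
    have hGm : Measurable fun r : ℝ => ENNReal.ofReal (r ^ a * (v + r) ^ a) :=
      ((hra.mul (hra.comp (measurable_id.const_add v))).ennreal_ofReal)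
    rw [lscale v hv _ hGm]
    have hcong : (∫⁻ w in Ioi (0:ℝ), ENNReal.ofReal ((v * w) ^ a * (v + v * w) ^ a))
        = ∫⁻ w in Ioi (0:ℝ),
            ENNReal.ofReal (v ^ a * v ^ a) * ENNReal.ofReal (w ^ a * (1 + w) ^ a) := by
      refine setLIntegral_congr_fun measurableSet_Ioi (fun w hw => ?_)
      have hw' : (0:ℝ) < w := hw
      have h1 : (v * w) ^ a = v ^ a * w ^ a := Real.mul_rpow hv.le hw'.le
      have h2 : v + v * w = v * (1 + w) := by ring
      have h3 : (v * (1 + w)) ^ a = v ^ a * (1 + w) ^ a :=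
        Real.mul_rpow hv.le (by linarith [hw'] : (0:ℝ) ≤ 1 + w)
      rw [h1, h2, h3, ← ENNReal.ofReal_mul
        (mul_nonneg (Real.rpow_nonneg hv.le a) (Real.rpow_nonneg hv.le a))]
      ring_nf
    have hm2 : Measurable fun w : ℝ => ENNReal.ofReal (w ^ a * (1 + w) ^ a) :=
      ((hra.mul (hra.comp (measurable_const.add measurable_id))).ennreal_ofReal)
    rw [hcong, lintegral_const_mul _ hm2, ← hK, ← mul_assoc, ← ENNReal.ofReal_mul hv.le]
    congr 2
    have h4 : v ^ a * v ^ a = v ^ (a + a) := (Real.rpow_add hv a a).symm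
    rw [h4]
    calc v * v ^ (a + a) = v ^ (1:ℝ) * v ^ (a + a) := by rw [Real.rpow_one]
      _ = v ^ (1 + (a + a)) := (Real.rpow_add hv _ _).symm
      _ = v ^ (-2 * H) := by
          congr 1
          rw [ha]; ring
  -- put it together
  have hTval : (∫⁻ r in Ioi (0:ℝ), ∫⁻ u in Ioi r, Φ r u)
      = (∫⁻ r in Ioi (0:ℝ), f r * ENNReal.ofReal (r ^ (-2 * H))) * K := by
    rw [hswap2]
    have h1 : (∫⁻ v in Ioi (0:ℝ), ∫⁻ r in Ioi (0:ℝ), ENNReal.ofReal (r ^ a * (v + r) ^ a) * f v)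
        = ∫⁻ v in Ioi (0:ℝ), (f v * ENNReal.ofReal (v ^ (-2 * H))) * K := by
      refine setLIntegral_congr_fun measurableSet_Ioi (fun v hv => ?_)
      have hm3 : Measurable fun r : ℝ => ENNReal.ofReal (r ^ a * (v + r) ^ a) :=
        ((hra.mul (hra.comp (measurable_id.const_add v))).ennreal_ofReal)
      rw [lintegral_mul_const _ hm3, hinner v hv]
      ring
    have hm4 : Measurable fun r : ℝ => f r * ENNReal.ofReal (r ^ (-2 * H)) :=
      hf.mul (measurable_rpow_const' (-2 * H)).ennreal_ofReal
    rw [h1, lintegral_mul_const _ hm4]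
  calc (∫⁻ r in Ioi (0:ℝ), ∫⁻ u in Ioi (0:ℝ),
        ENNReal.ofReal (r ^ a * u ^ a) * f |r - u|)
      = ∫⁻ r in Ioi (0:ℝ), ∫⁻ u in Ioi (0:ℝ), Φ r u := rfl
    _ = (∫⁻ r in Ioi (0:ℝ), ∫⁻ u in Ioi r, Φ r u)
        + ∫⁻ r in Ioi (0:ℝ), ∫⁻ u in Ioi r, Φ r u := by
        rw [step1, hswap1, hT1]
    _ = 2 * K * (∫⁻ r in Ioi (0:ℝ), f r * ENNReal.ofReal (r ^ (-2 * H))) := by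
        rw [hTval, ← two_mul]
        ring
end

section
/- Let H ∈ (0,1/2) and let c : [0,∞) → ℝ be measurable. Suppose there is C > 0 such that |c(t)| ≤ C for all t ≥ 0 and |c(t)| ≤ C·t^{H−3/2} for all t ≥ 1. Then ∫₀^∞ ∫₀^∞ r^{−H−1/2} u^{−H−1/2} |c(|r−u|)| du dr < ∞. -/
open MeasureTheory

open intervalIntegral in
private lemma aux_Ioc {a : ℝ} (ha0 : 0 < a) (ha1 : a < 1) {s : ℝ} (hs : 0 < s) :
    ∫⁻ u in Set.Ioc (0:ℝ) s, ENNReal.ofReal (u ^ (-a)) = ENNReal.ofReal (s ^ (1-a) / (1-a)) := by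
  have hInt : IntegrableOn (fun u : ℝ => u ^ (-a)) (Set.Ioc 0 s) := by
    rw [← intervalIntegrable_iff_integrableOn_Ioc_of_le hs.le]
    exact intervalIntegral.intervalIntegrable_rpow' (by linarith)
  have nn : 0 ≤ᵐ[volume.restrict (Set.Ioc (0:ℝ) s)] fun u : ℝ => u ^ (-a) := by
    filter_upwards [ae_restrict_mem measurableSet_Ioc] with u hu
    exact Real.rpow_nonneg hu.1.le _
  rw [← ofReal_integral_eq_lintegral_ofReal hInt nn]
  congr 1
  rw [← intervalIntegral.integral_of_le hs.le]
  rw [integral_rpow (Or.inl (by linarith : (-1:ℝ) < -a)),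
    Real.zero_rpow (by linarith : -a + 1 ≠ 0)]
  rw [show -a + 1 = 1 - a by ring]
  ring

theorem stmt8 (H : ℝ) (hH : H ∈ Set.Ioo (0:ℝ) (1/2)) (c : ℝ → ℝ) (hc : Measurable c)
    (C : ℝ) (hC : 0 < C) (hb0 : ∀ t : ℝ, 0 ≤ t → |c t| ≤ C)
    (hb1 : ∀ t : ℝ, 1 ≤ t → |c t| ≤ C * t ^ (H - 3/2)) :
    (∫⁻ r in Set.Ioi (0:ℝ), ∫⁻ u in Set.Ioi (0:ℝ),
        ENNReal.ofReal (r ^ (-H - 1/2) * u ^ (-H - 1/2) * |c (|r - u|)|)) < ⊤ := by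
  obtain ⟨hH0, hH2⟩ := hH
  simp only [show -H - 1/2 = -(H + 1/2) from by ring]
  set a : ℝ := H + 1/2 with ha_def
  set e : ℝ := H - 3/2 with he_def
  have ha0 : 0 < a := by rw [ha_def]; linarith
  have hah : 1/2 < a := by rw [ha_def]; linarith
  have ha1 : a < 1 := by rw [ha_def]; linarith
  have he : e < -1 := by rw [he_def]; linarith
  have he0 : e ≤ 0 := by linarith
  -- the majorant G
  set G : ℝ → ℝ := fun t => Real.exp (e * Real.log (max |t| 1)) with hG_def
  have hGpos : ∀ t, 0 < G t := fun t => Real.exp_pos _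
  have hGmeas : Measurable G :=
    Real.measurable_exp.comp ((Real.measurable_log.comp
      (measurable_abs.max measurable_const)).const_mul e)
  have hGe : ∀ t : ℝ, 1 ≤ |t| → G t = |t| ^ e := by
    intro t ht
    rw [hG_def]
    simp only [max_eq_left ht]
    rw [Real.rpow_def_of_pos (by linarith), mul_comm]
  have hGle1 : ∀ t, G t ≤ 1 := by
    intro t
    simp only [hG_def, Real.exp_le_one_iff]
    exact mul_nonpos_of_nonpos_of_nonneg he0 (Real.log_nonneg (le_max_right _ _))
  have hcG : ∀ t : ℝ, |c (|t|)| ≤ C * G t := by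
    intro t
    rcases le_or_gt (|t|) 1 with h | h
    · have : G t = 1 := by
        rw [hG_def]; simp only [max_eq_right h, Real.log_one, mul_zero, Real.exp_zero]
      rw [this, mul_one]
      exact hb0 _ (abs_nonneg t)
    · rw [hGe t h.le]
      exact hb1 _ h.le
  -- total mass of G
  set MG : ENNReal := ∫⁻ (t : ℝ), ENNReal.ofReal (G t) with hMG_def
  have hFmeas : Measurable fun t => ENNReal.ofReal (G t) :=
    ENNReal.measurable_ofReal.comp hGmeas
  have hIoi1int : IntegrableOn (fun x : ℝ => x ^ e) (Set.Ioi 1) :=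
    (integrableOn_Ioi_rpow_iff zero_lt_one).2 he
  have hIoi1 : (∫⁻ x in Set.Ioi (1:ℝ), ENNReal.ofReal (G x)) < ⊤ := by
    have heq : ∫⁻ x in Set.Ioi (1:ℝ), ENNReal.ofReal (G x)
        = ∫⁻ x in Set.Ioi (1:ℝ), ENNReal.ofReal (x ^ e) := by
      refine setLIntegral_congr_fun measurableSet_Ioi (fun x hx => ?_)
      have hx1 : (1:ℝ) ≤ x := le_of_lt hx
      rw [hGe x (by rwa [abs_of_pos (by linarith)]), abs_of_pos (by linarith)]
    rw [heq]
    exact hIoi1int.setLIntegral_lt_top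
  have hIio : (∫⁻ x in Set.Iio (-1:ℝ), ENNReal.ofReal (G x)) < ⊤ := by
    have hmap : ∫⁻ x in Set.Iio (-1:ℝ), ENNReal.ofReal (G x)
        = ∫⁻ x in Set.Ioi (1:ℝ), ENNReal.ofReal (G (-x)) := by
      conv_lhs => rw [← Measure.map_neg_eq_self (volume : Measure ℝ)]
      have hpre : (Neg.neg ⁻¹' Set.Iio (-1:ℝ)) = Set.Ioi (1:ℝ) := by
        ext x
        simp only [Set.mem_preimage, Set.mem_Iio, Set.mem_Ioi]
        constructor <;> intro h <;> linarith
      rw [setLIntegral_map measurableSet_Iio hFmeas measurable_neg, hpre]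
    rw [hmap]
    have heq : ∫⁻ x in Set.Ioi (1:ℝ), ENNReal.ofReal (G (-x))
        = ∫⁻ x in Set.Ioi (1:ℝ), ENNReal.ofReal (x ^ e) := by
      refine setLIntegral_congr_fun measurableSet_Ioi (fun x hx => ?_)
      have hx1 : (1:ℝ) < x := hx
      rw [hGe (-x) (by rw [abs_neg, abs_of_pos (by linarith)]; linarith),
        abs_neg, abs_of_pos (by linarith)]
    rw [heq]
    exact hIoi1int.setLIntegral_lt_top
  have hIcc : (∫⁻ x in Set.Icc (-1:ℝ) 1, ENNReal.ofReal (G x)) < ⊤ := by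
    calc (∫⁻ x in Set.Icc (-1:ℝ) 1, ENNReal.ofReal (G x))
        ≤ ∫⁻ _x in Set.Icc (-1:ℝ) 1, 1 := by
          refine setLIntegral_mono' measurableSet_Icc fun x _ => ?_
          simpa using ENNReal.ofReal_le_ofReal (hGle1 x)
      _ = volume (Set.Icc (-1:ℝ) 1) := by rw [setLIntegral_const, one_mul]
      _ < ⊤ := by rw [Real.volume_Icc]; exact ENNReal.ofReal_lt_top
  have hMG : MG < ⊤ := by
    have hsplit : (Set.univ : Set ℝ) = Set.Iio (-1) ∪ (Set.Icc (-1) 1 ∪ Set.Ioi 1) := by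
      ext x
      simp only [Set.mem_univ, Set.mem_union, Set.mem_Iio, Set.mem_Icc, Set.mem_Ioi, true_iff]
      rcases lt_trichotomy x (-1) with h | h | h
      · exact Or.inl h
      · exact Or.inr (Or.inl ⟨le_of_eq h.symm, by linarith⟩)
      · rcases le_or_gt x 1 with h' | h'
        · exact Or.inr (Or.inl ⟨h.le, h'⟩)
        · exact Or.inr (Or.inr h')
    have : MG = ∫⁻ t in (Set.univ : Set ℝ), ENNReal.ofReal (G t) := by
      rw [Measure.restrict_univ]
    rw [this, hsplit,
      lintegral_union (measurableSet_Icc.union measurableSet_Ioi)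
        (by
          rw [Set.disjoint_union_right]
          constructor
          · exact Set.disjoint_left.2 fun x hx hx2 => absurd hx2.1 (by simpa using hx)
          · exact Set.disjoint_left.2 fun x hx hx2 => by
              simp only [Set.mem_Iio] at hx; simp only [Set.mem_Ioi] at hx2; linarith),
      lintegral_union measurableSet_Ioi
        (Set.disjoint_left.2 fun x hx hx2 => by
          simp only [Set.mem_Icc] at hx; simp only [Set.mem_Ioi] at hx2; linarith)]
    exact ENNReal.add_lt_top.2 ⟨hIio, ENNReal.add_lt_top.2 ⟨hIcc, hIoi1⟩⟩
  -- translation invariance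
  have htrans : ∀ r : ℝ, (∫⁻ u : ℝ, ENNReal.ofReal (G (r - u))) = MG := fun r =>
    (Measure.measurePreserving_sub_left volume r).lintegral_comp hFmeas
  -- the inner integral
  set J : ℝ → ENNReal := fun r =>
    ∫⁻ u in Set.Ioi (0:ℝ), ENNReal.ofReal (u ^ (-a) * (C * G (r - u))) with hJ_def
  set B : ENNReal := ENNReal.ofReal C * ENNReal.ofReal ((1:ℝ) ^ (1-a) / (1-a))
      + ENNReal.ofReal C * MG with hB_def
  have hBne : B ≠ ⊤ := by
    rw [hB_def]
    exact (ENNReal.add_lt_top.2 ⟨ENNReal.mul_lt_top ENNReal.ofReal_lt_top ENNReal.ofReal_lt_top,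
      ENNReal.mul_lt_top ENNReal.ofReal_lt_top hMG⟩).ne
  have hJ1 : ∀ r : ℝ, J r ≤ B := by
    intro r
    rw [hJ_def]
    simp only []
    rw [show Set.Ioi (0:ℝ) = Set.Ioc 0 1 ∪ Set.Ioi 1 from
      (Set.Ioc_union_Ioi_eq_Ioi zero_le_one).symm,
      lintegral_union measurableSet_Ioi Set.Ioc_disjoint_Ioi_same, hB_def]
    refine add_le_add ?_ ?_
    · calc (∫⁻ u in Set.Ioc (0:ℝ) 1, ENNReal.ofReal (u ^ (-a) * (C * G (r - u))))
          ≤ ∫⁻ u in Set.Ioc (0:ℝ) 1, ENNReal.ofReal C * ENNReal.ofReal (u ^ (-a)) := by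
            refine setLIntegral_mono' measurableSet_Ioc fun u hu => ?_
            rw [← ENNReal.ofReal_mul hC.le]
            refine ENNReal.ofReal_le_ofReal ?_
            rw [mul_comm (u ^ (-a))]
            refine mul_le_mul_of_nonneg_right ?_ (Real.rpow_nonneg hu.1.le _)
            calc C * G (r - u) ≤ C * 1 :=
                  mul_le_mul_of_nonneg_left (hGle1 _) hC.le
              _ = C := mul_one C
        _ = ENNReal.ofReal C * ∫⁻ u in Set.Ioc (0:ℝ) 1, ENNReal.ofReal (u ^ (-a)) :=
            lintegral_const_mul' _ _ ENNReal.ofReal_ne_top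
        _ = ENNReal.ofReal C * ENNReal.ofReal ((1:ℝ) ^ (1-a) / (1-a)) := by
            rw [aux_Ioc ha0 ha1 zero_lt_one]
    · calc (∫⁻ u in Set.Ioi (1:ℝ), ENNReal.ofReal (u ^ (-a) * (C * G (r - u))))
          ≤ ∫⁻ u in Set.Ioi (1:ℝ), ENNReal.ofReal (C * G (r - u)) := by
            refine setLIntegral_mono' measurableSet_Ioi fun u hu => ?_
            refine ENNReal.ofReal_le_ofReal ?_
            have h1 : u ^ (-a) ≤ 1 :=
              Real.rpow_le_one_of_one_le_of_nonpos (le_of_lt hu) (by linarith)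
            calc u ^ (-a) * (C * G (r - u)) ≤ 1 * (C * G (r - u)) :=
                  mul_le_mul_of_nonneg_right h1
                    (mul_nonneg hC.le (hGpos _).le)
              _ = C * G (r - u) := one_mul _
        _ ≤ ∫⁻ u : ℝ, ENNReal.ofReal (C * G (r - u)) := setLIntegral_le_lintegral _ _
        _ = ENNReal.ofReal C * ∫⁻ u : ℝ, ENNReal.ofReal (G (r - u)) := by
            simp_rw [ENNReal.ofReal_mul hC.le]
            exact lintegral_const_mul' _ _ ENNReal.ofReal_ne_top
        _ = ENNReal.ofReal C * MG := by rw [htrans r]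
  set D : ENNReal := ENNReal.ofReal (2*C/(1-a)) + ENNReal.ofReal (2*C) * MG with hD_def
  have hDne : D ≠ ⊤ := by
    rw [hD_def]
    exact (ENNReal.add_lt_top.2 ⟨ENNReal.ofReal_lt_top,
      ENNReal.mul_lt_top ENNReal.ofReal_lt_top hMG⟩).ne
  have hJ2 : ∀ r : ℝ, 2 ≤ r → J r ≤ ENNReal.ofReal (r ^ (-a)) * D := by
    intro r hr
    have hr0 : (0:ℝ) < r := by linarith
    have hr20 : (0:ℝ) < r / 2 := by linarith
    have hr21 : (1:ℝ) ≤ r / 2 := by linarith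
    rw [hJ_def]
    simp only []
    rw [show Set.Ioi (0:ℝ) = Set.Ioc 0 (r/2) ∪ Set.Ioi (r/2) from
      (Set.Ioc_union_Ioi_eq_Ioi hr20.le).symm,
      lintegral_union measurableSet_Ioi Set.Ioc_disjoint_Ioi_same, hD_def, mul_add]
    refine add_le_add ?_ ?_
    · -- near piece
      have hGbd : ∀ u ∈ Set.Ioc (0:ℝ) (r/2), G (r - u) ≤ (r/2) ^ e := by
        intro u hu
        have h1 : r / 2 ≤ r - u := by
          have := hu.2; linarith
        have h2 : (1:ℝ) ≤ r - u := le_trans hr21 h1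
        rw [hGe (r - u) (by rwa [abs_of_pos (by linarith)]), abs_of_pos (by linarith)]
        exact Real.rpow_le_rpow_of_nonpos hr20 h1 he0
      calc (∫⁻ u in Set.Ioc (0:ℝ) (r/2), ENNReal.ofReal (u ^ (-a) * (C * G (r - u))))
          ≤ ∫⁻ u in Set.Ioc (0:ℝ) (r/2),
              ENNReal.ofReal (C * (r/2) ^ e) * ENNReal.ofReal (u ^ (-a)) := by
            refine setLIntegral_mono' measurableSet_Ioc fun u hu => ?_
            rw [← ENNReal.ofReal_mul (mul_nonneg hC.le (Real.rpow_nonneg hr20.le _))]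
            refine ENNReal.ofReal_le_ofReal ?_
            rw [mul_comm (u ^ (-a))]
            refine mul_le_mul_of_nonneg_right ?_ (Real.rpow_nonneg hu.1.le _)
            exact mul_le_mul_of_nonneg_left (hGbd u hu) hC.le
        _ = ENNReal.ofReal (C * (r/2) ^ e)
              * ∫⁻ u in Set.Ioc (0:ℝ) (r/2), ENNReal.ofReal (u ^ (-a)) :=
            lintegral_const_mul' _ _ ENNReal.ofReal_ne_top
        _ = ENNReal.ofReal (C * (r/2) ^ e * ((r/2) ^ (1-a) / (1-a))) := by
            rw [aux_Ioc ha0 ha1 hr20, ← ENNReal.ofReal_mul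
              (mul_nonneg hC.le (Real.rpow_nonneg hr20.le _))]
        _ ≤ ENNReal.ofReal (r ^ (-a)) * ENNReal.ofReal (2*C/(1-a)) := by
            rw [← ENNReal.ofReal_mul (Real.rpow_nonneg hr0.le _)]
            refine ENNReal.ofReal_le_ofReal ?_
            have key : C * (r/2) ^ e * ((r/2) ^ (1-a) / (1-a))
                = C / (1-a) * (r/2) ^ (e + (1-a)) := by
              rw [Real.rpow_add hr20]; ring
            rw [key, show e + (1-a) = -1 by rw [he_def, ha_def]; ring]
            have h1 : (r/2 : ℝ) ^ (-1 : ℝ) = 2 * r ^ (-1 : ℝ) := by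
              rw [Real.rpow_neg_one, Real.rpow_neg_one]
              field_simp
            rw [h1]
            have h2 : r ^ (-1:ℝ) ≤ r ^ (-a) :=
              Real.rpow_le_rpow_of_exponent_le (by linarith) (by linarith)
            have hC1a : 0 < C / (1-a) := div_pos hC (by linarith)
            calc C / (1-a) * (2 * r ^ (-1:ℝ)) ≤ C / (1-a) * (2 * r ^ (-a)) := by
                  refine mul_le_mul_of_nonneg_left ?_ hC1a.le
                  exact mul_le_mul_of_nonneg_left h2 (by norm_num)
              _ = r ^ (-a) * (2*C/(1-a)) := by ring
    · -- far piece
      have hu_bd : ∀ u ∈ Set.Ioi (r/2), u ^ (-a) ≤ 2 * r ^ (-a) := by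
        intro u hu
        have h1 : u ^ (-a) ≤ (r/2) ^ (-a) :=
          Real.rpow_le_rpow_of_nonpos hr20 (le_of_lt hu) (by linarith)
        have h2 : (r/2 : ℝ) ^ (-a) = r ^ (-a) * 2 ^ a := by
          rw [div_eq_mul_inv, Real.mul_rpow hr0.le (by norm_num),
            ← Real.rpow_neg_one (2:ℝ), ← Real.rpow_mul (by norm_num : (0:ℝ) ≤ 2)]
          norm_num
        have h3 : (2:ℝ) ^ a ≤ 2 := by
          calc (2:ℝ) ^ a ≤ 2 ^ (1:ℝ) :=
                Real.rpow_le_rpow_of_exponent_le one_le_two ha1.le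
            _ = 2 := Real.rpow_one 2
        calc u ^ (-a) ≤ r ^ (-a) * 2 ^ a := h2 ▸ h1
          _ ≤ r ^ (-a) * 2 := mul_le_mul_of_nonneg_left h3 (Real.rpow_nonneg hr0.le _)
          _ = 2 * r ^ (-a) := mul_comm _ _
      calc (∫⁻ u in Set.Ioi (r/2), ENNReal.ofReal (u ^ (-a) * (C * G (r - u))))
          ≤ ∫⁻ u in Set.Ioi (r/2),
              ENNReal.ofReal (2 * C * r ^ (-a)) * ENNReal.ofReal (G (r - u)) := by
            refine setLIntegral_mono' measurableSet_Ioi fun u hu => ?_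
            rw [← ENNReal.ofReal_mul (by positivity)]
            refine ENNReal.ofReal_le_ofReal ?_
            calc u ^ (-a) * (C * G (r - u)) ≤ (2 * r ^ (-a)) * (C * G (r - u)) :=
                  mul_le_mul_of_nonneg_right (hu_bd u hu)
                    (mul_nonneg hC.le (hGpos _).le)
              _ = 2 * C * r ^ (-a) * G (r - u) := by ring
        _ ≤ ∫⁻ u : ℝ, ENNReal.ofReal (2 * C * r ^ (-a)) * ENNReal.ofReal (G (r - u)) :=
            setLIntegral_le_lintegral _ _
        _ = ENNReal.ofReal (2 * C * r ^ (-a)) * ∫⁻ u : ℝ, ENNReal.ofReal (G (r - u)) :=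
            lintegral_const_mul' _ _ ENNReal.ofReal_ne_top
        _ = ENNReal.ofReal (r ^ (-a)) * (ENNReal.ofReal (2*C) * MG) := by
            rw [htrans r, show 2 * C * r ^ (-a) = r ^ (-a) * (2 * C) by ring,
              ENNReal.ofReal_mul (Real.rpow_nonneg hr0.le _), mul_assoc]
  -- main estimate
  calc (∫⁻ r in Set.Ioi (0:ℝ), ∫⁻ u in Set.Ioi (0:ℝ),
        ENNReal.ofReal (r ^ (-a) * u ^ (-a) * |c (|r - u|)|))
      ≤ ∫⁻ r in Set.Ioi (0:ℝ), ENNReal.ofReal (r ^ (-a)) * J r := by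
        refine setLIntegral_mono' measurableSet_Ioi fun r hr => ?_
        have hr0 : (0:ℝ) < r := hr
        rw [hJ_def]
        simp only []
        rw [← lintegral_const_mul' _ _ ENNReal.ofReal_ne_top]
        refine setLIntegral_mono' measurableSet_Ioi fun u hu => ?_
        have hu0 : (0:ℝ) < u := hu
        rw [← ENNReal.ofReal_mul (Real.rpow_nonneg hr0.le _)]
        refine ENNReal.ofReal_le_ofReal ?_
        calc r ^ (-a) * u ^ (-a) * |c (|r - u|)|
            = r ^ (-a) * (u ^ (-a) * |c (|r - u|)|) := mul_assoc _ _ _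
          _ ≤ r ^ (-a) * (u ^ (-a) * (C * G (r - u))) := by
              refine mul_le_mul_of_nonneg_left ?_ (Real.rpow_nonneg hr0.le _)
              exact mul_le_mul_of_nonneg_left (hcG (r - u)) (Real.rpow_nonneg hu0.le _)
    _ < ⊤ := by
        rw [show Set.Ioi (0:ℝ) = Set.Ioc 0 2 ∪ Set.Ioi 2 from
          (Set.Ioc_union_Ioi_eq_Ioi (by norm_num)).symm,
          lintegral_union measurableSet_Ioi Set.Ioc_disjoint_Ioi_same]
        refine ENNReal.add_lt_top.2 ⟨?_, ?_⟩
        · calc (∫⁻ r in Set.Ioc (0:ℝ) 2, ENNReal.ofReal (r ^ (-a)) * J r)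
              ≤ ∫⁻ r in Set.Ioc (0:ℝ) 2, ENNReal.ofReal (r ^ (-a)) * B :=
                setLIntegral_mono' measurableSet_Ioc fun r _ =>
                  mul_le_mul_right (hJ1 r) _
            _ = (∫⁻ r in Set.Ioc (0:ℝ) 2, ENNReal.ofReal (r ^ (-a))) * B :=
                lintegral_mul_const' _ _ hBne
            _ < ⊤ := ENNReal.mul_lt_top
                (by rw [aux_Ioc ha0 ha1 (by norm_num : (0:ℝ) < 2)]
                    exact ENNReal.ofReal_lt_top)
                (lt_top_iff_ne_top.2 hBne)
        · calc (∫⁻ r in Set.Ioi (2:ℝ), ENNReal.ofReal (r ^ (-a)) * J r)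
              ≤ ∫⁻ r in Set.Ioi (2:ℝ), ENNReal.ofReal (r ^ (-a - a)) * D := by
                refine setLIntegral_mono' measurableSet_Ioi fun r hr => ?_
                have hr0 : (0:ℝ) < r := by
                  have : (2:ℝ) < r := hr; linarith
                calc ENNReal.ofReal (r ^ (-a)) * J r
                    ≤ ENNReal.ofReal (r ^ (-a)) * (ENNReal.ofReal (r ^ (-a)) * D) :=
                      mul_le_mul_right (hJ2 r (le_of_lt hr)) _
                  _ = ENNReal.ofReal (r ^ (-a - a)) * D := by
                      rw [← mul_assoc, ← ENNReal.ofReal_mul (Real.rpow_nonneg hr0.le _),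
                        ← Real.rpow_add hr0, show -a + -a = -a - a by ring]
            _ = (∫⁻ r in Set.Ioi (2:ℝ), ENNReal.ofReal (r ^ (-a - a))) * D :=
                lintegral_mul_const' _ _ hDne
            _ < ⊤ := by
                refine ENNReal.mul_lt_top ?_ (lt_top_iff_ne_top.2 hDne)
                have : IntegrableOn (fun r : ℝ => r ^ (-a - a)) (Set.Ioi 2) :=
                  (integrableOn_Ioi_rpow_iff (by norm_num : (0:ℝ) < 2)).2 (by rw [ha_def]; linarith)
                exact this.setLIntegral_lt_top
end

section
/- Let H ∈ (0,1/2) and let c : [0,∞) → ℝ be measurable with ∫₀^∞ ∫₀^∞ r^{−H−1/2} u^{−H−1/2} |c(|r−u|)| du dr < ∞. Then lim_{T→∞} (1/T) ∫₀^T ∫₀^t ∫₀^t r^{−H−1/2} u^{−H−1/2} · (1 − (1 − r/t)^{1/2−H}) · (1 − (1 − u/t)^{1/2−H}) · c(|r−u|) du dr dt = 0. -/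
open MeasureTheory

open Set Filter in
/-- Cesàro mean of a bounded measurable function tending to zero tends to zero. -/
lemma cesaro_integral {φ : ℝ → ℝ} {M : ℝ}
    (hm : AEStronglyMeasurable φ (volume : Measure ℝ))
    (hb : ∀ t, ‖φ t‖ ≤ M)
    (h : Tendsto φ atTop (nhds 0)) :
    Tendsto (fun T : ℝ => (1 / T) * ∫ t in Ioc (0:ℝ) T, φ t) atTop (nhds 0) := by
  have hM : 0 ≤ M := le_trans (norm_nonneg _) (hb 0)
  have hφint : ∀ T : ℝ, IntegrableOn φ (Ioc (0:ℝ) T) := by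
    intro T
    exact Integrable.mono' (integrableOn_const measure_Ioc_lt_top.ne)
      hm.restrict (Filter.Eventually.of_forall fun t => hb t)
  rw [NormedAddCommGroup.tendsto_nhds_zero]
  intro ε hε
  have h4 : (0:ℝ) < ε / 4 := by positivity
  obtain ⟨T₁, hT₁⟩ := Filter.eventually_atTop.mp
    (NormedAddCommGroup.tendsto_nhds_zero.mp h (ε / 4) h4)
  set T₀ : ℝ := max T₁ 0 with hT₀def
  have hT₀0 : 0 ≤ T₀ := le_max_right _ _
  filter_upwards [Filter.eventually_ge_atTop (max T₀ 1),
    Filter.eventually_ge_atTop (4 * M * T₀ / ε + 1)] with T h1 h2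
  have hT1 : (1:ℝ) ≤ T := le_trans (le_max_right _ _) h1
  have hTT₀ : T₀ ≤ T := le_trans (le_max_left _ _) h1
  have hT0 : 0 < T := lt_of_lt_of_le one_pos hT1
  -- split the integral
  have hsplit : ∫ t in Ioc (0:ℝ) T, φ t
      = (∫ t in Ioc (0:ℝ) T₀, φ t) + ∫ t in Ioc T₀ T, φ t := by
    rw [← setIntegral_union (Set.Ioc_disjoint_Ioc_of_le le_rfl) measurableSet_Ioc
      (hφint T₀) ((hφint T).mono_set (Set.Ioc_subset_Ioc_left hT₀0))]
    rw [Set.Ioc_union_Ioc_eq_Ioc hT₀0 hTT₀]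
  have hA : ‖∫ t in Ioc (0:ℝ) T₀, φ t‖ ≤ M * T₀ := by
    have := norm_setIntegral_le_of_norm_le_const_ae' (μ := volume) (s := Ioc (0:ℝ) T₀)
      measure_Ioc_lt_top
      (Filter.Eventually.of_forall fun t _ => hb t)
    simpa [Measure.real, Real.volume_Ioc, ENNReal.toReal_ofReal hT₀0] using this
  have hB : ‖∫ t in Ioc T₀ T, φ t‖ ≤ ε / 4 * T := by
    have hTsub : 0 ≤ T - T₀ := sub_nonneg.2 hTT₀
    have := norm_setIntegral_le_of_norm_le_const_ae' (μ := volume) (s := Ioc T₀ T)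
      measure_Ioc_lt_top (C := ε / 4)
      (Filter.Eventually.of_forall fun t ht =>
        le_of_lt (hT₁ t (le_trans (le_max_left _ _) (le_of_lt ht.1))))
    have h' : ‖∫ t in Ioc T₀ T, φ t‖ ≤ ε / 4 * (T - T₀) := by
      simpa [Measure.real, Real.volume_Ioc, ENNReal.toReal_ofReal hTsub] using this
    nlinarith [h4]
  have hMT : M * T₀ ≤ T * (ε / 4) := by
    have h2' : 4 * M * T₀ / ε ≤ T := by linarith
    have := (div_le_iff₀ hε).mp h2'
    nlinarith
  have hnorm : ‖∫ t in Ioc (0:ℝ) T, φ t‖ ≤ M * T₀ + ε / 4 * T := by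
    rw [hsplit]
    exact le_trans (norm_add_le _ _) (add_le_add hA hB)
  have hfin : ‖(1 / T) * ∫ t in Ioc (0:ℝ) T, φ t‖ < ε := by
    rw [norm_mul, Real.norm_eq_abs, abs_of_pos (by positivity : (0:ℝ) < 1 / T)]
    have : (1 / T) * ‖∫ t in Ioc (0:ℝ) T, φ t‖ ≤ (1 / T) * (M * T₀ + ε / 4 * T) :=
      mul_le_mul_of_nonneg_left hnorm (by positivity)
    have hle : (1 / T) * (M * T₀ + ε / 4 * T) ≤ ε / 2 := by
      rw [div_mul_eq_mul_div, one_mul, div_le_iff₀ hT0]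
      nlinarith
    nlinarith
  exact hfin

open Set Filter in
theorem stmt10 (H : ℝ) (hH : H ∈ Set.Ioo (0:ℝ) (1/2)) (c : ℝ → ℝ) (hc : Measurable c)
    (hint : (∫⁻ r in Set.Ioi (0:ℝ), ∫⁻ u in Set.Ioi (0:ℝ),
        ENNReal.ofReal (r ^ (-H - 1/2) * u ^ (-H - 1/2) * |c (|r - u|)|)) < ⊤) :
    Filter.Tendsto (fun T : ℝ => (1 / T) * ∫ t in Set.Ioc (0:ℝ) T,
        ∫ r in Set.Ioc (0:ℝ) t, ∫ u in Set.Ioc (0:ℝ) t,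
          r ^ (-H - 1/2) * u ^ (-H - 1/2) * (1 - (1 - r / t) ^ (1/2 - H)) *
            (1 - (1 - u / t) ^ (1/2 - H)) * c (|r - u|))
      Filter.atTop (nhds 0) := by
  obtain ⟨hH0, hH2⟩ := hH
  have he : (0:ℝ) < 1/2 - H := by linarith
  set F : ℝ × ℝ → ℝ := fun p => p.1 ^ (-H - 1/2) * p.2 ^ (-H - 1/2) * |c (|p.1 - p.2|)|
    with hFdef
  set G : ℝ × ℝ → ℝ := (Ioi (0:ℝ) ×ˢ Ioi (0:ℝ)).indicator F with hGdef
  set f : ℝ → ℝ × ℝ → ℝ := fun t p =>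
    p.1 ^ (-H - 1/2) * p.2 ^ (-H - 1/2) * (1 - (1 - p.1 / t) ^ (1/2 - H)) *
      (1 - (1 - p.2 / t) ^ (1/2 - H)) * c (|p.1 - p.2|) with hfdef
  set g : ℝ → ℝ × ℝ → ℝ := fun t => (Ioc (0:ℝ) t ×ˢ Ioc (0:ℝ) t).indicator (f t) with hgdef
  -- measurability
  have hFm : Measurable F :=
    ((measurable_fst.pow measurable_const).mul (measurable_snd.pow measurable_const)).mul
      ((hc.comp (measurable_fst.sub measurable_snd).abs).abs)
  have hGm : Measurable G := hFm.indicator (measurableSet_Ioi.prod measurableSet_Ioi)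
  have hfm : ∀ t, Measurable (f t) := by
    intro t
    exact ((((measurable_fst.pow measurable_const).mul
      (measurable_snd.pow measurable_const)).mul
      (measurable_const.sub ((measurable_const.sub
        (measurable_fst.div measurable_const)).pow measurable_const))).mul
      (measurable_const.sub ((measurable_const.sub
        (measurable_snd.div measurable_const)).pow measurable_const))).mul
      (hc.comp (measurable_fst.sub measurable_snd).abs)
  have hgm : ∀ t, Measurable (g t) := fun t =>
    (hfm t).indicator (measurableSet_Ioc.prod measurableSet_Ioc)
  -- nonnegativity of G
  have hGnn : ∀ p, 0 ≤ G p := by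
    intro p
    rw [hGdef, Set.indicator_apply]
    split
    · next hp =>
      exact mul_nonneg (mul_nonneg (Real.rpow_pos_of_pos hp.1 _).le
        (Real.rpow_pos_of_pos hp.2 _).le) (abs_nonneg _)
    · exact le_refl 0
  -- integrability of G
  have hGint : Integrable G (volume : Measure (ℝ × ℝ)) := by
    refine ⟨hGm.aestronglyMeasurable, ?_⟩
    rw [hasFiniteIntegral_iff_ofReal (Filter.Eventually.of_forall hGnn)]
    have h1 : ∫⁻ p, ENNReal.ofReal (G p) ∂(volume : Measure (ℝ × ℝ))
        = ∫⁻ p in Ioi (0:ℝ) ×ˢ Ioi (0:ℝ), ENNReal.ofReal (F p) := by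
      rw [← lintegral_indicator (measurableSet_Ioi.prod measurableSet_Ioi)]
      congr 1
      funext p
      by_cases hp : p ∈ Ioi (0:ℝ) ×ˢ Ioi (0:ℝ) <;>
        simp [hGdef, Set.indicator_apply, hp]
    have h2 : ∫⁻ p in Ioi (0:ℝ) ×ˢ Ioi (0:ℝ), ENNReal.ofReal (F p)
        = ∫⁻ r in Ioi (0:ℝ), ∫⁻ u in Ioi (0:ℝ),
            ENNReal.ofReal (r ^ (-H - 1/2) * u ^ (-H - 1/2) * |c (|r - u|)|) := by
      rw [MeasureTheory.Measure.volume_eq_prod, ← MeasureTheory.Measure.prod_restrict]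
      rw [MeasureTheory.lintegral_prod _ hFm.ennreal_ofReal.aemeasurable]
    rw [h1, h2]
    exact hint
  -- pointwise bound
  have hbound : ∀ t, ∀ p, ‖g t p‖ ≤ G p := by
    intro t p
    by_cases hp : p ∈ Ioc (0:ℝ) t ×ˢ Ioc (0:ℝ) t
    · have ht : 0 < t := lt_of_lt_of_le hp.1.1 hp.1.2
      have hp1 : (0:ℝ) < p.1 := hp.1.1
      have hp2 : (0:ℝ) < p.2 := hp.2.1
      have hmem : p ∈ Ioi (0:ℝ) ×ˢ Ioi (0:ℝ) := ⟨hp1, hp2⟩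
      have hg : g t p = f t p := by rw [hgdef]; exact Set.indicator_of_mem hp _
      have hG : G p = F p := by rw [hGdef]; exact Set.indicator_of_mem hmem _
      -- bounds on the weight factors
      have hw : ∀ x : ℝ, 0 < x → x ≤ t →
          0 ≤ 1 - (1 - x / t) ^ (1/2 - H) ∧ 1 - (1 - x / t) ^ (1/2 - H) ≤ 1 := by
        intro x hx hxt
        have hx0 : 0 ≤ 1 - x / t := by
          rw [sub_nonneg]
          exact (div_le_one ht).mpr hxt
        have hx1 : 1 - x / t ≤ 1 := by
          have := div_pos hx ht
          linarith
        constructor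
        · have := Real.rpow_le_one hx0 hx1 he.le
          linarith
        · have := Real.rpow_nonneg hx0 (1/2 - H)
          linarith
      obtain ⟨hw1a, hw1b⟩ := hw p.1 hp1 hp.1.2
      obtain ⟨hw2a, hw2b⟩ := hw p.2 hp2 hp.2.2
      have hq1 : (0:ℝ) < p.1 ^ (-H - 1/2) := Real.rpow_pos_of_pos hp1 _
      have hq2 : (0:ℝ) < p.2 ^ (-H - 1/2) := Real.rpow_pos_of_pos hp2 _
      rw [hg, hG, hfdef, hFdef]
      simp only [Real.norm_eq_abs]
      rw [abs_mul, abs_mul, abs_mul, abs_mul, abs_of_pos hq1, abs_of_pos hq2,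
        abs_of_nonneg hw1a, abs_of_nonneg hw2a]
      have hcnn : (0:ℝ) ≤ |c (|p.1 - p.2|)| := abs_nonneg _
      calc p.1 ^ (-H - 1/2) * p.2 ^ (-H - 1/2) * (1 - (1 - p.1 / t) ^ (1/2 - H)) *
            (1 - (1 - p.2 / t) ^ (1/2 - H)) * |c (|p.1 - p.2|)|
          ≤ p.1 ^ (-H - 1/2) * p.2 ^ (-H - 1/2) * 1 * 1 * |c (|p.1 - p.2|)| := by
            gcongr <;> positivity
        _ = p.1 ^ (-H - 1/2) * p.2 ^ (-H - 1/2) * |c (|p.1 - p.2|)| := by ring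
    · have hg : g t p = 0 := by rw [hgdef]; exact Set.indicator_of_notMem hp _
      rw [hg]
      simpa using hGnn p
  -- φ and its measurability
  set φ : ℝ → ℝ := fun t => ∫ p, g t p with hφdef
  have hjoint : Measurable (fun q : ℝ × (ℝ × ℝ) => g q.1 q.2) := by
    have hset : MeasurableSet {q : ℝ × (ℝ × ℝ) | q.2 ∈ Ioc (0:ℝ) q.1 ×ˢ Ioc (0:ℝ) q.1} := by
      have : {q : ℝ × (ℝ × ℝ) | q.2 ∈ Ioc (0:ℝ) q.1 ×ˢ Ioc (0:ℝ) q.1}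
          = ({q : ℝ × (ℝ × ℝ) | 0 < q.2.1} ∩ {q | q.2.1 ≤ q.1}) ∩
            ({q : ℝ × (ℝ × ℝ) | 0 < q.2.2} ∩ {q | q.2.2 ≤ q.1}) := by
        ext q
        simp only [Set.mem_prod, Set.mem_Ioc, Set.mem_setOf_eq, Set.mem_inter_iff]
      rw [this]
      exact (((measurableSet_lt measurable_const measurable_snd.fst).inter
        (measurableSet_le measurable_snd.fst measurable_fst)).inter
        ((measurableSet_lt measurable_const measurable_snd.snd).inter
        (measurableSet_le measurable_snd.snd measurable_fst)))
    have hfj : Measurable (fun q : ℝ × (ℝ × ℝ) => f q.1 q.2) := by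
      rw [hfdef]
      exact ((((measurable_snd.fst.pow measurable_const).mul
        (measurable_snd.snd.pow measurable_const)).mul
        (measurable_const.sub ((measurable_const.sub
          (measurable_snd.fst.div measurable_fst)).pow measurable_const))).mul
        (measurable_const.sub ((measurable_const.sub
          (measurable_snd.snd.div measurable_fst)).pow measurable_const))).mul
        (hc.comp (measurable_snd.fst.sub measurable_snd.snd).abs)
    have heq : (fun q : ℝ × (ℝ × ℝ) => g q.1 q.2)
        = Set.indicator {q : ℝ × (ℝ × ℝ) | q.2 ∈ Ioc (0:ℝ) q.1 ×ˢ Ioc (0:ℝ) q.1}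
            (fun q => f q.1 q.2) := by
      funext q
      rw [hgdef]
      simp only [Set.indicator_apply, Set.mem_setOf_eq]
    rw [heq]
    exact hfj.indicator hset
  have hφm : StronglyMeasurable φ := by
    rw [hφdef]
    exact hjoint.stronglyMeasurable.integral_prod_right'
  -- φ tends to 0
  have hφ0 : Filter.Tendsto φ Filter.atTop (nhds 0) := by
    have key := MeasureTheory.tendsto_integral_filter_of_dominated_convergence
      (μ := (volume : Measure (ℝ × ℝ))) (F := g) (f := fun _ => (0:ℝ)) (l := Filter.atTop)
      G (Filter.Eventually.of_forall fun t => (hgm t).aestronglyMeasurable)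
      (Filter.Eventually.of_forall fun t =>
        (Filter.Eventually.of_forall fun p => hbound t p)) hGint ?hl
    · simpa using key
    case hl =>
      refine Filter.Eventually.of_forall fun p => ?_
      by_cases hp : 0 < p.1 ∧ 0 < p.2
      · have hr1 : Filter.Tendsto (fun t : ℝ => p.1 / t) Filter.atTop (nhds 0) :=
          tendsto_const_nhds.div_atTop tendsto_id
        have hr2 : Filter.Tendsto (fun t : ℝ => p.2 / t) Filter.atTop (nhds 0) :=
          tendsto_const_nhds.div_atTop tendsto_id
        have hco : ContinuousAt (fun x : ℝ => x ^ (1/2 - H)) 1 :=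
          Real.continuousAt_rpow_const 1 _ (Or.inl one_ne_zero)
        have h1 : Filter.Tendsto (fun t : ℝ => 1 - p.1 / t) Filter.atTop (nhds 1) := by
          simpa using tendsto_const_nhds.sub hr1
        have h2 : Filter.Tendsto (fun t : ℝ => 1 - p.2 / t) Filter.atTop (nhds 1) := by
          simpa using tendsto_const_nhds.sub hr2
        have h1' : Filter.Tendsto (fun t : ℝ => (1 - p.1 / t) ^ (1/2 - H))
            Filter.atTop (nhds 1) := by
          have := hco.tendsto.comp h1
          simpa [Real.one_rpow, Function.comp_def] using this
        have h2' : Filter.Tendsto (fun t : ℝ => (1 - p.2 / t) ^ (1/2 - H))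
            Filter.atTop (nhds 1) := by
          have := hco.tendsto.comp h2
          simpa [Real.one_rpow, Function.comp_def] using this
        have hw1 : Filter.Tendsto (fun t : ℝ => 1 - (1 - p.1 / t) ^ (1/2 - H))
            Filter.atTop (nhds 0) := by
          simpa using (tendsto_const_nhds (x := (1:ℝ))).sub h1'
        have hw2 : Filter.Tendsto (fun t : ℝ => 1 - (1 - p.2 / t) ^ (1/2 - H))
            Filter.atTop (nhds 0) := by
          simpa using (tendsto_const_nhds (x := (1:ℝ))).sub h2'
        have hf : Filter.Tendsto (fun t : ℝ => f t p) Filter.atTop (nhds 0) := by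
          have := ((((tendsto_const_nhds
            (x := p.1 ^ (-H - 1/2) * p.2 ^ (-H - 1/2)) (f := Filter.atTop)).mul
            hw1).mul hw2).mul (tendsto_const_nhds (x := c (|p.1 - p.2|))))
          simpa [hfdef] using this
        refine hf.congr' ?_
        filter_upwards [Filter.eventually_ge_atTop (max p.1 p.2)] with t htm
        have hmem : p ∈ Ioc (0:ℝ) t ×ˢ Ioc (0:ℝ) t :=
          ⟨⟨hp.1, le_trans (le_max_left _ _) htm⟩, ⟨hp.2, le_trans (le_max_right _ _) htm⟩⟩
        rw [hgdef]
        exact (Set.indicator_of_mem hmem _).symm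
      · have hz : ∀ t : ℝ, g t p = 0 := by
          intro t
          rw [hgdef]
          refine Set.indicator_of_notMem ?_ _
          intro hmem
          exact hp ⟨hmem.1.1, hmem.2.1⟩
        simpa [hz] using (tendsto_const_nhds : Filter.Tendsto (fun _ : ℝ => (0:ℝ))
          Filter.atTop (nhds 0))
  -- uniform bound on φ
  have hbM : ∀ t, ‖φ t‖ ≤ ∫ p, G p := by
    intro t
    exact norm_integral_le_of_norm_le hGint (Filter.Eventually.of_forall (hbound t))
  -- the iterated integral equals φ
  have hIφ : ∀ t : ℝ, (∫ r in Set.Ioc (0:ℝ) t, ∫ u in Set.Ioc (0:ℝ) t,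
      r ^ (-H - 1/2) * u ^ (-H - 1/2) * (1 - (1 - r / t) ^ (1/2 - H)) *
        (1 - (1 - u / t) ^ (1/2 - H)) * c (|r - u|)) = φ t := by
    intro t
    by_cases ht : 0 < t
    · have hS : MeasurableSet (Ioc (0:ℝ) t ×ˢ Ioc (0:ℝ) t) :=
        measurableSet_Ioc.prod measurableSet_Ioc
      have hIntf : Integrable (f t)
          ((volume : Measure (ℝ × ℝ)).restrict (Ioc (0:ℝ) t ×ˢ Ioc (0:ℝ) t)) := by
        refine Integrable.mono' hGint.restrict ((hfm t).aestronglyMeasurable.restrict) ?_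
        rw [ae_restrict_iff' hS]
        refine Filter.Eventually.of_forall fun p hp => ?_
        have hb := hbound t p
        rw [show g t p = f t p from by rw [hgdef]; exact Set.indicator_of_mem hp _] at hb
        exact hb
      have hprodmeas : ((volume : Measure ℝ).restrict (Ioc (0:ℝ) t)).prod
          ((volume : Measure ℝ).restrict (Ioc (0:ℝ) t))
          = (volume : Measure (ℝ × ℝ)).restrict (Ioc (0:ℝ) t ×ˢ Ioc (0:ℝ) t) := by
        rw [MeasureTheory.Measure.prod_restrict, ← MeasureTheory.Measure.volume_eq_prod]
      have hIntf' : Integrable (f t)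
          (((volume : Measure ℝ).restrict (Ioc (0:ℝ) t)).prod
            ((volume : Measure ℝ).restrict (Ioc (0:ℝ) t))) := by
        rw [hprodmeas]; exact hIntf
      have hFub := MeasureTheory.integral_prod (f t) hIntf'
      rw [hprodmeas] at hFub
      have : φ t = ∫ p in Ioc (0:ℝ) t ×ˢ Ioc (0:ℝ) t, f t p := by
        rw [hφdef, hgdef]
        exact integral_indicator hS
      rw [this, hFub]
    · have hempty : Ioc (0:ℝ) t = ∅ := Set.Ioc_eq_empty ht
      have hφt : φ t = 0 := by
        rw [hφdef, hgdef]
        simp [hempty]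
      rw [hφt, hempty]
      simp
  simp only [hIφ]
  exact cesaro_integral hφm.aestronglyMeasurable hbM hφ0
end
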